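/- arXiv:1606.01378 — 8 statements merged into one kernel-verified Lean document; each statement's English description precedes it below -/
import Mathlib

section
/- Let T>0, let k be in W^{1,1}([0,T]) (i.e. k is absolutely continuous on [0,T] with derivative k̇ ∈ L¹([0,T])), let H ∈ C¹(ℝ), and let u ∈ C¹([0,T]). Then for almost every t ∈ (0,T): H'(u(t)) · (d/dt)(k*u)(t) = (d/dt)(k*(H∘u))(t) + (−H(u(t)) + H'(u(t))·u(t))·k(t) + ∫₀ᵗ (H(u(t−s)) − H(u(t)) − H'(u(t))·(u(t−s) − u(t)))·(−k̇(s)) ds. -/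
open MeasureTheory Set

lemma conv_hasDerivAt
    (T : ℝ) (hT : 0 < T)
    (k k' : ℝ → ℝ)
    (hk'int : IntegrableOn k' (Icc 0 T))
    (hkac : ∀ x ∈ Icc (0 : ℝ) T, k x = k 0 + ∫ s in (0 : ℝ)..x, k' s)
    (v : ℝ → ℝ) (hv : Continuous v)
    (t : ℝ) (ht : t ∈ Ioo 0 T) :
    HasDerivAt (fun τ => ∫ s in (0 : ℝ)..τ, k (τ - s) * v s)
      (k 0 * v t + ∫ s in Ioc (0:ℝ) t, k' s * v (t - s)) t := by
  have hk'Ioc : IntegrableOn k' (Ioc (0:ℝ) T) := hk'int.mono_set Ioc_subset_Icc_self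
  set V : ℝ → ℝ := fun x => ∫ s in (0:ℝ)..x, v s with hVdef
  have hVd : ∀ x, HasDerivAt V (v x) x := fun x =>
    intervalIntegral.integral_hasDerivAt_right (hv.intervalIntegrable _ _)
      (hv.stronglyMeasurableAtFilter _ _) hv.continuousAt
  have hV0 : V 0 = 0 := intervalIntegral.integral_same
  set W : ℝ → ℝ := fun x => V (max x 0) with hWdef
  have hW0 : ∀ x, x ≤ 0 → W x = 0 := fun x hx => by
    simp only [hWdef, max_eq_right hx, hV0]
  obtain ⟨L₀, hL₀⟩ := isCompact_Icc.exists_bound_of_continuousOn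
    (hv.continuousOn : ContinuousOn v (Icc (0:ℝ) T))
  set L : ℝ := max L₀ 0 with hLdef
  have hL : 0 ≤ L := le_max_right _ _
  have hLb : ∀ x ∈ Icc (0:ℝ) T, ‖v x‖ ≤ L := fun x hx => (hL₀ x hx).trans (le_max_left _ _)
  have hWlip : ∀ x y : ℝ, x ≤ T → y ≤ T → |W x - W y| ≤ L * |x - y| := by
    intro x y hx hy
    have hmx : max x 0 ∈ Icc (0:ℝ) T := ⟨le_max_right _ _, max_le hx hT.le⟩
    have hmy : max y 0 ∈ Icc (0:ℝ) T := ⟨le_max_right _ _, max_le hy hT.le⟩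
    have h1 : W x - W y = ∫ s in (max y 0)..(max x 0), v s :=
      intervalIntegral.integral_interval_sub_left (hv.intervalIntegrable _ _)
        (hv.intervalIntegrable _ _)
    rw [h1]
    calc |∫ s in (max y 0)..(max x 0), v s| ≤ L * |max x 0 - max y 0| := by
          have h2 := intervalIntegral.norm_integral_le_of_norm_le_const (f := v)
            (a := max y 0) (b := max x 0) (C := L)
            (fun z hz => hLb z (Set.uIcc_subset_Icc hmy hmx (Set.uIoc_subset_uIcc hz)))
          simpa [Real.norm_eq_abs] using h2
      _ ≤ L * |x - y| := mul_le_mul_of_nonneg_left (abs_max_sub_max_le_abs _ _ _) hL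
  have hVcont : Continuous V := by
    rw [continuous_iff_continuousAt]; exact fun x => (hVd x).continuousAt
  have hWcont : Continuous W := hVcont.comp (continuous_id.max continuous_const)
  -- Step A : the rewriting of the convolution
  have stepA : ∀ τ ∈ Icc (0:ℝ) T,
      (∫ s in (0:ℝ)..τ, k (τ - s) * v s)
        = k 0 * V τ + ∫ r in Ioc (0:ℝ) T, k' r * W (τ - r) := by
    intro τ hτ
    have h0τ : (0:ℝ) ≤ τ := hτ.1
    have hτT : τ ≤ T := hτ.2
    set c : ℝ → ℝ → ℝ := fun s r => if s + r ≤ τ then (1:ℝ) else 0 with hcdef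
    have hvint : IntegrableOn v (Ioc (0:ℝ) τ) := hv.integrableOn_Ioc
    have hIcont : ContinuousOn (fun s => ∫ r in Ioc (0:ℝ) (τ - s), k' r) (Icc 0 τ) := by
      have h1 := intervalIntegral.continuousOn_primitive (f := k') (a := (0:ℝ)) (b := T)
        (μ := volume) hk'int
      refine h1.comp ((continuous_const.sub continuous_id).continuousOn) ?_
      intro s hs
      exact ⟨sub_nonneg.2 hs.2, le_trans (by linarith [hs.1] : τ - s ≤ τ) hτT⟩
    have hint2 : IntegrableOn (fun s => (∫ r in Ioc (0:ℝ) (τ-s), k' r) * v s) (Ioc 0 τ) :=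
      ((hIcont.mul hv.continuousOn).integrableOn_Icc).mono_set Ioc_subset_Icc_self
    have key1 : (∫ s in (0:ℝ)..τ, k (τ - s) * v s)
        = ∫ s in Ioc (0:ℝ) τ, (k 0 * v s + (∫ r in Ioc (0:ℝ) (τ-s), k' r) * v s) := by
      rw [intervalIntegral.integral_of_le h0τ]
      refine setIntegral_congr_fun measurableSet_Ioc (fun s hs => ?_)
      have h1 : τ - s ∈ Icc (0:ℝ) T :=
        ⟨sub_nonneg.2 hs.2, le_trans (by linarith [hs.1] : τ - s ≤ τ) hτT⟩
      rw [hkac _ h1, intervalIntegral.integral_of_le h1.1]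
      ring
    -- Fubini
    have hbase : Integrable (fun p : ℝ × ℝ => v p.1 * k' p.2)
        ((volume.restrict (Ioc (0:ℝ) τ)).prod (volume.restrict (Ioc (0:ℝ) T))) :=
      Integrable.mul_prod hvint hk'Ioc
    have hcm : Measurable (fun p : ℝ × ℝ => c p.1 p.2) := by
      simp only [hcdef]
      exact Measurable.ite (measurableSet_le (measurable_fst.add measurable_snd)
        measurable_const) measurable_const measurable_const
    have hfint : Integrable (Function.uncurry fun s r => v s * (k' r * c s r))
        ((volume.restrict (Ioc (0:ℝ) τ)).prod (volume.restrict (Ioc (0:ℝ) T))) := by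
      refine hbase.mono ?_ ?_
      · have h1 := hbase.aestronglyMeasurable.mul hcm.aestronglyMeasurable
        exact h1.congr (Filter.EventuallyEq.of_eq (funext fun p => by
          simp [Function.uncurry, mul_assoc]))
      · refine Filter.Eventually.of_forall fun p => ?_
        simp only [Function.uncurry]
        by_cases h : p.1 + p.2 ≤ τ <;> simp [hcdef, h, abs_mul, abs_nonneg, Real.norm_eq_abs,
          mul_nonneg, abs_nonneg]
    have hswap := integral_integral_swap hfint
    have lhs_eq : ∫ s in Ioc (0:ℝ) τ, (∫ r in Ioc (0:ℝ) (τ-s), k' r) * v s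
        = ∫ s in Ioc (0:ℝ) τ, ∫ r in Ioc (0:ℝ) T, v s * (k' r * c s r) := by
      refine setIntegral_congr_fun measurableSet_Ioc (fun s hs => ?_)
      have h5a : (∫ r in Ioc (0:ℝ) (τ - s), k' r) = ∫ r in Ioc (0:ℝ) T, k' r * c s r := by
        have h1 : Ioc (0:ℝ) T ∩ Ioc (0:ℝ) (τ - s) = Ioc (0:ℝ) (τ - s) := by
          rw [Set.Ioc_inter_Ioc, max_self, min_eq_right (by linarith [hs.1] : τ - s ≤ T)]
        calc (∫ r in Ioc (0:ℝ) (τ-s), k' r)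
            = ∫ r in Ioc (0:ℝ) T ∩ Ioc (0:ℝ) (τ-s), k' r := by rw [h1]
          _ = ∫ r in Ioc (0:ℝ) T, (Ioc (0:ℝ) (τ-s)).indicator k' r :=
              (setIntegral_indicator measurableSet_Ioc).symm
          _ = ∫ r in Ioc (0:ℝ) T, k' r * c s r := by
              refine setIntegral_congr_fun measurableSet_Ioc (fun r hr => ?_)
              by_cases h : s + r ≤ τ
              · have hmem : r ∈ Ioc (0:ℝ) (τ - s) := ⟨hr.1, by linarith⟩
                simp [Set.indicator_of_mem hmem, hcdef, h]
              · have hmem : r ∉ Ioc (0:ℝ) (τ - s) := fun hmem => h (by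
                  have := hmem.2; linarith)
                simp [Set.indicator_of_notMem hmem, hcdef, h]
      rw [h5a, mul_comm, ← integral_const_mul]
    have rhs_eq : ∫ r in Ioc (0:ℝ) T, ∫ s in Ioc (0:ℝ) τ, v s * (k' r * c s r)
        = ∫ r in Ioc (0:ℝ) T, k' r * W (τ - r) := by
      refine setIntegral_congr_fun measurableSet_Ioc (fun r hr => ?_)
      have inner_congr : ∫ s in Ioc (0:ℝ) τ, v s * (k' r * c s r)
          = ∫ s in Ioc (0:ℝ) τ, k' r * (v s * c s r) :=
        setIntegral_congr_fun measurableSet_Ioc (fun s _ => by ring)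
      rw [inner_congr, integral_const_mul]
      congr 1
      have h1 : ∫ s in Ioc (0:ℝ) τ, v s * c s r = ∫ s in Ioc (0:ℝ) (τ - r), v s := by
        have hsub : Ioc (0:ℝ) τ ∩ Ioc (0:ℝ) (τ - r) = Ioc (0:ℝ) (τ - r) := by
          rw [Set.Ioc_inter_Ioc, max_self, min_eq_right (by linarith [hr.1] : τ - r ≤ τ)]
        calc ∫ s in Ioc (0:ℝ) τ, v s * c s r
            = ∫ s in Ioc (0:ℝ) τ, (Ioc (0:ℝ) (τ-r)).indicator v s := by
              refine setIntegral_congr_fun measurableSet_Ioc (fun s hs => ?_)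
              by_cases h : s + r ≤ τ
              · have hmem : s ∈ Ioc (0:ℝ) (τ - r) := ⟨hs.1, by linarith⟩
                simp [Set.indicator_of_mem hmem, hcdef, h]
              · have hmem : s ∉ Ioc (0:ℝ) (τ - r) := fun hmem => h (by
                  have := hmem.2; linarith)
                simp [Set.indicator_of_notMem hmem, hcdef, h]
          _ = ∫ s in Ioc (0:ℝ) τ ∩ Ioc (0:ℝ) (τ-r), v s := setIntegral_indicator measurableSet_Ioc
          _ = ∫ s in Ioc (0:ℝ) (τ - r), v s := by rw [hsub]
      rw [h1]
      by_cases h : (0:ℝ) ≤ τ - r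
      · simp only [hWdef, max_eq_left h]
        exact (intervalIntegral.integral_of_le h).symm
      · have hempty : Ioc (0:ℝ) (τ - r) = ∅ := Set.Ioc_eq_empty (fun hlt => h hlt.le)
        rw [hempty, hW0 _ (le_of_not_ge h)]
        simp
    calc (∫ s in (0:ℝ)..τ, k (τ - s) * v s)
        = ∫ s in Ioc (0:ℝ) τ, (k 0 * v s + (∫ r in Ioc (0:ℝ) (τ-s), k' r) * v s) := key1
      _ = (∫ s in Ioc (0:ℝ) τ, k 0 * v s)
            + ∫ s in Ioc (0:ℝ) τ, (∫ r in Ioc (0:ℝ) (τ-s), k' r) * v s :=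
          integral_add (hvint.const_mul _) hint2
      _ = k 0 * V τ + ∫ r in Ioc (0:ℝ) T, k' r * W (τ - r) := by
          have hVI : (∫ s in Ioc (0:ℝ) τ, v s) = V τ := (intervalIntegral.integral_of_le h0τ).symm
          rw [integral_const_mul, hVI, lhs_eq, hswap, rhs_eq]
  -- Step B : differentiate the rewritten form
  set F' : ℝ → ℝ := fun r => if r < t then k' r * v (t - r) else 0 with hF'def
  have hk'aesm : AEStronglyMeasurable k' (volume.restrict (Ioc (0:ℝ) T)) :=
    hk'Ioc.aestronglyMeasurable
  have hε : 0 < min t (T - t) := lt_min ht.1 (sub_pos.2 ht.2)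
  have hball : ∀ τ ∈ Metric.ball t (min t (T - t)), 0 < τ ∧ τ < T := by
    intro τ hτ
    rw [Metric.mem_ball, Real.dist_eq] at hτ
    have h1 := abs_lt.1 hτ
    have h2 := min_le_left t (T - t)
    have h3 := min_le_right t (T - t)
    constructor <;> linarith
  have hmeas : ∀ᶠ τ in nhds t,
      AEStronglyMeasurable (fun r => k' r * W (τ - r)) (volume.restrict (Ioc (0:ℝ) T)) :=
    Filter.Eventually.of_forall fun τ => hk'aesm.mul
      ((hWcont.comp (continuous_const.sub continuous_id)).aestronglyMeasurable)
  have hWbd : ∀ x : ℝ, x ≤ T → |W x| ≤ L * T := by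
    intro x hx
    by_cases h : x ≤ 0
    · rw [hW0 x h]; simp [mul_nonneg hL hT.le]
    · push_neg at h
      have h2 := hWlip x 0 hx hT.le
      rw [hW0 0 le_rfl] at h2
      rw [sub_zero, sub_zero] at h2
      calc |W x| ≤ L * |x| := h2
        _ ≤ L * T := mul_le_mul_of_nonneg_left (by rw [abs_of_pos h]; exact hx) hL
  have hFint : Integrable (fun r => k' r * W (t - r)) (volume.restrict (Ioc (0:ℝ) T)) := by
    refine Integrable.mono' (hk'Ioc.norm.mul_const (L * T))
      (hk'aesm.mul ((hWcont.comp (continuous_const.sub continuous_id)).aestronglyMeasurable)) ?_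
    refine (ae_restrict_iff' measurableSet_Ioc).2 (Filter.Eventually.of_forall fun r hr => ?_)
    have h1 : |W (t - r)| ≤ L * T := hWbd _ (by linarith [hr.1, ht.2])
    calc ‖k' r * W (t - r)‖ = ‖k' r‖ * |W (t - r)| := by
          rw [Real.norm_eq_abs, Real.norm_eq_abs, abs_mul]
      _ ≤ ‖k' r‖ * (L * T) := mul_le_mul_of_nonneg_left h1 (norm_nonneg _)
  have hF'meas : AEStronglyMeasurable F' (volume.restrict (Ioc (0:ℝ) T)) := by
    have h1 : F' = (Iio t).indicator (fun r => k' r * v (t - r)) := by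
      funext r; simp [hF'def, Set.indicator_apply, Set.mem_Iio]
    rw [h1]
    exact (hk'aesm.mul
      ((hv.comp (continuous_const.sub continuous_id)).aestronglyMeasurable)).indicator
      measurableSet_Iio
  have hlip : ∀ᵐ r ∂(volume.restrict (Ioc (0:ℝ) T)),
      LipschitzOnWith (Real.nnabs (|k' r| * L)) (fun τ => k' r * W (τ - r))
        (Metric.ball t (min t (T - t))) := by
    refine (ae_restrict_iff' measurableSet_Ioc).2 (Filter.Eventually.of_forall fun r hr => ?_)
    rw [lipschitzOnWith_iff_dist_le_mul]
    intro x hx y hy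
    rw [Real.dist_eq, Real.dist_eq]
    have hcoe : ((Real.nnabs (|k' r| * L)) : ℝ) = |k' r| * L := by
      rw [Real.coe_nnabs, abs_of_nonneg (mul_nonneg (abs_nonneg _) hL)]
    rw [hcoe]
    have hx' : x - r ≤ T := by have := (hball x hx).2; linarith [hr.1]
    have hy' : y - r ≤ T := by have := (hball y hy).2; linarith [hr.1]
    have h1 : k' r * W (x - r) - k' r * W (y - r) = k' r * (W (x - r) - W (y - r)) := by ring
    rw [h1, abs_mul]
    calc |k' r| * |W (x - r) - W (y - r)| ≤ |k' r| * (L * |x - r - (y - r)|) :=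
          mul_le_mul_of_nonneg_left (hWlip _ _ hx' hy') (abs_nonneg _)
      _ = |k' r| * L * |x - y| := by rw [show x - r - (y - r) = x - y by ring]; ring
  have hboundint : Integrable (fun r => |k' r| * L) (volume.restrict (Ioc (0:ℝ) T)) := by
    simpa [Real.norm_eq_abs] using hk'Ioc.norm.mul_const L
  have hdiff : ∀ᵐ r ∂(volume.restrict (Ioc (0:ℝ) T)),
      HasDerivAt (fun τ => k' r * W (τ - r)) (F' r) t := by
    have hne : ∀ᵐ r ∂(volume.restrict (Ioc (0:ℝ) T)), r ≠ t := by
      refine ae_restrict_of_ae ?_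
      have h : {a : ℝ | ¬ a ≠ t} = {t} := by ext a; simp
      rw [ae_iff, h]
      exact measure_singleton t
    filter_upwards [hne] with r hr
    rcases lt_or_gt_of_ne hr with hlt | hgt
    · have hpos : 0 < t - r := sub_pos.2 hlt
      have hWd : HasDerivAt W (v (t - r)) (t - r) := by
        refine (hVd (t - r)).congr_of_eventuallyEq ?_
        filter_upwards [eventually_gt_nhds hpos] with x hx
        simp [hWdef, max_eq_left hx.le]
      have hcomp : HasDerivAt (fun τ => W (τ - r)) (v (t - r)) t := by
        have h2 := hWd.comp t ((hasDerivAt_id t).sub_const r)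
        rw [mul_one] at h2
        exact h2
      have h3 := hcomp.const_mul (k' r)
      simpa [hF'def, if_pos hlt] using h3
    · have hconst : (fun τ => k' r * W (τ - r)) =ᶠ[nhds t] fun _ => k' r * 0 := by
        filter_upwards [eventually_lt_nhds hgt] with τ hτ
        rw [hW0 (τ - r) (by linarith)]
      have h4 : HasDerivAt (fun τ => k' r * W (τ - r)) 0 t :=
        (hasDerivAt_const t (k' r * 0)).congr_of_eventuallyEq hconst
      simpa [hF'def, if_neg (not_lt.2 hgt.le)] using h4
  obtain ⟨hF'int, hder⟩ := hasDerivAt_integral_of_dominated_loc_of_lip (Metric.ball_mem_nhds t hε) hmeas hFint hF'meas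
    hlip hboundint hdiff
  have hint_eq : (∫ r in Ioc (0:ℝ) T, F' r) = ∫ s in Ioc (0:ℝ) t, k' s * v (t - s) := by
    have hsetu : Ioc (0:ℝ) T = Ioc 0 t ∪ Ioc t T := (Set.Ioc_union_Ioc_eq_Ioc ht.1.le ht.2.le).symm
    have hFon : IntegrableOn F' (Ioc (0:ℝ) T) := hF'int
    have hi1 : IntegrableOn F' (Ioc (0:ℝ) t) := hFon.mono_set (Set.Ioc_subset_Ioc_right ht.2.le)
    have hi2 : IntegrableOn F' (Ioc t T) := hFon.mono_set (Set.Ioc_subset_Ioc_left ht.1.le)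
    have hu : (∫ r in Ioc (0:ℝ) T, F' r) = (∫ r in Ioc (0:ℝ) t, F' r) + ∫ r in Ioc t T, F' r := by
      rw [hsetu]
      exact setIntegral_union (Set.Ioc_disjoint_Ioc_of_le le_rfl) measurableSet_Ioc hi1 hi2
    have h2 : (∫ r in Ioc t T, F' r) = 0 := by
      have heq : EqOn F' (fun _ => (0:ℝ)) (Ioc t T) := fun r hr => by
        simp [hF'def, not_lt.2 hr.1.le]
      rw [setIntegral_congr_fun measurableSet_Ioc heq, integral_zero]
    have h3 : (∫ r in Ioc (0:ℝ) t, F' r) = ∫ s in Ioc (0:ℝ) t, k' s * v (t - s) := by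
      rw [integral_Ioc_eq_integral_Ioo, integral_Ioc_eq_integral_Ioo]
      refine setIntegral_congr_fun measurableSet_Ioo fun r hr => ?_
      simp [hF'def, if_pos hr.2]
    rw [hu, h2, h3, add_zero]
  have hsum : HasDerivAt (fun τ => k 0 * V τ + ∫ r in Ioc (0:ℝ) T, k' r * W (τ - r))
      (k 0 * v t + ∫ s in Ioc (0:ℝ) t, k' s * v (t - s)) t := by
    have h1 : HasDerivAt (fun τ => k 0 * V τ) (k 0 * v t) t := (hVd t).const_mul (k 0)
    rw [hint_eq] at hder
    exact h1.add hder
  refine hsum.congr_of_eventuallyEq ?_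
  filter_upwards [isOpen_Ioo.mem_nhds ht] with τ hτ
  exact stepA τ (Ioo_subset_Icc_self hτ)

/-- The "fundamental identity" for time-fractional derivatives:
for `k ∈ W^{1,1}([0,T])` (absolutely continuous with integrable derivative `k'`),
`H ∈ C¹(ℝ)` and `u ∈ C¹([0,T])`, for a.e. `t ∈ (0,T)`:
`H'(u(t)) (k*u)'(t) = (k*(H∘u))'(t) + (-H(u(t)) + H'(u(t)) u(t)) k(t)
  + ∫₀ᵗ (H(u(t-s)) - H(u(t)) - H'(u(t))(u(t-s)-u(t))) (-k'(s)) ds`. -/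
theorem statement0
    (T : ℝ) (hT : 0 < T)
    (k k' : ℝ → ℝ)
    (hk'int : IntegrableOn k' (Icc 0 T))
    (hkac : ∀ t ∈ Icc (0 : ℝ) T, k t = k 0 + ∫ s in (0 : ℝ)..t, k' s)
    (H : ℝ → ℝ) (hH : ContDiff ℝ 1 H)
    (u : ℝ → ℝ) (hu : ContDiffOn ℝ 1 u (Icc 0 T)) :
    ∀ᵐ t ∂(volume.restrict (Ioo 0 T)),
      deriv H (u t) * deriv (fun τ => ∫ s in (0 : ℝ)..τ, k (τ - s) * u s) t
        = deriv (fun τ => ∫ s in (0 : ℝ)..τ, k (τ - s) * H (u s)) t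
          + (-(H (u t)) + deriv H (u t) * u t) * k t
          + ∫ s in (0 : ℝ)..t,
              (H (u (t - s)) - H (u t) - deriv H (u t) * (u (t - s) - u t)) * (-(k' s)) := by
  have h0T : (0:ℝ) ≤ T := hT.le
  set v : ℝ → ℝ := fun s => u (min (max s 0) T) with hvdef
  have hmem : ∀ s : ℝ, min (max s 0) T ∈ Icc (0:ℝ) T :=
    fun s => ⟨le_min (le_max_right _ _) h0T, min_le_right _ _⟩
  have hvcont : Continuous v :=
    hu.continuousOn.comp_continuous
      ((continuous_id.max continuous_const).min continuous_const) hmem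
  have hagree : ∀ s ∈ Icc (0:ℝ) T, v s = u s := fun s hs => by
    simp only [hvdef]
    rw [max_eq_left hs.1, min_eq_left hs.2]
  refine (ae_restrict_iff' measurableSet_Ioo).2 (Filter.Eventually.of_forall fun t ht => ?_)
  have htIcc : t ∈ Icc (0:ℝ) T := ⟨ht.1.le, ht.2.le⟩
  -- derivative of k * u
  have hDu : deriv (fun τ => ∫ s in (0:ℝ)..τ, k (τ - s) * u s) t
      = k 0 * u t + ∫ s in Ioc (0:ℝ) t, k' s * v (t - s) := by
    have heq : (fun τ => ∫ s in (0:ℝ)..τ, k (τ - s) * u s)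
        =ᶠ[nhds t] (fun τ => ∫ s in (0:ℝ)..τ, k (τ - s) * v s) := by
      filter_upwards [isOpen_Ioo.mem_nhds ht] with τ hτ
      refine intervalIntegral.integral_congr fun s hs => ?_
      rw [Set.uIcc_of_le hτ.1.le] at hs
      rw [hagree s ⟨hs.1, hs.2.trans hτ.2.le⟩]
    rw [heq.deriv_eq, (conv_hasDerivAt T hT k k' hk'int hkac v hvcont t ht).deriv,
      hagree t htIcc]
  -- derivative of k * (H ∘ u)
  have hDH : deriv (fun τ => ∫ s in (0:ℝ)..τ, k (τ - s) * H (u s)) t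
      = k 0 * H (u t) + ∫ s in Ioc (0:ℝ) t, k' s * H (v (t - s)) := by
    have heq : (fun τ => ∫ s in (0:ℝ)..τ, k (τ - s) * H (u s))
        =ᶠ[nhds t] (fun τ => ∫ s in (0:ℝ)..τ, k (τ - s) * H (v s)) := by
      filter_upwards [isOpen_Ioo.mem_nhds ht] with τ hτ
      refine intervalIntegral.integral_congr fun s hs => ?_
      rw [Set.uIcc_of_le hτ.1.le] at hs
      rw [hagree s ⟨hs.1, hs.2.trans hτ.2.le⟩]
    rw [heq.deriv_eq,
      (conv_hasDerivAt T hT k k' hk'int hkac (fun s => H (v s))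
        (hH.continuous.comp hvcont) t ht).deriv, hagree t htIcc]
  have hkt : k t = k 0 + ∫ s in Ioc (0:ℝ) t, k' s := by
    rw [hkac t htIcc, intervalIntegral.integral_of_le ht.1.le]
  -- integrable pieces
  have hk't : IntegrableOn k' (Ioc (0:ℝ) t) :=
    hk'int.mono_set (fun x hx => ⟨hx.1.le, hx.2.trans ht.2.le⟩)
  obtain ⟨C1, hC1⟩ := (isCompact_Icc.image_of_continuousOn hu.continuousOn
    ).exists_bound_of_continuousOn continuous_id.continuousOn
  obtain ⟨C2, hC2⟩ := (isCompact_Icc.image_of_continuousOn hu.continuousOn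
    ).exists_bound_of_continuousOn hH.continuous.continuousOn
  have hmemim : ∀ y : ℝ, v y ∈ u '' Icc (0:ℝ) T := fun y => ⟨_, hmem y, rfl⟩
  have hint1 : Integrable (fun s => k' s * v (t - s)) (volume.restrict (Ioc (0:ℝ) t)) :=
    (hk't.bdd_mul ((hvcont.comp (continuous_const.sub continuous_id)).aestronglyMeasurable)
      (Filter.Eventually.of_forall fun x => hC1 _ (hmemim _))).congr
      (Filter.Eventually.of_forall fun s => mul_comm _ _)
  have hint2 : Integrable (fun s => k' s * H (v (t - s))) (volume.restrict (Ioc (0:ℝ) t)) :=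
    (hk't.bdd_mul (((hH.continuous.comp hvcont).comp
        (continuous_const.sub continuous_id)).aestronglyMeasurable)
      (Filter.Eventually.of_forall fun x => hC2 _ (hmemim _))).congr
      (Filter.Eventually.of_forall fun s => mul_comm _ _)
  -- the last integral
  have hlast : (∫ s in (0:ℝ)..t,
        (H (u (t - s)) - H (u t) - deriv H (u t) * (u (t - s) - u t)) * (-(k' s)))
      = (-1) * (∫ s in Ioc (0:ℝ) t, k' s * H (v (t - s)))
        + (H (u t) * (∫ s in Ioc (0:ℝ) t, k' s)
          + (deriv H (u t) * (∫ s in Ioc (0:ℝ) t, k' s * v (t - s))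
            + (-(deriv H (u t) * u t)) * ∫ s in Ioc (0:ℝ) t, k' s)) := by
    rw [intervalIntegral.integral_of_le ht.1.le]
    have hcongr : EqOn
        (fun s => (H (u (t - s)) - H (u t) - deriv H (u t) * (u (t - s) - u t)) * (-(k' s)))
        (fun s => (-1) * (k' s * H (v (t - s)))
          + (H (u t) * k' s
            + (deriv H (u t) * (k' s * v (t - s)) + (-(deriv H (u t) * u t)) * k' s)))
        (Ioc (0:ℝ) t) := by
      intro s hs
      have hts : t - s ∈ Icc (0:ℝ) T := ⟨sub_nonneg.2 hs.2, by linarith [hs.1, ht.2]⟩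
      simp only
      rw [← hagree _ hts]
      ring
    rw [setIntegral_congr_fun measurableSet_Ioc hcongr]
    have ha3 : Integrable
        (fun s => deriv H (u t) * (k' s * v (t - s)) + (-(deriv H (u t) * u t)) * k' s)
        (volume.restrict (Ioc (0:ℝ) t)) := by
      exact (hint1.const_mul _).add (hk't.const_mul _)
    have ha2 : Integrable
        (fun s => H (u t) * k' s
          + (deriv H (u t) * (k' s * v (t - s)) + (-(deriv H (u t) * u t)) * k' s))
        (volume.restrict (Ioc (0:ℝ) t)) := by
      exact (hk't.const_mul _).add ha3
    rw [integral_add (hint2.const_mul _) ha2]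
    rw [integral_add (hk't.const_mul _) ha3]
    rw [integral_add (hint1.const_mul _) (hk't.const_mul _)]
    rw [integral_const_mul, integral_const_mul, integral_const_mul, integral_const_mul]
  rw [hDu, hDH, hkt, hlast]
  ring
end

section
/- Let T>0 and let k ∈ W^{1,1}([0,T]) (k absolutely continuous with k̇ ∈ L¹([0,T])) be nonnegative and nonincreasing, and let u ∈ L²([0,T]). Then the functions t ↦ (k*u)(t) and t ↦ (k*(u⁺)²)(t) are differentiable at almost every t ∈ (0,T), and for almost every t ∈ (0,T): u(t)⁺ · (d/dt)(k*u)(t) ≥ (1/2) · (d/dt)(k*(u⁺)²)(t). -/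
set_option maxHeartbeats 1600000


open MeasureTheory Set Filter Metric
open scoped Topology Convolution

/-- Lebesgue differentiation theorem for primitives of integrable functions. -/
theorem ae_ftc {f : ℝ → ℝ} (hf : Integrable f (volume : Measure ℝ)) :
    ∀ᵐ x ∂(volume : Measure ℝ), HasDerivAt (fun t => ∫ s in (0:ℝ)..t, f s) (f x) x := by
  have hloc : LocallyIntegrable f volume := hf.locallyIntegrable
  filter_upwards [IsUnifLocDoublingMeasure.ae_tendsto_average_norm_sub (volume : Measure ℝ)
    hloc 1] with x hx
  have hδ : Tendsto (fun y : ℝ => |y - x|) (𝓝[≠] x) (𝓝[>] (0:ℝ)) := by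
    rw [tendsto_nhdsWithin_iff]
    constructor
    · have : Tendsto (fun y : ℝ => |y - x|) (𝓝 x) (𝓝 |x - x|) :=
        ((continuous_id.sub continuous_const).abs).continuousAt
      simpa using this.mono_left nhdsWithin_le_nhds
    · filter_upwards [self_mem_nhdsWithin] with y hy
      exact abs_pos.2 (sub_ne_zero.2 hy)
  have hmem : ∀ᶠ y : ℝ in 𝓝[≠] x, x ∈ closedBall x (1 * |y - x|) := by
    filter_upwards with y
    simp [mem_closedBall, abs_nonneg]
  have htend := hx (fun _ : ℝ => x) (fun y : ℝ => |y - x|) hδ hmem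
  rw [hasDerivAt_iff_tendsto]
  rw [← nhdsNE_sup_pure x, tendsto_sup]
  constructor
  · apply squeeze_zero' (Eventually.of_forall fun y => by positivity)
      ?_ (by simpa using htend.const_mul (2:ℝ))
    filter_upwards [self_mem_nhdsWithin] with y (hy : y ≠ x)
    set r := |y - x| with hr
    have hrpos : 0 < r := abs_pos.2 (sub_ne_zero.2 hy)
    have h1 : (∫ s in (0:ℝ)..y, f s) - (∫ s in (0:ℝ)..x, f s) = ∫ s in x..y, f s :=
      intervalIntegral.integral_interval_sub_left (hf.intervalIntegrable)
        (hf.intervalIntegrable)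
    have h2 : (y - x) • f x = ∫ s in x..y, f x := by
      rw [intervalIntegral.integral_const]
    have h3 : (∫ s in (0:ℝ)..y, f s) - (∫ s in (0:ℝ)..x, f s) - (y - x) • f x
        = ∫ s in x..y, (f s - f x) := by
      rw [h1, h2, intervalIntegral.integral_sub (hf.intervalIntegrable)
        intervalIntegrable_const]
    have hsub : Set.uIoc x y ⊆ closedBall x r := by
      intro z hz
      have hz' := Set.uIoc_subset_uIcc hz
      rw [Real.closedBall_eq_Icc]
      rcases le_total x y with h | h
      · rw [Set.uIcc_of_le h] at hz'
        rw [hr, abs_of_nonneg (by linarith)]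
        constructor <;> [linarith [hz'.1]; linarith [hz'.2]]
      · rw [Set.uIcc_of_ge h] at hz'
        rw [hr, abs_of_nonpos (by linarith)]
        constructor <;> [linarith [hz'.1]; linarith [hz'.2]]
    have hint : IntegrableOn (fun s => ‖f s - f x‖) (closedBall x r) volume :=
      (hf.integrableOn.sub (integrableOn_const measure_closedBall_lt_top.ne)).norm
    have h4 : ‖∫ s in x..y, (f s - f x)‖ ≤ ∫ s in closedBall x r, ‖f s - f x‖ := by
      calc ‖∫ s in x..y, (f s - f x)‖
          ≤ ‖∫ s in Set.uIoc x y, (f s - f x)‖ := by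
            rw [intervalIntegral.intervalIntegral_eq_integral_uIoc, norm_smul]
            split_ifs <;> simp
        _ ≤ ∫ s in Set.uIoc x y, ‖f s - f x‖ := norm_integral_le_integral_norm _
        _ ≤ ∫ s in closedBall x r, ‖f s - f x‖ := by
            apply setIntegral_mono_set hint
            · filter_upwards with s using norm_nonneg _
            · exact HasSubset.Subset.eventuallyLE hsub
    have hvol : (volume (closedBall x r)).toReal = 2 * r := by
      rw [Real.volume_closedBall]
      rw [ENNReal.toReal_ofReal (by linarith)]
    have h5 : ∫ s in closedBall x r, ‖f s - f x‖
        = (2 * r) * ⨍ s in closedBall x r, ‖f s - f x‖ := by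
      rw [setAverage_eq, measureReal_def, smul_eq_mul, ← hvol, ← mul_assoc,
        mul_inv_cancel₀ (by rw [hvol]; positivity), one_mul]
    rw [Real.norm_eq_abs, h3]
    calc |y - x|⁻¹ * ‖∫ s in x..y, (f s - f x)‖
        ≤ r⁻¹ * ((2 * r) * ⨍ s in closedBall x r, ‖f s - f x‖) := by
          apply mul_le_mul_of_nonneg_left _ (by positivity)
          rw [← h5]; exact h4
      _ = 2 * ⨍ s in closedBall x r, ‖f s - f x‖ := by
          field_simp
  · have h0 := tendsto_pure_nhds (fun y : ℝ => ‖y - x‖⁻¹ *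
      ‖(∫ s in (0:ℝ)..y, f s) - (∫ s in (0:ℝ)..x, f s) - (y - x) • f x‖) x
    simpa using h0

/-- Let `k ∈ W^{1,1}([0,T])` be nonnegative and nonincreasing on `[0,T]`,
and `u ∈ L²([0,T])`. Then `t ↦ (k*u)(t)` and `t ↦ (k*(u⁺)²)(t)` are differentiable at
a.e. `t ∈ (0,T)`, and for a.e. `t ∈ (0,T)`:
`u(t)⁺ (k*u)'(t) ≥ (1/2) (k*(u⁺)²)'(t)`. -/
theorem statement1
    (T : ℝ) (hT : 0 < T)
    (k k' : ℝ → ℝ)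
    (hk'int : IntegrableOn k' (Icc 0 T))
    (hkac : ∀ t ∈ Icc (0 : ℝ) T, k t = k 0 + ∫ s in (0 : ℝ)..t, k' s)
    (hknonneg : ∀ t ∈ Icc (0 : ℝ) T, 0 ≤ k t)
    (hkmono : AntitoneOn k (Icc 0 T))
    (u : ℝ → ℝ) (hu : MemLp u 2 (volume.restrict (Icc 0 T))) :
    ∀ᵐ t ∂(volume.restrict (Ioo 0 T)),
      DifferentiableAt ℝ (fun τ => ∫ s in (0 : ℝ)..τ, k (τ - s) * u s) t ∧
      DifferentiableAt ℝ (fun τ => ∫ s in (0 : ℝ)..τ, k (τ - s) * (max (u s) 0) ^ 2) t ∧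
      (1 / 2) * deriv (fun τ => ∫ s in (0 : ℝ)..τ, k (τ - s) * (max (u s) 0) ^ 2) t
        ≤ max (u t) 0 * deriv (fun τ => ∫ s in (0 : ℝ)..τ, k (τ - s) * u s) t := by
  haveI hfin : IsFiniteMeasure (volume.restrict (Icc (0:ℝ) T)) := by
    constructor
    rw [Measure.restrict_apply_univ, Real.volume_Icc]
    exact ENNReal.ofReal_lt_top
  -- measurable representative of u, extended by zero
  set um : ℝ → ℝ := hu.1.mk u with hum_def
  have hum : StronglyMeasurable um := hu.1.stronglyMeasurable_mk
  set ub : ℝ → ℝ := (Icc (0:ℝ) T).indicator um with hub_def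
  have hubsm : StronglyMeasurable ub := hum.indicator measurableSet_Icc
  have hubae : u =ᵐ[volume.restrict (Icc (0:ℝ) T)] ub :=
    hu.1.ae_eq_mk.trans (indicator_ae_eq_restrict measurableSet_Icc).symm
  have hub2 : MemLp ub 2 (volume : Measure ℝ) :=
    (memLp_indicator_iff_restrict measurableSet_Icc).2 (hu.ae_eq hu.1.ae_eq_mk)
  have hub1 : Integrable ub (volume : Measure ℝ) := by
    rw [hub_def, integrable_indicator_iff measurableSet_Icc]
    exact ((hu.ae_eq hu.1.ae_eq_mk).integrable (by norm_num))
  have hubzero : ∀ s, s ∉ Icc (0:ℝ) T → ub s = 0 := fun s hs => indicator_of_notMem hs _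
  -- measurable representative of k', extended by zero
  set K : ℝ → ℝ := (Icc (0:ℝ) T).indicator (hk'int.1.mk k') with hK_def
  have hKsm : StronglyMeasurable K := hk'int.1.stronglyMeasurable_mk.indicator measurableSet_Icc
  have hKae : k' =ᵐ[volume.restrict (Icc (0:ℝ) T)] K :=
    hk'int.1.ae_eq_mk.trans (indicator_ae_eq_restrict measurableSet_Icc).symm
  have hKint : Integrable K (volume : Measure ℝ) := by
    rw [hK_def, integrable_indicator_iff measurableSet_Icc]
    exact hk'int.congr hk'int.1.ae_eq_mk
  have hKzero : ∀ x, x ∉ Icc (0:ℝ) T → K x = 0 := fun x hx => indicator_of_notMem hx _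
  -- the function w = (ub⁺)²
  set w : ℝ → ℝ := fun s => (max (ub s) 0) ^ 2 with hw_def
  have hwsm : StronglyMeasurable w :=
    ((hubsm.measurable.max measurable_const).pow_const 2).stronglyMeasurable
  have hw1 : Integrable w (volume : Measure ℝ) := by
    refine (hub2.integrable_sq).mono' hwsm.aestronglyMeasurable ?_
    filter_upwards with s
    have hws : w s = (max (ub s) 0) ^ 2 := rfl
    rw [Real.norm_eq_abs, hws]
    rcases le_total (ub s) 0 with h | h
    · rw [max_eq_right h]
      simpa using sq_nonneg (ub s)
    · rw [max_eq_left h, abs_of_nonneg (sq_nonneg _)]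
  have hwzero : ∀ s, s ∉ Icc (0:ℝ) T → w s = 0 := by
    intro s hs; rw [hw_def]; simp [hubzero s hs]
  -- the primitive of K
  set Kd : ℝ → ℝ := fun x => ∫ r in (0:ℝ)..x, K r with hKd_def
  have hKae' : ∀ᵐ s ∂(volume : Measure ℝ), s ∈ Icc (0:ℝ) T → k' s = K s :=
    (ae_restrict_iff' measurableSet_Icc).1 hKae
  have hKdk : ∀ x ∈ Icc (0:ℝ) T, Kd x = k x - k 0 := by
    intro x hx
    have h1 : (∫ s in (0:ℝ)..x, k' s) = ∫ s in (0:ℝ)..x, K s := by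
      apply intervalIntegral.integral_congr_ae
      filter_upwards [hKae'] with s hs hsmem
      apply hs
      rw [Set.uIoc_of_le hx.1] at hsmem
      exact ⟨hsmem.1.le, hsmem.2.trans hx.2⟩
    show (∫ r in (0:ℝ)..x, K r) = k x - k 0
    rw [← h1, hkac x hx]; ring
  have hKdneg : ∀ x : ℝ, x ≤ 0 → Kd x = 0 := by
    intro x hx
    show (∫ r in (0:ℝ)..x, K r) = 0
    rw [intervalIntegral.integral_symm]
    have : (∫ s in x..(0:ℝ), K s) = ∫ s in x..(0:ℝ), (0:ℝ) := by
      apply intervalIntegral.integral_congr_ae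
      have h0 : ∀ᵐ s : ℝ ∂(volume : Measure ℝ), s ≠ 0 := by
        rw [ae_iff]
        simpa using measure_singleton (0:ℝ)
      filter_upwards [h0] with s hs hsmem
      rw [Set.uIoc_of_le hx] at hsmem
      apply hKzero
      intro hsI
      exact hs (le_antisymm hsmem.2 hsI.1)
    rw [this]; simp
  have hKdbd : ∀ x : ℝ, |Kd x| ≤ ∫ s, ‖K s‖ := by
    intro x
    have hKdx : Kd x = ∫ r in (0:ℝ)..x, K r := rfl
    rw [hKdx, ← Real.norm_eq_abs]
    calc ‖∫ r in (0:ℝ)..x, K r‖ ≤ |∫ s in (0:ℝ)..x, ‖K s‖| :=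
          intervalIntegral.norm_integral_le_abs_integral_norm
      _ = ∫ s in Set.uIoc 0 x, ‖K s‖ := by
          rw [intervalIntegral.abs_integral_eq_abs_integral_uIoc, abs_of_nonneg]
          exact setIntegral_nonneg measurableSet_uIoc fun s _ => norm_nonneg _
      _ ≤ ∫ s, ‖K s‖ :=
          setIntegral_le_integral hKint.norm (Eventually.of_forall fun s => norm_nonneg _)
  have hKdcont : Continuous Kd := by
    rw [hKd_def]
    exact intervalIntegral.continuous_primitive (fun a b => hKint.intervalIntegrable) 0
  -- K is a.e. nonpositive
  have hKle : ∀ᵐ x ∂(volume : Measure ℝ), K x ≤ 0 := by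
    have hd := ae_ftc hKint
    have hae2 : ∀ᵐ x : ℝ ∂(volume : Measure ℝ), x ≠ 0 ∧ x ≠ T := by
      rw [ae_iff]
      have : {x : ℝ | ¬(x ≠ 0 ∧ x ≠ T)} ⊆ {(0:ℝ)} ∪ {T} := by
        intro x hx
        simp only [mem_setOf_eq, not_and_or, not_not] at hx
        rcases hx with h | h <;> simp [h]
      refine measure_mono_null this ?_
      rw [measure_union_null_iff]
      exact ⟨measure_singleton _, measure_singleton _⟩
    filter_upwards [hd, hae2] with x hx hx2
    by_cases hxI : x ∈ Icc (0:ℝ) T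
    · have hxo : x ∈ Ioo (0:ℝ) T :=
        ⟨lt_of_le_of_ne hxI.1 (Ne.symm hx2.1), lt_of_le_of_ne hxI.2 hx2.2⟩
      have hx' : HasDerivWithinAt Kd (K x) (Ioi x) x := hx.hasDerivWithinAt
      rw [hasDerivWithinAt_iff_tendsto_slope] at hx'
      have hIoi : Ioi x \ {x} = Ioi x := by
        apply Set.diff_singleton_eq_self
        simp
      rw [hIoi] at hx'
      refine le_of_tendsto hx' ?_
      have hT' : Ioo x T ∈ 𝓝[>] x := Ioo_mem_nhdsGT_of_mem ⟨le_refl x, hxo.2⟩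
      filter_upwards [hT'] with y hy
      have hyI : y ∈ Icc (0:ℝ) T := ⟨by linarith [hxo.1, hy.1], hy.2.le⟩
      have h1 : Kd y ≤ Kd x := by
        rw [hKdk y hyI, hKdk x hxI]
        have := hkmono hxI hyI hy.1.le
        linarith
      rw [slope_def_field]
      exact div_nonpos_of_nonpos_of_nonneg (by linarith) (by linarith [hy.1])
    · rw [hKzero x hxI]
  -- convolution facts
  have hGdef : ∀ (f : ℝ → ℝ) (x : ℝ),
      (f ⋆[ContinuousLinearMap.mul ℝ ℝ, volume] K) x = ∫ s, f s * K (x - s) := by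
    intro f x
    rw [convolution_def]
    simp only [ContinuousLinearMap.mul_apply']
  have hGu_int : Integrable (ub ⋆[ContinuousLinearMap.mul ℝ ℝ, volume] K) volume :=
    hub1.integrable_convolution _ hKint
  have hGw_int : Integrable (w ⋆[ContinuousLinearMap.mul ℝ ℝ, volume] K) volume :=
    hw1.integrable_convolution _ hKint
  -- key identity
  have key : ∀ f : ℝ → ℝ, StronglyMeasurable f → Integrable f volume →
      (∀ s, s ∉ Icc (0:ℝ) T → f s = 0) → ∀ t ∈ Icc (0:ℝ) T,
      (∫ s in (0:ℝ)..t, k (t - s) * f s)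
        = k 0 * (∫ s in (0:ℝ)..t, f s)
          + ∫ τ in (0:ℝ)..t, (f ⋆[ContinuousLinearMap.mul ℝ ℝ, volume] K) τ := by
    intro f hfsm hf hf0 t ht
    have h0t : (0:ℝ) ≤ t := ht.1
    have hKdf_int : IntervalIntegrable (fun s => Kd (t - s) * f s) volume 0 t := by
      refine (Integrable.bdd_mul (c := ∫ s, ‖K s‖) hf
        ((hKdcont.comp (continuous_const.sub continuous_id)).aestronglyMeasurable)
        (Eventually.of_forall fun x => ?_)).intervalIntegrable
      rw [Real.norm_eq_abs]
      exact hKdbd _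
    have step1 : (∫ s in (0:ℝ)..t, k (t - s) * f s)
        = k 0 * (∫ s in (0:ℝ)..t, f s) + ∫ s in (0:ℝ)..t, Kd (t - s) * f s := by
      have e1 : (∫ s in (0:ℝ)..t, k (t - s) * f s)
          = ∫ s in (0:ℝ)..t, (k 0 * f s + Kd (t - s) * f s) := by
        apply intervalIntegral.integral_congr
        intro s hs
        rw [Set.uIcc_of_le h0t] at hs
        have hts : t - s ∈ Icc (0:ℝ) T := ⟨by linarith [hs.2], by linarith [hs.1, ht.2]⟩
        have h2 := hKdk _ hts
        have hk2 : k (t - s) = k 0 + Kd (t - s) := by linarith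
        show k (t - s) * f s = k 0 * f s + Kd (t - s) * f s
        rw [hk2]; ring
      rw [e1, intervalIntegral.integral_add ((hf.const_mul _).intervalIntegrable) hKdf_int,
        intervalIntegral.integral_const_mul]
    have hconv_prod : Integrable (fun p : ℝ × ℝ => f p.2 * K (p.1 - p.2))
        (volume.prod volume) := by
      have h := hf.convolution_integrand (ContinuousLinearMap.mul ℝ ℝ) hKint
      simpa only [ContinuousLinearMap.mul_apply'] using h
    set P : ℝ × ℝ → ℝ :=
      fun p => (Ioc (0:ℝ) t).indicator (fun _ => (1:ℝ)) p.1 * (f p.2 * K (p.1 - p.2))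
      with hP_def
    have hP : Integrable P (volume.prod volume) := by
      refine Integrable.bdd_mul (c := 1) hconv_prod ?_ (Eventually.of_forall ?_)
      · exact ((stronglyMeasurable_const.indicator
          measurableSet_Ioc).comp_measurable measurable_fst).aestronglyMeasurable
      · intro p
        rw [Real.norm_eq_abs]
        by_cases hp : p.1 ∈ Ioc (0:ℝ) t <;>
          simp [Set.indicator_of_mem, Set.indicator_of_notMem, hp]
    have swap : (∫ τ, ∫ s, P (τ, s)) = ∫ s, ∫ τ, P (τ, s) :=
      integral_integral_swap (f := fun τ s => P (τ, s)) hP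
    have hR : ∀ τ : ℝ, (∫ s, P (τ, s))
        = (Ioc (0:ℝ) t).indicator (f ⋆[ContinuousLinearMap.mul ℝ ℝ, volume] K) τ := by
      intro τ
      by_cases hτ : τ ∈ Ioc (0:ℝ) t
      · rw [Set.indicator_of_mem hτ, hGdef]
        apply integral_congr_ae
        filter_upwards with s
        simp [hP_def, Set.indicator_of_mem hτ]
      · rw [Set.indicator_of_notMem hτ]
        have hz : ∀ s, P (τ, s) = 0 := fun s => by
          simp [hP_def, Set.indicator_of_notMem hτ]
        simp only [hz]
        exact integral_zero _ _
    have hRHS : (∫ τ, ∫ s, P (τ, s))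
        = ∫ τ in (0:ℝ)..t, (f ⋆[ContinuousLinearMap.mul ℝ ℝ, volume] K) τ := by
      rw [intervalIntegral.integral_of_le h0t, ← integral_indicator measurableSet_Ioc]
      exact integral_congr_ae (Eventually.of_forall hR)
    have hKslice : ∀ s : ℝ, (∫ τ in (0:ℝ)..t, K (τ - s)) = Kd (t - s) - Kd (-s) := by
      intro s
      rw [intervalIntegral.integral_comp_sub_right (fun r => K r) s, zero_sub]
      rw [← intervalIntegral.integral_add_adjacent_intervals (a := -s) (b := 0) (c := t - s)
        (hKint.intervalIntegrable) (hKint.intervalIntegrable)]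
      rw [intervalIntegral.integral_symm]
      show -Kd (-s) + Kd (t - s) = Kd (t - s) - Kd (-s)
      ring
    have hL : ∀ s : ℝ, (∫ τ, P (τ, s)) = f s * (Kd (t - s) - Kd (-s)) := by
      intro s
      have e1 : ∀ τ, P (τ, s) = (Ioc (0:ℝ) t).indicator (fun τ => f s * K (τ - s)) τ := by
        intro τ
        by_cases hτ : τ ∈ Ioc (0:ℝ) t <;>
          simp [hP_def, Set.indicator_of_mem, Set.indicator_of_notMem, hτ]
      rw [integral_congr_ae (Eventually.of_forall e1), integral_indicator measurableSet_Ioc,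
        ← intervalIntegral.integral_of_le h0t, intervalIntegral.integral_const_mul, hKslice s]
    have hL2 : (∫ s, ∫ τ, P (τ, s)) = ∫ s in (0:ℝ)..t, Kd (t - s) * f s := by
      rw [integral_congr_ae (Eventually.of_forall hL)]
      have e2 : (fun s : ℝ => f s * (Kd (t - s) - Kd (-s)))
          = fun s : ℝ => f s * Kd (t - s) := by
        funext s
        by_cases hsI : s ∈ Icc (0:ℝ) T
        · rw [hKdneg (-s) (by linarith [hsI.1])]; ring
        · rw [hf0 s hsI]; ring
      rw [e2]
      have hsupp : ∀ s, s ∉ Icc (0:ℝ) t → f s * Kd (t - s) = 0 := by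
        intro s hs
        rcases not_and_or.1 hs with h1 | h2
        · rw [hf0 s (fun hsI => h1 hsI.1)]; ring
        · push_neg at h2
          rw [hKdneg (t - s) (by linarith)]; ring
      rw [← setIntegral_eq_integral_of_forall_compl_eq_zero hsupp,
        integral_Icc_eq_integral_Ioc, ← intervalIntegral.integral_of_le h0t]
      apply intervalIntegral.integral_congr
      intro s _
      show f s * Kd (t - s) = Kd (t - s) * f s
      ring
    rw [step1, ← hL2, ← swap, hRHS]
  -- primitive representations
  set g1 : ℝ → ℝ := fun x => k 0 * ub x + (ub ⋆[ContinuousLinearMap.mul ℝ ℝ, volume] K) x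
    with hg1_def
  set g2 : ℝ → ℝ := fun x => k 0 * w x + (w ⋆[ContinuousLinearMap.mul ℝ ℝ, volume] K) x
    with hg2_def
  have hg1int : Integrable g1 (volume : Measure ℝ) := (hub1.const_mul _).add hGu_int
  have hg2int : Integrable g2 (volume : Measure ℝ) := (hw1.const_mul _).add hGw_int
  have hrep1 : ∀ t ∈ Icc (0:ℝ) T,
      (∫ s in (0:ℝ)..t, k (t - s) * ub s) = ∫ x in (0:ℝ)..t, g1 x := by
    intro t ht
    rw [key ub hubsm hub1 hubzero t ht, hg1_def,
      intervalIntegral.integral_add ((hub1.const_mul _).intervalIntegrable)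
        (hGu_int.intervalIntegrable), intervalIntegral.integral_const_mul]
  have hrep2 : ∀ t ∈ Icc (0:ℝ) T,
      (∫ s in (0:ℝ)..t, k (t - s) * w s) = ∫ x in (0:ℝ)..t, g2 x := by
    intro t ht
    rw [key w hwsm hw1 hwzero t ht, hg2_def,
      intervalIntegral.integral_add ((hw1.const_mul _).intervalIntegrable)
        (hGw_int.intervalIntegrable), intervalIntegral.integral_const_mul]
  -- a.e. facts
  have hd1 := ae_ftc hg1int
  have hd2 := ae_ftc hg2int
  have hs1 : ∀ᵐ x ∂(volume : Measure ℝ), Integrable (fun s => ub s * K (x - s)) volume := by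
    filter_upwards [hub1.ae_convolution_exists (ContinuousLinearMap.mul ℝ ℝ) hKint] with x hx
    have h2 : Integrable (fun s => (ContinuousLinearMap.mul ℝ ℝ) (ub s) (K (x - s))) volume := hx
    simpa only [ContinuousLinearMap.mul_apply'] using h2
  have hs2 : ∀ᵐ x ∂(volume : Measure ℝ), Integrable (fun s => w s * K (x - s)) volume := by
    filter_upwards [hw1.ae_convolution_exists (ContinuousLinearMap.mul ℝ ℝ) hKint] with x hx
    have h2 : Integrable (fun s => (ContinuousLinearMap.mul ℝ ℝ) (w s) (K (x - s))) volume := hx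
    simpa only [ContinuousLinearMap.mul_apply'] using h2
  have hKrefl : ∀ t : ℝ, ∀ᵐ s ∂(volume : Measure ℝ), K (t - s) ≤ 0 := by
    intro t
    have hmp : MeasurePreserving (fun s : ℝ => t - s) volume volume :=
      Measure.measurePreserving_sub_left volume t
    have hset : MeasurableSet {x : ℝ | ¬ K x ≤ 0} := by
      simp only [not_le]
      exact measurableSet_lt measurable_const hKsm.measurable
    rw [ae_iff]
    have heq : {s : ℝ | ¬ K (t - s) ≤ 0} = (fun s : ℝ => t - s) ⁻¹' {x | ¬ K x ≤ 0} := rfl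
    rw [heq, hmp.measure_preimage hset.nullMeasurableSet]
    exact ae_iff.1 hKle
  have hmemIoo : ∀ᵐ t ∂(volume.restrict (Ioo (0:ℝ) T)), t ∈ Ioo (0:ℝ) T :=
    ae_restrict_mem measurableSet_Ioo
  have hueq : ∀ᵐ t ∂(volume.restrict (Ioo (0:ℝ) T)), u t = ub t :=
    hubae.filter_mono (ae_mono (Measure.restrict_mono Ioo_subset_Icc_self le_rfl))
  have hd1' := hd1.filter_mono (ae_mono (Measure.restrict_le_self (s := Ioo (0:ℝ) T)))
  have hd2' := hd2.filter_mono (ae_mono (Measure.restrict_le_self (s := Ioo (0:ℝ) T)))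
  have hs1' := hs1.filter_mono (ae_mono (Measure.restrict_le_self (s := Ioo (0:ℝ) T)))
  have hs2' := hs2.filter_mono (ae_mono (Measure.restrict_le_self (s := Ioo (0:ℝ) T)))
  have hub_ae' : ∀ᵐ s ∂(volume : Measure ℝ), s ∈ Icc (0:ℝ) T → u s = ub s :=
    (ae_restrict_iff' measurableSet_Icc).1 hubae
  filter_upwards [hmemIoo, hueq, hd1', hd2', hs1', hs2'] with t htI hteq hdd1 hdd2 hss1 hss2
  have htIcc : t ∈ Icc (0:ℝ) T := Ioo_subset_Icc_self htI
  have hnbhd : Ioo (0:ℝ) T ∈ 𝓝 t := isOpen_Ioo.mem_nhds htI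
  have hA : (fun τ => ∫ s in (0:ℝ)..τ, k (τ - s) * u s)
      =ᶠ[𝓝 t] (fun τ => ∫ x in (0:ℝ)..τ, g1 x) := by
    filter_upwards [hnbhd] with τ hτ
    have hτI : τ ∈ Icc (0:ℝ) T := Ioo_subset_Icc_self hτ
    rw [← hrep1 τ hτI]
    apply intervalIntegral.integral_congr_ae
    filter_upwards [hub_ae'] with s hs hsmem
    rw [Set.uIoc_of_le hτI.1] at hsmem
    show k (τ - s) * u s = k (τ - s) * ub s
    rw [hs ⟨hsmem.1.le, hsmem.2.trans hτI.2⟩]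
  have hB : (fun τ => ∫ s in (0:ℝ)..τ, k (τ - s) * (max (u s) 0) ^ 2)
      =ᶠ[𝓝 t] (fun τ => ∫ x in (0:ℝ)..τ, g2 x) := by
    filter_upwards [hnbhd] with τ hτ
    have hτI : τ ∈ Icc (0:ℝ) T := Ioo_subset_Icc_self hτ
    rw [← hrep2 τ hτI]
    apply intervalIntegral.integral_congr_ae
    filter_upwards [hub_ae'] with s hs hsmem
    rw [Set.uIoc_of_le hτI.1] at hsmem
    show k (τ - s) * (max (u s) 0) ^ 2 = k (τ - s) * w s
    rw [hs ⟨hsmem.1.le, hsmem.2.trans hτI.2⟩]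
  have hdA : HasDerivAt (fun τ => ∫ s in (0:ℝ)..τ, k (τ - s) * u s) (g1 t) t :=
    hdd1.congr_of_eventuallyEq hA
  have hdB : HasDerivAt (fun τ => ∫ s in (0:ℝ)..τ, k (τ - s) * (max (u s) 0) ^ 2) (g2 t) t :=
    hdd2.congr_of_eventuallyEq hB
  refine ⟨hdA.differentiableAt, hdB.differentiableAt, ?_⟩
  rw [hdA.deriv, hdB.deriv]
  -- the pointwise inequality
  set v : ℝ := max (u t) 0 with hv_def
  have hv0 : 0 ≤ v := le_max_right _ _
  have hGu_t : (ub ⋆[ContinuousLinearMap.mul ℝ ℝ, volume] K) t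
      = ∫ s in (0:ℝ)..t, ub s * K (t - s) := by
    have hsupp1 : ∀ s, s ∉ Icc (0:ℝ) t → ub s * K (t - s) = 0 := by
      intro s hs
      rcases not_and_or.1 hs with h1 | h2
      · rw [hubzero s (fun hsI => h1 hsI.1)]; ring
      · push_neg at h2
        rw [hKzero (t - s) (fun hI => by simp at hI; linarith [hI.1])]; ring
    rw [hGdef, ← setIntegral_eq_integral_of_forall_compl_eq_zero hsupp1,
      integral_Icc_eq_integral_Ioc, ← intervalIntegral.integral_of_le htIcc.1]
  have hGw_t : (w ⋆[ContinuousLinearMap.mul ℝ ℝ, volume] K) t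
      = ∫ s in (0:ℝ)..t, w s * K (t - s) := by
    have hsupp2 : ∀ s, s ∉ Icc (0:ℝ) t → w s * K (t - s) = 0 := by
      intro s hs
      rcases not_and_or.1 hs with h1 | h2
      · rw [hwzero s (fun hsI => h1 hsI.1)]; ring
      · push_neg at h2
        rw [hKzero (t - s) (fun hI => by simp at hI; linarith [hI.1])]; ring
    rw [hGdef, ← setIntegral_eq_integral_of_forall_compl_eq_zero hsupp2,
      integral_Icc_eq_integral_Ioc, ← intervalIntegral.integral_of_le htIcc.1]
  have hIa : IntervalIntegrable (fun s => K (t - s) * ((1/2) * v^2)) volume 0 t :=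
    ((hKint.comp_sub_left t).mul_const _).intervalIntegrable
  have hIb : IntervalIntegrable
      (fun s => v * (ub s * K (t - s)) - (1/2) * (w s * K (t - s))) volume 0 t :=
    ((hss1.const_mul v).sub (hss2.const_mul (1/2))).intervalIntegrable
  have hmono : (∫ s in (0:ℝ)..t, K (t - s) * ((1/2) * v^2))
      ≤ ∫ s in (0:ℝ)..t, (v * (ub s * K (t - s)) - (1/2) * (w s * K (t - s))) := by
    apply intervalIntegral.integral_mono_ae htIcc.1 hIa hIb
    filter_upwards [hKrefl t] with s hKs
    have hfac : v * ub s - (1/2) * w s - (1/2) * v^2 ≤ 0 := by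
      have h1 : v * ub s ≤ v * max (ub s) 0 :=
        mul_le_mul_of_nonneg_left (le_max_left _ _) hv0
      have h2 : 2 * v * max (ub s) 0 ≤ v^2 + (max (ub s) 0)^2 := two_mul_le_add_sq v _
      have hws : w s = (max (ub s) 0)^2 := rfl
      nlinarith [h1, h2]
    have hprod := mul_nonneg (neg_nonneg.2 hKs) (neg_nonneg.2 hfac)
    nlinarith [hprod]
  have hKint_t : (∫ s in (0:ℝ)..t, K (t - s)) = k t - k 0 := by
    rw [intervalIntegral.integral_comp_sub_left (fun r => K r) t]
    simp only [sub_self, sub_zero]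
    exact hKdk t htIcc
  have hLa : (∫ s in (0:ℝ)..t, K (t - s) * ((1/2) * v^2)) = (k t - k 0) * ((1/2) * v^2) := by
    rw [intervalIntegral.integral_mul_const, hKint_t]
  have hLb : (∫ s in (0:ℝ)..t, (v * (ub s * K (t - s)) - (1/2) * (w s * K (t - s))))
      = v * (∫ s in (0:ℝ)..t, ub s * K (t - s))
        - (1/2) * (∫ s in (0:ℝ)..t, w s * K (t - s)) := by
    rw [intervalIntegral.integral_sub (hss1.const_mul v).intervalIntegrable
      (hss2.const_mul (1/2)).intervalIntegrable, intervalIntegral.integral_const_mul,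
      intervalIntegral.integral_const_mul]
  rw [hLa, hLb] at hmono
  have hvut : v * u t = v^2 := by
    rcases le_total (u t) 0 with h | h
    · rw [hv_def, max_eq_right h]; ring
    · rw [hv_def, max_eq_left h]; ring
  have hwt : w t = v^2 := by
    show (max (ub t) 0)^2 = v^2
    rw [← hteq, hv_def]
  have hkt : 0 ≤ k t := hknonneg t htIcc
  have hvkt : 0 ≤ v^2 * k t := mul_nonneg (sq_nonneg v) hkt
  have e1 : g1 t = k 0 * u t + ∫ s in (0:ℝ)..t, ub s * K (t - s) := by
    rw [hg1_def]
    show k 0 * ub t + (ub ⋆[ContinuousLinearMap.mul ℝ ℝ, volume] K) t = _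
    rw [hGu_t, ← hteq]
  have e2 : g2 t = k 0 * v^2 + ∫ s in (0:ℝ)..t, w s * K (t - s) := by
    rw [hg2_def]
    show k 0 * w t + (w ⋆[ContinuousLinearMap.mul ℝ ℝ, volume] K) t = _
    rw [hGw_t, hwt]
  rw [e1, e2]
  have expand : v * (k 0 * u t + ∫ s in (0:ℝ)..t, ub s * K (t - s))
      = k 0 * (v * u t) + v * ∫ s in (0:ℝ)..t, ub s * K (t - s) := by ring
  rw [expand, hvut]
  nlinarith [hmono, hvkt]
end

section
/- Let T>0 and let k ∈ W^{1,1}([0,T]) (k absolutely continuous with k̇ ∈ L¹([0,T])) be nonnegative and nonincreasing, and let u ∈ L²([0,T]). Then for almost every t ∈ (0,T): u(t)⁻ · (d/dt)(k*u)(t) ≤ −(1/2) · (d/dt)(k*(u⁻)²)(t). -/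
open MeasureTheory Set Filter Topology
open scoped ENNReal

/-! ### Auxiliary lemmas -/

/-- Almost-everywhere fundamental theorem of calculus for an integrable function,
via the Lebesgue differentiation theorem. -/
lemma aeFTC (f : ℝ → ℝ) (hf : Integrable f volume) :
    ∀ᵐ t : ℝ, HasDerivAt (fun τ => ∫ s in (0:ℝ)..τ, f s) (f t) t := by
  filter_upwards [IsUnifLocDoublingMeasure.ae_tendsto_average (μ := volume)
    hf.locallyIntegrable 1] with t ht
  rw [hasDerivAt_iff_tendsto_slope]
  have hδ : Tendsto (fun x : ℝ => |x - t| / 2) (𝓝[≠] t) (𝓝[>] 0) := by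
    rw [tendsto_nhdsWithin_iff]
    constructor
    · have : Tendsto (fun x : ℝ => |x - t| / 2) (𝓝 t) (𝓝 (|t - t| / 2)) :=
        (((continuous_id.sub continuous_const).abs.div_const 2).tendsto t)
      simpa using this.mono_left nhdsWithin_le_nhds
    · filter_upwards [self_mem_nhdsWithin] with x (hx : x ≠ t)
      have h1 : x - t ≠ 0 := sub_ne_zero.2 hx
      have h2 := abs_pos.2 h1
      exact mem_Ioi.2 (by linarith)
  have hmem : ∀ᶠ x : ℝ in 𝓝[≠] t, t ∈ Metric.closedBall ((t + x)/2) (1 * (|x - t| / 2)) := by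
    filter_upwards with x
    simp only [Metric.mem_closedBall, Real.dist_eq, one_mul]
    have h3 : t - (t + x) / 2 = (t - x) / 2 := by ring
    rw [h3, abs_div, abs_sub_comm t x]
    simp
  have key := ht (fun x => (t + x)/2) (fun x => |x - t| / 2) hδ hmem
  apply key.congr'
  filter_upwards [self_mem_nhdsWithin] with x (hx : x ≠ t)
  have hii : ∀ a b : ℝ, IntervalIntegrable f volume a b := fun a b =>
    hf.intervalIntegrable
  have hsub : (fun τ => ∫ s in (0:ℝ)..τ, f s) x - (fun τ => ∫ s in (0:ℝ)..τ, f s) t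
      = ∫ s in t..x, f s := intervalIntegral.integral_interval_sub_left (hii 0 x) (hii 0 t)
  rw [slope_def_field, hsub]
  rcases lt_or_gt_of_ne hx with h | h
  · have hball : Metric.closedBall ((t + x)/2) (|x - t|/2) = Icc x t := by
      rw [Real.closedBall_eq_Icc, abs_of_nonpos (by linarith)]
      congr 1 <;> ring
    rw [hball, setAverage_eq, MeasureTheory.integral_Icc_eq_integral_Ioc,
      ← intervalIntegral.integral_of_le h.le, Real.volume_real_Icc_of_le h.le,
      intervalIntegral.integral_symm x t]
    rw [smul_eq_mul]
    have hn : (x - t) = -(t - x) := by ring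
    field_simp
    ring
  · have hball : Metric.closedBall ((t + x)/2) (|x - t|/2) = Icc t x := by
      rw [Real.closedBall_eq_Icc, abs_of_nonneg (by linarith)]
      congr 1 <;> ring
    rw [hball, setAverage_eq, MeasureTheory.integral_Icc_eq_integral_Ioc,
      ← intervalIntegral.integral_of_le h.le, Real.volume_real_Icc_of_le h.le,
      smul_eq_mul, div_eq_mul_inv]
    ring

/-- Product integrability criterion via a convolution-type bound. -/
lemma key_lint (k' v : ℝ → ℝ) (hk : Integrable k' volume) (hv : Integrable v volume)
    (mk' : Measurable k') (mv : Measurable v)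
    (μ ν : Measure ℝ) [SFinite μ] [SFinite ν] (hμ : μ ≤ volume) (hν : ν ≤ volume)
    (g : ℝ × ℝ → ℝ) (hg : ∀ p, ‖g p‖₊ ≤ ‖k' (p.1 - p.2)‖₊ * ‖v p.2‖₊)
    (hmg : AEStronglyMeasurable g (μ.prod ν)) : Integrable g (μ.prod ν) := by
  have hF0 : Measurable fun p : ℝ × ℝ => (‖k' (p.1 - p.2)‖₊ * ‖v p.2‖₊ : ℝ≥0∞) := by
    apply Measurable.fun_mul
    · exact (mk'.comp (measurable_fst.sub measurable_snd)).nnnorm.coe_nnreal_ennreal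
    · exact (mv.comp measurable_snd).nnnorm.coe_nnreal_ennreal
  refine ⟨hmg, ?_⟩
  have hC : ∫⁻ x, ‖k' x‖₊ ∂volume < ⊤ := hk.hasFiniteIntegral
  have hV : ∫⁻ x, ‖v x‖₊ ∂volume < ⊤ := hv.hasFiniteIntegral
  calc ∫⁻ p, ‖g p‖₊ ∂μ.prod ν
      ≤ ∫⁻ p, (‖k' (p.1 - p.2)‖₊ * ‖v p.2‖₊ : ℝ≥0∞) ∂μ.prod ν := by
        refine lintegral_mono fun p => ?_
        simpa using ENNReal.coe_le_coe.2 (hg p)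
    _ = ∫⁻ s, (∫⁻ σ, (‖k' (σ - s)‖₊ * ‖v s‖₊ : ℝ≥0∞) ∂μ) ∂ν :=
        lintegral_prod_symm _ hF0.aemeasurable
    _ ≤ ∫⁻ s, ((‖v s‖₊ : ℝ≥0∞) * ∫⁻ x, ‖k' x‖₊ ∂volume) ∂ν := by
        refine lintegral_mono fun s => ?_
        have hm1 : Measurable fun σ => (‖k' (σ - s)‖₊ : ℝ≥0∞) :=
          (mk'.comp (measurable_id.sub measurable_const)).nnnorm.coe_nnreal_ennreal
        rw [lintegral_mul_const _ hm1, mul_comm]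
        refine mul_le_mul_right ?_ _
        calc ∫⁻ σ, (‖k' (σ - s)‖₊ : ℝ≥0∞) ∂μ ≤ ∫⁻ σ, (‖k' (σ - s)‖₊ : ℝ≥0∞) ∂volume :=
              lintegral_mono' hμ le_rfl
          _ = ∫⁻ x, ‖k' x‖₊ ∂volume := lintegral_sub_right_eq_self (fun x => (‖k' x‖₊ : ℝ≥0∞)) s
    _ = (∫⁻ s, (‖v s‖₊ : ℝ≥0∞) ∂ν) * ∫⁻ x, ‖k' x‖₊ ∂volume :=
        lintegral_mul_const _ mv.nnnorm.coe_nnreal_ennreal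
    _ ≤ (∫⁻ s, (‖v s‖₊ : ℝ≥0∞) ∂volume) * ∫⁻ x, ‖k' x‖₊ ∂volume :=
        mul_le_mul_left (lintegral_mono' hν le_rfl) _
    _ < ⊤ := ENNReal.mul_lt_top hV hC

/-- Fubini on the triangle `0 < s ≤ σ ≤ τ`. -/
lemma fubini_tri (k' v : ℝ → ℝ) (hk : Integrable k' volume) (hv : Integrable v volume)
    (mk' : Measurable k') (mv : Measurable v) (τ : ℝ) (hτ : 0 ≤ τ) :
    ∫ σ in Ioc (0:ℝ) τ, (∫ s in Ioc (0:ℝ) σ, k' (σ - s) * v s)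
      = ∫ s in Ioc (0:ℝ) τ, (∫ r in Ioc (0:ℝ) (τ - s), k' r) * v s := by
  set f : ℝ → ℝ → ℝ := fun σ s => Set.indicator (Iic σ) (fun s' => k' (σ - s') * v s') s with hf
  have hunc : Function.uncurry f
      = Set.indicator {p : ℝ × ℝ | p.2 ≤ p.1} (fun p => k' (p.1 - p.2) * v p.2) := by
    funext p
    rcases p with ⟨σ, s⟩
    simp [Function.uncurry, hf, Set.indicator_apply, Set.mem_Iic, Set.mem_setOf_eq]
  have meas : AEStronglyMeasurable (Function.uncurry f)
      ((volume.restrict (Ioc (0:ℝ) τ)).prod (volume.restrict (Ioc (0:ℝ) τ))) := by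
    rw [hunc]
    exact (((mk'.comp (measurable_fst.sub measurable_snd)).mul
      (mv.comp measurable_snd)).indicator
      (measurableSet_le measurable_snd measurable_fst)).aestronglyMeasurable
  have hint : Integrable (Function.uncurry f)
      ((volume.restrict (Ioc (0:ℝ) τ)).prod (volume.restrict (Ioc (0:ℝ) τ))) := by
    refine key_lint k' v hk hv mk' mv _ _ Measure.restrict_le_self Measure.restrict_le_self _
      (fun p => ?_) meas
    rw [hunc]
    by_cases h : p ∈ {p : ℝ × ℝ | p.2 ≤ p.1} <;> simp [Set.indicator_apply, h, nnnorm_mul]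
  have swap := integral_integral_swap hint
  have lhs_eq : ∫ σ in Ioc (0:ℝ) τ, (∫ s in Ioc (0:ℝ) τ, f σ s)
      = ∫ σ in Ioc (0:ℝ) τ, (∫ s in Ioc (0:ℝ) σ, k' (σ - s) * v s) := by
    refine setIntegral_congr_fun measurableSet_Ioc fun σ hσ => ?_
    have hset : Ioc (0:ℝ) τ ∩ Iic σ = Ioc 0 σ := by
      ext s
      simp only [mem_inter_iff, mem_Ioc, mem_Iic]
      constructor
      · rintro ⟨⟨h1, _⟩, h3⟩; exact ⟨h1, h3⟩
      · rintro ⟨h1, h2⟩; exact ⟨⟨h1, h2.trans hσ.2⟩, h2⟩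
    calc ∫ s in Ioc (0:ℝ) τ, f σ s
        = ∫ s in Ioc (0:ℝ) τ, Set.indicator (Iic σ) (fun s' => k' (σ - s') * v s') s := rfl
      _ = ∫ s in Ioc (0:ℝ) τ ∩ Iic σ, k' (σ - s) * v s :=
          setIntegral_indicator measurableSet_Iic
      _ = ∫ s in Ioc (0:ℝ) σ, k' (σ - s) * v s := by rw [hset]
  have rhs_eq : ∫ s in Ioc (0:ℝ) τ, (∫ σ in Ioc (0:ℝ) τ, f σ s)
      = ∫ s in Ioc (0:ℝ) τ, (∫ r in Ioc (0:ℝ) (τ - s), k' r) * v s := by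
    refine setIntegral_congr_fun measurableSet_Ioc fun s hs => ?_
    have hfun : (fun σ => f σ s) = Set.indicator (Ici s) (fun σ => k' (σ - s) * v s) := by
      funext σ
      simp [hf, Set.indicator_apply, Set.mem_Iic, Set.mem_Ici]
    rw [hfun, setIntegral_indicator measurableSet_Ici]
    have hset : Ioc (0:ℝ) τ ∩ Ici s = Icc s τ := by
      ext σ
      simp only [mem_inter_iff, mem_Ioc, mem_Icc, mem_Ici]
      constructor
      · rintro ⟨⟨_, h2⟩, h3⟩; exact ⟨h3, h2⟩
      · rintro ⟨h1, h2⟩; exact ⟨⟨lt_of_lt_of_le hs.1 h1, h2⟩, h1⟩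
    rw [hset, MeasureTheory.integral_Icc_eq_integral_Ioc,
      ← intervalIntegral.integral_of_le hs.2, intervalIntegral.integral_mul_const,
      intervalIntegral.integral_comp_sub_right k' s, sub_self,
      intervalIntegral.integral_of_le (by linarith [hs.2] : (0:ℝ) ≤ τ - s)]
  rw [← lhs_eq, ← rhs_eq]
  exact swap

section Aux
variable {k' v : ℝ → ℝ}

lemma tri_measSet : MeasurableSet {p : ℝ × ℝ | 0 < p.2 ∧ p.2 ≤ p.1} :=
  (measurableSet_lt measurable_const measurable_snd).inter
    (measurableSet_le measurable_snd measurable_fst)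

lemma tri_slice_eq (t : ℝ) :
    (fun s => Set.indicator {p : ℝ × ℝ | 0 < p.2 ∧ p.2 ≤ p.1}
      (fun p => k' (p.1 - p.2) * v p.2) (t, s))
      = Set.indicator (Ioc (0:ℝ) t) (fun s => k' (t - s) * v s) := by
  funext s
  rcases Classical.em (0 < s ∧ s ≤ t) with h | h
  · rw [Set.indicator_of_mem (by exact h), Set.indicator_of_mem (by exact h)]
  · rw [Set.indicator_of_notMem (by exact h), Set.indicator_of_notMem (by exact h)]

lemma tri_prod_int (hk : Integrable k' volume) (hv : Integrable v volume)
    (mk' : Measurable k') (mv : Measurable v)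
    (μ : Measure ℝ) [SFinite μ] (hμ : μ ≤ volume) :
    Integrable (Set.indicator {p : ℝ × ℝ | 0 < p.2 ∧ p.2 ≤ p.1}
      (fun p => k' (p.1 - p.2) * v p.2)) (μ.prod volume) := by
  refine key_lint k' v hk hv mk' mv μ volume hμ le_rfl _ (fun p => ?_) ?_
  · by_cases h : p ∈ {p : ℝ × ℝ | 0 < p.2 ∧ p.2 ≤ p.1} <;>
      simp [Set.indicator_apply, h, nnnorm_mul]
  · exact ((((mk'.comp (measurable_fst.sub measurable_snd)).mul
      (mv.comp measurable_snd)).indicator tri_measSet).stronglyMeasurable).aestronglyMeasurable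

lemma conv_intOn (hk : Integrable k' volume) (hv : Integrable v volume)
    (mk' : Measurable k') (mv : Measurable v) (T : ℝ) :
    IntegrableOn (fun σ => ∫ s in Ioc (0:ℝ) σ, k' (σ - s) * v s) (Icc 0 T) := by
  have h := (tri_prod_int hk hv mk' mv (volume.restrict (Icc 0 T))
    Measure.restrict_le_self).integral_prod_left
  refine h.congr (Eventually.of_forall fun σ => ?_)
  beta_reduce
  rw [show (fun s => Set.indicator {p : ℝ × ℝ | 0 < p.2 ∧ p.2 ≤ p.1}
      (fun p => k' (p.1 - p.2) * v p.2) (σ, s))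
      = Set.indicator (Ioc (0:ℝ) σ) (fun s => k' (σ - s) * v s) from tri_slice_eq σ,
    MeasureTheory.integral_indicator measurableSet_Ioc]

lemma conv_slice (hk : Integrable k' volume) (hv : Integrable v volume)
    (mk' : Measurable k') (mv : Measurable v) (T : ℝ) :
    ∀ᵐ t ∂(volume.restrict (Ioo 0 T)),
      IntegrableOn (fun s => k' (t - s) * v s) (Ioc 0 t) := by
  have h := (tri_prod_int hk hv mk' mv (volume.restrict (Ioo 0 T))
    Measure.restrict_le_self).prod_right_ae
  filter_upwards [h] with t ht
  rw [show (fun s => Set.indicator {p : ℝ × ℝ | 0 < p.2 ∧ p.2 ≤ p.1}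
      (fun p => k' (p.1 - p.2) * v p.2) (t, s))
      = Set.indicator (Ioc (0:ℝ) t) (fun s => k' (t - s) * v s) from tri_slice_eq t] at ht
  exact (integrable_indicator_iff measurableSet_Ioc).1 ht

lemma conv_primitive (T : ℝ) (k : ℝ → ℝ)
    (mk' : Measurable k') (mv : Measurable v)
    (hk : Integrable k' volume) (hv : Integrable v volume)
    (hkac : ∀ t ∈ Icc (0:ℝ) T, k t = k 0 + ∫ s in (0:ℝ)..t, k' s)
    (τ : ℝ) (hτ : τ ∈ Icc (0:ℝ) T) :
    ∫ s in (0:ℝ)..τ, k (τ - s) * v s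
      = ∫ σ in (0:ℝ)..τ, (k 0 * v σ + ∫ s in Ioc (0:ℝ) σ, k' (σ - s) * v s) := by
  obtain ⟨h0, hT⟩ := hτ
  -- a measurable primitive of `k'`
  have hPsm : StronglyMeasurable (fun y : ℝ => ∫ s, Set.indicator
      {p : ℝ × ℝ | 0 < p.2 ∧ p.2 ≤ p.1} (fun p => k' p.2) (y, s)) := by
    apply StronglyMeasurable.integral_prod_right'
    exact ((mk'.comp measurable_snd).indicator tri_measSet).stronglyMeasurable
  have hPeq : ∀ y : ℝ, (∫ s, Set.indicator {p : ℝ × ℝ | 0 < p.2 ∧ p.2 ≤ p.1}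
      (fun p => k' p.2) (y, s)) = ∫ r in Ioc (0:ℝ) y, k' r := by
    intro y
    have : (fun s => Set.indicator {p : ℝ × ℝ | 0 < p.2 ∧ p.2 ≤ p.1}
        (fun p => k' p.2) (y, s)) = Set.indicator (Ioc (0:ℝ) y) k' := by
      funext s
      rcases Classical.em (0 < s ∧ s ≤ y) with h | h
      · rw [Set.indicator_of_mem (by exact h), Set.indicator_of_mem (by exact h)]
      · rw [Set.indicator_of_notMem (by exact h), Set.indicator_of_notMem (by exact h)]
    rw [this, MeasureTheory.integral_indicator measurableSet_Ioc]
  have hXint : IntegrableOn (fun s => (∫ r in Ioc (0:ℝ) (τ - s), k' r) * v s) (Ioc 0 τ) := by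
    refine Integrable.mono' ((hv.integrableOn).norm.const_mul (∫ r, ‖k' r‖)) ?_ ?_
    · refine AEStronglyMeasurable.mul ?_ (mv.aestronglyMeasurable.restrict)
      have heq : (fun s => ∫ r in Ioc (0:ℝ) (τ - s), k' r)
          = fun s => ∫ r, Set.indicator {p : ℝ × ℝ | 0 < p.2 ∧ p.2 ≤ p.1}
              (fun p => k' p.2) (τ - s, r) := by
        funext s; rw [hPeq]
      rw [heq]
      exact ((hPsm.measurable.comp (measurable_const.sub measurable_id)).aestronglyMeasurable)
    · refine Eventually.of_forall fun s => ?_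
      rw [norm_mul]
      refine mul_le_mul_of_nonneg_right ?_ (norm_nonneg _)
      calc ‖∫ r in Ioc (0:ℝ) (τ - s), k' r‖ ≤ ∫ r in Ioc (0:ℝ) (τ - s), ‖k' r‖ :=
            norm_integral_le_integral_norm _
        _ ≤ ∫ r, ‖k' r‖ := setIntegral_le_integral hk.norm
            (Eventually.of_forall fun r => norm_nonneg _)
  have hconvint : IntegrableOn (fun σ => ∫ s in Ioc (0:ℝ) σ, k' (σ - s) * v s) (Ioc 0 τ) :=
    (conv_intOn hk hv mk' mv T).mono_set (fun x hx => ⟨hx.1.le, hx.2.trans hT⟩)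
  rw [intervalIntegral.integral_of_le h0, intervalIntegral.integral_of_le h0]
  calc ∫ s in Ioc (0:ℝ) τ, k (τ - s) * v s
      = ∫ s in Ioc (0:ℝ) τ, (k 0 * v s + (∫ r in Ioc (0:ℝ) (τ - s), k' r) * v s) := by
        refine setIntegral_congr_fun measurableSet_Ioc fun s hs => ?_
        have hmem : τ - s ∈ Icc (0:ℝ) T := ⟨by linarith [hs.2], by linarith [hs.1]⟩
        rw [hkac _ hmem, intervalIntegral.integral_of_le (by linarith [hs.2] : (0:ℝ) ≤ τ - s)]
        ring
    _ = (∫ s in Ioc (0:ℝ) τ, k 0 * v s)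
          + ∫ s in Ioc (0:ℝ) τ, (∫ r in Ioc (0:ℝ) (τ - s), k' r) * v s :=
        integral_add ((hv.integrableOn).const_mul _) hXint
    _ = ∫ σ in Ioc (0:ℝ) τ, (k 0 * v σ + ∫ s in Ioc (0:ℝ) σ, k' (σ - s) * v s) := by
        rw [← fubini_tri k' v hk hv mk' mv τ h0]
        exact (integral_add ((hv.integrableOn).const_mul _) hconvint).symm

lemma core (T : ℝ) (k : ℝ → ℝ)
    (mk' : Measurable k') (mv : Measurable v)
    (hk : Integrable k' volume) (hv : Integrable v volume)
    (hkac : ∀ t ∈ Icc (0:ℝ) T, k t = k 0 + ∫ s in (0:ℝ)..t, k' s) :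
    ∀ᵐ t ∂(volume.restrict (Ioo 0 T)),
      HasDerivAt (fun τ => ∫ s in (0:ℝ)..τ, k (τ - s) * v s)
        (k 0 * v t + ∫ s in Ioc (0:ℝ) t, k' (t - s) * v s) t := by
  set fconv : ℝ → ℝ := fun σ => k 0 * v σ + ∫ s in Ioc (0:ℝ) σ, k' (σ - s) * v s with hfconv
  have hfint : IntegrableOn fconv (Icc 0 T) :=
    ((hv.integrableOn).const_mul _).add (conv_intOn hk hv mk' mv T)
  have hind : Integrable (Set.indicator (Icc (0:ℝ) T) fconv) volume :=
    (integrable_indicator_iff measurableSet_Icc).2 hfint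
  have hFTC := aeFTC _ hind
  filter_upwards [ae_restrict_of_ae hFTC, ae_restrict_mem measurableSet_Ioo] with t hD ht
  have htIcc : t ∈ Icc (0:ℝ) T := ⟨ht.1.le, ht.2.le⟩
  have hGF : (fun τ => ∫ s in (0:ℝ)..τ, k (τ - s) * v s)
      =ᶠ[𝓝 t] (fun τ => ∫ σ in (0:ℝ)..τ, Set.indicator (Icc (0:ℝ) T) fconv σ) := by
    filter_upwards [isOpen_Ioo.mem_nhds ht] with τ hτ
    rw [conv_primitive T k mk' mv hk hv hkac τ ⟨hτ.1.le, hτ.2.le⟩]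
    refine intervalIntegral.integral_congr fun σ hσ => ?_
    rw [uIcc_of_le hτ.1.le] at hσ
    have hmem' : σ ∈ Icc (0:ℝ) T := ⟨hσ.1, hσ.2.trans hτ.2.le⟩
    rw [Set.indicator_of_mem hmem' fconv]
  have hres := hD.congr_of_eventuallyEq hGF
  rw [Set.indicator_of_mem htIcc] at hres
  exact hres

end Aux

/-- Let `k ∈ W^{1,1}([0,T])` be nonnegative and nonincreasing on `[0,T]`,
and `u ∈ L²([0,T])`. Then for a.e. `t ∈ (0,T)`:
`u(t)⁻ (k*u)'(t) ≤ -(1/2) (k*(u⁻)²)'(t)`, where `y⁻ = max (-y) 0`. -/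
theorem statement2
    (T : ℝ) (hT : 0 < T)
    (k k' : ℝ → ℝ)
    (hk'int : IntegrableOn k' (Icc 0 T))
    (hkac : ∀ t ∈ Icc (0 : ℝ) T, k t = k 0 + ∫ s in (0 : ℝ)..t, k' s)
    (hknonneg : ∀ t ∈ Icc (0 : ℝ) T, 0 ≤ k t)
    (hkmono : AntitoneOn k (Icc 0 T))
    (u : ℝ → ℝ) (hu : MemLp u 2 (volume.restrict (Icc 0 T))) :
    ∀ᵐ t ∂(volume.restrict (Ioo 0 T)),
      max (-(u t)) 0 * deriv (fun τ => ∫ s in (0 : ℝ)..τ, k (τ - s) * u s) t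
        ≤ -((1 / 2) * deriv (fun τ => ∫ s in (0 : ℝ)..τ, k (τ - s) * (max (-(u s)) 0) ^ 2) t) := by
  haveI : IsFiniteMeasure (volume.restrict (Icc (0:ℝ) T)) :=
    ⟨by rw [Measure.restrict_apply_univ]; exact measure_Icc_lt_top⟩
  obtain ⟨k'₀, hk'₀sm, hk'₀eq⟩ := hk'int.aestronglyMeasurable
  obtain ⟨u₀, hu₀sm, hu₀eq⟩ := hu.aestronglyMeasurable
  set K' : ℝ → ℝ := Set.indicator (Icc 0 T) k'₀ with hK'def
  set U : ℝ → ℝ := Set.indicator (Icc 0 T) u₀ with hUdef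
  have mK' : Measurable K' := (hk'₀sm.measurable).indicator measurableSet_Icc
  have mU : Measurable U := (hu₀sm.measurable).indicator measurableSet_Icc
  have haeIcc : ∀ᵐ x ∂(volume.restrict (Icc (0:ℝ) T)), x ∈ Icc (0:ℝ) T :=
    ae_restrict_mem measurableSet_Icc
  have hK'ae : k' =ᵐ[volume.restrict (Icc (0:ℝ) T)] K' := by
    filter_upwards [hk'₀eq, haeIcc] with x h1 h2
    rw [hK'def, Set.indicator_of_mem h2]; exact h1
  have hUae : u =ᵐ[volume.restrict (Icc (0:ℝ) T)] U := by
    filter_upwards [hu₀eq, haeIcc] with x h1 h2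
    rw [hUdef, Set.indicator_of_mem h2]; exact h1
  have hK'int : Integrable K' volume :=
    (integrable_indicator_iff measurableSet_Icc).2 (hk'int.congr hk'₀eq)
  have hUint : Integrable U volume :=
    (integrable_indicator_iff measurableSet_Icc).2 ((hu.ae_eq hu₀eq).integrable one_le_two)
  set W : ℝ → ℝ := fun s => max (-(U s)) 0 ^ 2 with hWdef
  have mW : Measurable W := ((mU.neg.max measurable_const).pow_const 2)
  have hWint : Integrable W volume := by
    have h1 : W = Set.indicator (Icc (0:ℝ) T) (fun s => max (-(u₀ s)) 0 ^ 2) := by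
      funext s
      by_cases h : s ∈ Icc (0:ℝ) T
      · rw [hWdef]
        simp only [hUdef, Set.indicator_of_mem h]
      · simp [hWdef, hUdef, Set.indicator_of_notMem h]
    rw [h1]
    refine (integrable_indicator_iff measurableSet_Icc).2 ?_
    have hsq : Integrable (fun x => u₀ x ^ 2) (volume.restrict (Icc 0 T)) :=
      (hu.ae_eq hu₀eq).integrable_sq
    refine hsq.mono'
      ((hu₀sm.measurable.neg.max measurable_const).pow_const 2).aestronglyMeasurable ?_
    refine Eventually.of_forall fun x => ?_
    rw [Real.norm_eq_abs, abs_of_nonneg (by positivity)]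
    rcases max_cases (-(u₀ x)) 0 with ⟨h1, _⟩ | ⟨h1, _⟩ <;> rw [h1] <;>
      nlinarith [sq_nonneg (u₀ x)]
  have hkacK : ∀ t ∈ Icc (0:ℝ) T, k t = k 0 + ∫ s in (0:ℝ)..t, K' s := by
    intro t ht
    rw [hkac t ht]
    congr 1
    rw [intervalIntegral.integral_of_le ht.1, intervalIntegral.integral_of_le ht.1]
    refine integral_congr_ae (ae_restrict_of_ae_restrict_of_subset ?_ hK'ae)
    exact fun x hx => ⟨hx.1.le, hx.2.trans ht.2⟩
  -- `K' ≤ 0` almost everywhere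
  have hK'le : ∀ᵐ σ ∂(volume : Measure ℝ), K' σ ≤ 0 := by
    have hnull : (volume ({0, T} : Set ℝ)) = 0 :=
      (Set.finite_singleton T |>.insert 0).measure_zero volume
    filter_upwards [aeFTC K' hK'int, compl_mem_ae_iff.2 hnull] with σ hD hσ
    by_cases hmem : σ ∈ Icc (0:ℝ) T
    · simp only [Set.mem_compl_iff, Set.mem_insert_iff, Set.mem_singleton_iff, not_or] at hσ
      have hIoo : σ ∈ Ioo (0:ℝ) T :=
        ⟨lt_of_le_of_ne hmem.1 (Ne.symm hσ.1), lt_of_le_of_ne hmem.2 hσ.2⟩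
      have htend : Tendsto (slope (fun τ => ∫ s in (0:ℝ)..τ, K' s) σ) (𝓝[>] σ) (𝓝 (K' σ)) :=
        (hasDerivAt_iff_tendsto_slope.1 hD).mono_left
          (nhdsWithin_mono σ (fun x hx => ne_of_gt hx))
      refine le_of_tendsto htend ?_
      filter_upwards [Ioo_mem_nhdsGT_of_mem (⟨le_refl σ, hIoo.2⟩ : σ ∈ Ico σ T)] with x hx
      have hkx := hkacK x ⟨(hIoo.1.trans hx.1).le, hx.2.le⟩
      have hkσ := hkacK σ ⟨hIoo.1.le, hIoo.2.le⟩
      have hkle : k x ≤ k σ := hkmono ⟨hIoo.1.le, hIoo.2.le⟩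
        ⟨(hIoo.1.trans hx.1).le, hx.2.le⟩ hx.1.le
      rw [slope_def_field]
      apply div_nonpos_of_nonpos_of_nonneg
      · linarith
      · linarith [hx.1]
    · rw [hK'def, Set.indicator_of_notMem hmem]
  have hcoreU := core T k mK' mU hK'int hUint hkacK
  have hcoreW := core T k mK' mW hK'int hWint hkacK
  have hsliceU := conv_slice hK'int hUint mK' mU T
  have hsliceW := conv_slice hK'int hWint mK' mW T
  have hUae' : ∀ᵐ t ∂(volume.restrict (Ioo 0 T)), u t = U t :=
    ae_restrict_of_ae_restrict_of_subset Ioo_subset_Icc_self hUae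
  filter_upwards [hcoreU, hcoreW, hsliceU, hsliceW, hUae', ae_restrict_mem measurableSet_Ioo]
    with t hDU hDW hSU hSW hut ht
  have hmemIoo : Ioo (0:ℝ) T ∈ 𝓝 t := isOpen_Ioo.mem_nhds ht
  have hsub : ∀ τ ∈ Ioo (0:ℝ) T, ∀ x ∈ Ioc (0:ℝ) τ, x ∈ Icc (0:ℝ) T :=
    fun τ hτ x hx => ⟨hx.1.le, hx.2.trans hτ.2.le⟩
  have hD1 : deriv (fun τ => ∫ s in (0:ℝ)..τ, k (τ - s) * u s) t
      = k 0 * U t + ∫ s in Ioc (0:ℝ) t, K' (t - s) * U s := by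
    have he : (fun τ => ∫ s in (0:ℝ)..τ, k (τ - s) * u s)
        =ᶠ[𝓝 t] (fun τ => ∫ s in (0:ℝ)..τ, k (τ - s) * U s) := by
      filter_upwards [hmemIoo] with τ hτ
      rw [intervalIntegral.integral_of_le hτ.1.le, intervalIntegral.integral_of_le hτ.1.le]
      refine integral_congr_ae ?_
      filter_upwards [ae_restrict_of_ae_restrict_of_subset (hsub τ hτ) hUae] with s hs
      rw [hs]
    rw [he.deriv_eq, hDU.deriv]
  have hD2 : deriv (fun τ => ∫ s in (0:ℝ)..τ, k (τ - s) * (max (-(u s)) 0) ^ 2) t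
      = k 0 * W t + ∫ s in Ioc (0:ℝ) t, K' (t - s) * W s := by
    have he : (fun τ => ∫ s in (0:ℝ)..τ, k (τ - s) * (max (-(u s)) 0) ^ 2)
        =ᶠ[𝓝 t] (fun τ => ∫ s in (0:ℝ)..τ, k (τ - s) * W s) := by
      filter_upwards [hmemIoo] with τ hτ
      rw [intervalIntegral.integral_of_le hτ.1.le, intervalIntegral.integral_of_le hτ.1.le]
      refine integral_congr_ae ?_
      filter_upwards [ae_restrict_of_ae_restrict_of_subset (hsub τ hτ) hUae] with s hs
      rw [hWdef]
      simp only [hs]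
    rw [he.deriv_eq, hDW.deriv]
  rw [hD1, hD2, hut]
  -- the pointwise inequality
  set a : ℝ := max (-(U t)) 0 with hadef
  have ha : 0 ≤ a := le_max_right _ _
  have hWt : W t = a ^ 2 := rfl
  have haU : a * U t = -(a ^ 2) := by
    rcases max_cases (-(U t)) 0 with ⟨h1, _⟩ | ⟨h1, _⟩ <;> rw [hadef, h1] <;> ring
  have htIcc : t ∈ Icc (0:ℝ) T := ⟨ht.1.le, ht.2.le⟩
  have hK'comp : Integrable (fun s : ℝ => K' (t - s)) (volume.restrict (Ioc 0 t)) :=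
    (hK'int.comp_sub_left t).integrableOn
  have hK'negae : ∀ᵐ s ∂(volume.restrict (Ioc (0:ℝ) t)), K' (t - s) ≤ 0 :=
    ae_restrict_of_ae
      ((Measure.measurePreserving_sub_left volume t).quasiMeasurePreserving.ae hK'le)
  have hmono : ∫ s in Ioc (0:ℝ) t, a * (K' (t - s) * U s)
      ≤ ∫ s in Ioc (0:ℝ) t,
          ((-(1/2)) * (K' (t - s) * W s) + ((-(1/2)) * a ^ 2) * K' (t - s)) := by
    refine integral_mono_ae (hSU.const_mul a)
      ((hSW.const_mul _).add (hK'comp.const_mul _)) ?_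
    filter_upwards [hK'negae] with s hs
    have hb : 0 ≤ max (-(U s)) 0 := le_max_right _ _
    have hUb : -(max (-(U s)) 0) ≤ U s := by
      rw [neg_le]; exact le_max_left _ _
    have hWs : W s = max (-(U s)) 0 ^ 2 := rfl
    rw [hWs]
    set b := max (-(U s)) 0
    have hkey : 0 ≤ a * U s + (1/2) * b ^ 2 + (1/2) * a ^ 2 := by
      nlinarith [sq_nonneg (a - b), mul_le_mul_of_nonneg_left hUb ha]
    nlinarith [mul_nonneg (neg_nonneg.2 hs) hkey]
  have hI1 : ∫ s in Ioc (0:ℝ) t, a * (K' (t - s) * U s)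
      = a * ∫ s in Ioc (0:ℝ) t, K' (t - s) * U s := integral_const_mul a _
  have hIsplit : ∫ s in Ioc (0:ℝ) t,
      ((-(1/2)) * (K' (t - s) * W s) + ((-(1/2)) * a ^ 2) * K' (t - s))
      = (-(1/2)) * (∫ s in Ioc (0:ℝ) t, K' (t - s) * W s)
        + ((-(1/2)) * a ^ 2) * ∫ s in Ioc (0:ℝ) t, K' (t - s) := by
    rw [integral_add (hSW.const_mul _) (hK'comp.const_mul _),
      integral_const_mul, integral_const_mul]
  have hC3 : ∫ s in Ioc (0:ℝ) t, K' (t - s) = k t - k 0 := by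
    rw [← intervalIntegral.integral_of_le ht.1.le,
      intervalIntegral.integral_comp_sub_left K' t, sub_self, sub_zero]
    have := hkacK t htIcc
    linarith
  have hkt : 0 ≤ k t := hknonneg t htIcc
  rw [hI1, hIsplit, hC3] at hmono
  rw [hWt]
  calc a * (k 0 * U t + ∫ s in Ioc (0:ℝ) t, K' (t - s) * U s)
      = k 0 * (a * U t) + a * ∫ s in Ioc (0:ℝ) t, K' (t - s) * U s := by ring
    _ = k 0 * (-(a ^ 2)) + a * ∫ s in Ioc (0:ℝ) t, K' (t - s) * U s := by rw [haU]
    _ ≤ k 0 * (-(a ^ 2)) + ((-(1/2)) * (∫ s in Ioc (0:ℝ) t, K' (t - s) * W s)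
        + ((-(1/2)) * a ^ 2) * (k t - k 0)) := by linarith
    _ ≤ -((1 / 2) * (k 0 * a ^ 2 + ∫ s in Ioc (0:ℝ) t, K' (t - s) * W s)) := by
        nlinarith [mul_nonneg (sq_nonneg a) hkt]
end

section
/- Let T>0 and α ∈ (0,1). Suppose v : [0,T] → ℝ is absolutely continuous with v(0) = 0 and v̇ ∈ L¹([0,T]), and let φ ∈ C¹([0,T]). Then for almost every t ∈ (0,T): (g_α*(φ·v̇))(t) = φ(t)·(g_α*v̇)(t) + ∫₀ᵗ v(σ)·[ ((1−α)/Γ(α))·(t−σ)^{α−2}·(φ(t)−φ(σ)) − g_α(t−σ)·φ̇(σ) ] dσ, where the integrand is ∂_σ( g_α(t−σ)·(φ(t)−φ(σ)) ). -/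
open MeasureTheory Set Filter Topology

/-- The standard kernel `g_γ(t) = t^{γ-1}/Γ(γ)`. -/
noncomputable def gker (γ t : ℝ) : ℝ := t ^ (γ - 1) / Real.Gamma γ

lemma statement3_key
    (T : ℝ) (hT : 0 < T) (α : ℝ) (hα0 : 0 < α) (hα1 : α < 1)
    (v v' : ℝ → ℝ)
    (hv'int : IntegrableOn v' (Icc 0 T))
    (hvac : ∀ t ∈ Icc (0 : ℝ) T, v t = ∫ s in (0 : ℝ)..t, v' s)
    (φ φ' : ℝ → ℝ)
    (hφ : ∀ t ∈ Icc (0 : ℝ) T, HasDerivAt φ (φ' t) t)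
    (hφ' : ContinuousOn φ' (Icc 0 T))
    (t : ℝ) (ht : t ∈ Ioo 0 T)
    (Hint : IntegrableOn (fun s => (t - s) ^ (α - 1) * v' s) (Ioo 0 t)) :
    (∫ s in (0 : ℝ)..t, gker α (t - s) * (φ s * v' s))
      = φ t * (∫ s in (0 : ℝ)..t, gker α (t - s) * v' s)
        + ∫ σ in (0 : ℝ)..t,
            v σ * (((1 - α) / Real.Gamma α) * (t - σ) ^ (α - 2) * (φ t - φ σ)
                    - gker α (t - σ) * φ' σ) := by
  obtain ⟨ht0, htT⟩ := ht
  have hΓ : 0 < Real.Gamma α := Real.Gamma_pos_of_pos hα0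
  have hsub : Ioo (0:ℝ) t ⊆ Icc 0 T := fun x hx => ⟨hx.1.le, hx.2.le.trans htT.le⟩
  -- continuity of φ
  have hφc : ContinuousOn φ (Icc 0 T) := fun x hx => (hφ x hx).continuousAt.continuousWithinAt
  obtain ⟨Cφ, hCφ⟩ := isCompact_Icc.exists_bound_of_continuousOn hφ'
  have hCφ0 : 0 ≤ Cφ := le_trans (norm_nonneg _) (hCφ 0 ⟨le_rfl, hT.le⟩)
  have hlip : ∀ a ∈ Icc (0:ℝ) T, ∀ b ∈ Icc (0:ℝ) T, |φ b - φ a| ≤ Cφ * |b - a| := by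
    intro a ha b hb
    simpa using (convex_Icc (0:ℝ) T).norm_image_sub_le_of_norm_hasDerivWithin_le
      (fun x hx => (hφ x hx).hasDerivWithinAt) (fun x hx => hCφ x hx) ha hb
  obtain ⟨Mφ, hMφ⟩ := isCompact_Icc.exists_bound_of_continuousOn hφc
  -- abbreviations
  set K' : ℝ → ℝ := fun σ =>
    (1 - α) / Real.Gamma α * (t - σ) ^ (α - 2) * (φ t - φ σ)
      - (t - σ) ^ (α - 1) / Real.Gamma α * φ' σ with hK'def
  -- measurability / continuity facts on Ioo 0 t
  have hc2 : ContinuousOn (fun σ : ℝ => (t - σ) ^ (α - 1)) (Ioo 0 t) :=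
    (continuousOn_const.sub continuousOn_id).rpow_const
      (fun s hs => Or.inl (sub_ne_zero.mpr (ne_of_gt hs.2)))
  have hc1 : ContinuousOn (fun σ : ℝ => (t - σ) ^ (α - 2)) (Ioo 0 t) :=
    (continuousOn_const.sub continuousOn_id).rpow_const
      (fun s hs => Or.inl (sub_ne_zero.mpr (ne_of_gt hs.2)))
  have hcφ : ContinuousOn φ (Ioo 0 t) := hφc.mono hsub
  have hcφ' : ContinuousOn φ' (Ioo 0 t) := hφ'.mono hsub
  have mv' : AEStronglyMeasurable v' (volume.restrict (Ioo 0 t)) :=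
    hv'int.aestronglyMeasurable.mono_measure (Measure.restrict_mono hsub le_rfl)
  have contK' : ContinuousOn K' (Ioo 0 t) := by
    rw [hK'def]
    exact ((continuousOn_const.mul hc1).mul (continuousOn_const.sub hcφ)).sub
      ((hc2.div_const _).mul hcφ')
  -- integrability of the reflected power kernel
  have Hrpow : IntegrableOn (fun σ : ℝ => (t - σ) ^ (α - 1)) (Ioo 0 t) := by
    have h1 : IntervalIntegrable (fun x : ℝ => x ^ (α - 1)) volume 0 t :=
      intervalIntegral.intervalIntegrable_rpow' (by linarith)
    have h2 : IntervalIntegrable (fun x : ℝ => (t - x) ^ (α - 1)) volume 0 t := by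
      simpa using (h1.comp_sub_left t).symm
    exact ((intervalIntegrable_iff_integrableOn_Ioc_of_le ht0.le).mp h2).mono_set
      Ioo_subset_Ioc_self
  -- integrability of K'
  have HK'int : IntegrableOn K' (Ioo 0 t) := by
    refine Integrable.mono' (Hrpow.const_mul ((2 - α) * Cφ / Real.Gamma α))
      (contK'.aestronglyMeasurable measurableSet_Ioo) ?_
    filter_upwards [ae_restrict_mem measurableSet_Ioo] with σ hσ
    have hts : 0 < t - σ := sub_pos.mpr hσ.2
    have hσT : σ ∈ Icc (0:ℝ) T := hsub hσ
    have htTmem : t ∈ Icc (0:ℝ) T := ⟨ht0.le, htT.le⟩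
    have hp2 : (0:ℝ) < (t - σ) ^ (α - 2) := Real.rpow_pos_of_pos hts _
    have hp1 : (0:ℝ) < (t - σ) ^ (α - 1) := Real.rpow_pos_of_pos hts _
    have hpow : (t - σ) ^ (α - 2) * (t - σ) = (t - σ) ^ (α - 1) := by
      rw [show α - 1 = (α - 2) + 1 by ring, Real.rpow_add_one hts.ne']
    have hphi : |φ t - φ σ| ≤ Cφ * (t - σ) := by
      have := hlip σ hσT t htTmem
      rwa [abs_of_pos hts] at this
    have hphi' : |φ' σ| ≤ Cφ := hCφ σ hσT
    rw [hK'def]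
    simp only [Real.norm_eq_abs]
    calc |(1 - α) / Real.Gamma α * (t - σ) ^ (α - 2) * (φ t - φ σ)
            - (t - σ) ^ (α - 1) / Real.Gamma α * φ' σ|
        ≤ |(1 - α) / Real.Gamma α * (t - σ) ^ (α - 2) * (φ t - φ σ)|
            + |(t - σ) ^ (α - 1) / Real.Gamma α * φ' σ| := abs_sub _ _
      _ ≤ (1 - α) / Real.Gamma α * (t - σ) ^ (α - 2) * (Cφ * (t - σ))
            + (t - σ) ^ (α - 1) / Real.Gamma α * Cφ := by
          gcongr
          · rw [abs_mul, abs_mul,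
              abs_of_nonneg (div_nonneg (by linarith : (0:ℝ) ≤ 1 - α) hΓ.le),
              abs_of_pos hp2]
            exact mul_le_mul_of_nonneg_left hphi
              (mul_nonneg (div_nonneg (by linarith) hΓ.le) hp2.le)
          · rw [abs_mul,
              abs_of_nonneg (div_nonneg hp1.le hΓ.le)]
            exact mul_le_mul_of_nonneg_left hphi' (div_nonneg hp1.le hΓ.le)
      _ = (2 - α) * Cφ / Real.Gamma α * (t - σ) ^ (α - 1) := by
          rw [← hpow]; ring
  -- integrability of kernel * v'
  have Hgv' : IntegrableOn (fun s => (t - s) ^ (α - 1) / Real.Gamma α * v' s) (Ioo 0 t) :=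
    (Hint.div_const (Real.Gamma α)).congr (Filter.Eventually.of_forall fun s => by ring)
  have Hgφv' : IntegrableOn (fun s => (t - s) ^ (α - 1) / Real.Gamma α * (φ s * v' s))
      (Ioo 0 t) := by
    refine Integrable.mono' (Hgv'.norm.const_mul Mφ)
      (((hc2.div_const _).aestronglyMeasurable measurableSet_Ioo).mul
        ((hcφ.aestronglyMeasurable measurableSet_Ioo).mul mv')) ?_
    filter_upwards [ae_restrict_mem measurableSet_Ioo] with s hs
    have h1 : ‖(t - s) ^ (α - 1) / Real.Gamma α * (φ s * v' s)‖
        = ‖φ s‖ * ‖(t - s) ^ (α - 1) / Real.Gamma α * v' s‖ := by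
      simp only [Real.norm_eq_abs, abs_mul]; ring
    rw [h1]
    exact mul_le_mul_of_nonneg_right (hMφ s (hsub hs)) (norm_nonneg _)
  -- FTC with singular endpoint
  have HFTC : ∀ s ∈ Ioo (0:ℝ) t, (∫ σ in Ioo s t, K' σ)
      = - ((t - s) ^ (α - 1) / Real.Gamma α * (φ t - φ s)) := by
    intro s hs
    obtain ⟨hs0, hst⟩ := hs
    have hK'ii : IntervalIntegrable K' volume s t :=
      (intervalIntegrable_iff_integrableOn_Ioc_of_le hst.le).mpr
        ((integrableOn_Ioc_iff_integrableOn_Ioo).mpr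
          (HK'int.mono_set fun x hx => ⟨hs0.trans hx.1, hx.2⟩))
    have hJcont : ContinuousOn (fun u => ∫ σ in s..u, K' σ) (Icc s t) := by
      have := intervalIntegral.continuousOn_primitive_interval' hK'ii
        (left_mem_uIcc (a := s) (b := t))
      rwa [uIcc_of_le hst.le] at this
    have e1 : Tendsto (fun u => ∫ σ in s..u, K' σ) (𝓝[Ioo s t] t)
        (𝓝 (∫ σ in s..t, K' σ)) :=
      (hJcont t (right_mem_Icc.mpr hst.le)).mono Ioo_subset_Icc_self
    have hFTCu : ∀ u ∈ Ioo s t, (∫ σ in s..u, K' σ)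
        = (t - u) ^ (α - 1) / Real.Gamma α * (φ t - φ u)
          - (t - s) ^ (α - 1) / Real.Gamma α * (φ t - φ s) := by
      intro u hu
      refine intervalIntegral.integral_eq_sub_of_hasDerivAt
        (f := fun x => (t - x) ^ (α - 1) / Real.Gamma α * (φ t - φ x)) (fun σ hσ => ?_)
        (hK'ii.mono_set ?_)
      · rw [uIcc_of_le hu.1.le] at hσ
        have hσ0 : 0 < σ := lt_of_lt_of_le hs0 hσ.1
        have hσt : σ < t := lt_of_le_of_lt hσ.2 hu.2
        have hts : 0 < t - σ := sub_pos.mpr hσt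
        have hd1 : HasDerivAt (fun x : ℝ => t - x) (-1) σ := (hasDerivAt_id σ).const_sub t
        have hd2 : HasDerivAt (fun x : ℝ => (t - x) ^ (α - 1))
            ((α - 1) * (t - σ) ^ (α - 1 - 1) * -1) σ := by
          have := (Real.hasDerivAt_rpow_const (x := t - σ) (p := α - 1)
            (Or.inl hts.ne')).comp σ hd1
          simpa [Function.comp_def] using this
        have hd3 := hd2.div_const (Real.Gamma α)
        have hd4 : HasDerivAt (fun x => φ t - φ x) (-φ' σ) σ :=
          (hφ σ ⟨hσ0.le, hσt.le.trans htT.le⟩).const_sub (φ t)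
        have hprod := hd3.mul hd4
        have hKσ : K' σ = (α - 1) * (t - σ) ^ (α - 1 - 1) * -1 / Real.Gamma α * (φ t - φ σ)
            + (t - σ) ^ (α - 1) / Real.Gamma α * -φ' σ := by
          simp only [hK'def]
          rw [show α - 1 - 1 = α - 2 by ring]
          ring
        rw [hKσ]
        exact hprod
      · rw [uIcc_of_le hst.le, uIcc_of_le hu.1.le]
        exact Icc_subset_Icc le_rfl hu.2.le
    have h0 : Tendsto (fun u : ℝ => t - u) (𝓝[Ioo s t] t) (𝓝 0) := by
      have h' : Tendsto (fun u : ℝ => t - u) (𝓝 t) (𝓝 (t - t)) :=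
        (continuous_const.sub continuous_id).tendsto t
      rw [sub_self] at h'
      exact h'.mono_left nhdsWithin_le_nhds
    have glim : Tendsto (fun u => Cφ / Real.Gamma α * (t - u) ^ α) (𝓝[Ioo s t] t) (𝓝 0) := by
      have h1 : Tendsto (fun u : ℝ => (t - u) ^ α) (𝓝[Ioo s t] t) (𝓝 ((0:ℝ) ^ α)) :=
        ((Real.continuousAt_rpow_const 0 α (Or.inr hα0.le)).tendsto).comp h0
      rw [Real.zero_rpow hα0.ne'] at h1
      simpa using h1.const_mul (Cφ / Real.Gamma α)
    have hKlim : Tendsto (fun u => (t - u) ^ (α - 1) / Real.Gamma α * (φ t - φ u))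
        (𝓝[Ioo s t] t) (𝓝 0) := by
      refine squeeze_zero_norm' ?_ glim
      filter_upwards [eventually_mem_nhdsWithin] with u hu
      have htu : 0 < t - u := sub_pos.mpr hu.2
      have huT : u ∈ Icc (0:ℝ) T := ⟨(hs0.trans hu.1).le, hu.2.le.trans htT.le⟩
      have hpow : (t - u) ^ (α - 1) * (t - u) = (t - u) ^ α := by
        rw [← Real.rpow_add_one htu.ne' (α - 1)]
        congr 1; ring
      rw [Real.norm_eq_abs, abs_mul,
        abs_of_nonneg (div_nonneg (Real.rpow_pos_of_pos htu _).le hΓ.le)]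
      calc (t - u) ^ (α - 1) / Real.Gamma α * |φ t - φ u|
          ≤ (t - u) ^ (α - 1) / Real.Gamma α * (Cφ * (t - u)) := by
            refine mul_le_mul_of_nonneg_left ?_
              (div_nonneg (Real.rpow_pos_of_pos htu _).le hΓ.le)
            have := hlip u huT t ⟨ht0.le, htT.le⟩
            rwa [abs_of_pos htu] at this
        _ = Cφ / Real.Gamma α * (t - u) ^ α := by rw [← hpow]; ring
    have e2 : Tendsto (fun u => ∫ σ in s..u, K' σ) (𝓝[Ioo s t] t)
        (𝓝 (0 - (t - s) ^ (α - 1) / Real.Gamma α * (φ t - φ s))) := by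
      have h2 := hKlim.sub (tendsto_const_nhds
        (x := (t - s) ^ (α - 1) / Real.Gamma α * (φ t - φ s)) (f := 𝓝[Ioo s t] t))
      refine h2.congr' ?_
      filter_upwards [eventually_mem_nhdsWithin] with u hu
      exact (hFTCu u hu).symm
    haveI : (𝓝[Ioo s t] t).NeBot := right_nhdsWithin_Ioo_neBot hst
    have hval := tendsto_nhds_unique e1 e2
    rw [← MeasureTheory.integral_Ioc_eq_integral_Ioo, ← intervalIntegral.integral_of_le hst.le,
      hval, zero_sub]
  -- Fubini
  have mv'int : IntegrableOn v' (Ioo 0 t) := hv'int.mono_set hsub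
  have hS : MeasurableSet {p : ℝ × ℝ | p.2 < p.1} :=
    measurableSet_lt measurable_snd measurable_fst
  have hbase : Integrable (fun p : ℝ × ℝ => K' p.1 * v' p.2)
      ((volume.restrict (Ioo 0 t)).prod (volume.restrict (Ioo 0 t))) :=
    HK'int.mul_prod mv'int
  have hfind : Integrable ({p : ℝ × ℝ | p.2 < p.1}.indicator (fun p => K' p.1 * v' p.2))
      ((volume.restrict (Ioo 0 t)).prod (volume.restrict (Ioo 0 t))) := hbase.indicator hS
  have hswap := MeasureTheory.integral_integral_swap
      (f := fun σ s => ({p : ℝ × ℝ | p.2 < p.1}.indicator (fun p => K' p.1 * v' p.2)) (σ, s))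
      (by exact hfind)
  have hL : (∫ σ in Ioo 0 t, (∫ s in Ioo 0 t,
        ({p : ℝ × ℝ | p.2 < p.1}.indicator (fun p => K' p.1 * v' p.2)) (σ, s)))
      = ∫ σ in Ioo 0 t, v σ * K' σ := by
    refine setIntegral_congr_fun measurableSet_Ioo (fun σ hσ => ?_)
    have hfs : (fun s => ({p : ℝ × ℝ | p.2 < p.1}.indicator (fun p => K' p.1 * v' p.2)) (σ, s))
        = (Iio σ).indicator (fun s => K' σ * v' s) := by
      ext s
      by_cases h : s < σ <;> simp [Set.indicator_apply, Set.mem_setOf_eq, h]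
    rw [hfs, MeasureTheory.integral_indicator measurableSet_Iio,
      Measure.restrict_restrict measurableSet_Iio]
    have hset : Iio σ ∩ Ioo 0 t = Ioo 0 σ := by
      ext x
      simp only [mem_inter_iff, mem_Iio, mem_Ioo]
      constructor
      · rintro ⟨h1, h2, _⟩; exact ⟨h2, h1⟩
      · rintro ⟨h1, h2⟩; exact ⟨h2, h1, h2.trans hσ.2⟩
    rw [hset, integral_const_mul]
    have hv : v σ = ∫ s in Ioo 0 σ, v' s := by
      rw [hvac σ (hsub hσ), intervalIntegral.integral_of_le hσ.1.le,
        MeasureTheory.integral_Ioc_eq_integral_Ioo]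
    rw [← hv]; ring
  have hR : (∫ s in Ioo 0 t, (∫ σ in Ioo 0 t,
        ({p : ℝ × ℝ | p.2 < p.1}.indicator (fun p => K' p.1 * v' p.2)) (σ, s)))
      = ∫ s in Ioo 0 t, v' s * -((t - s) ^ (α - 1) / Real.Gamma α * (φ t - φ s)) := by
    refine setIntegral_congr_fun measurableSet_Ioo (fun s hs => ?_)
    have hfs : (fun σ => ({p : ℝ × ℝ | p.2 < p.1}.indicator (fun p => K' p.1 * v' p.2)) (σ, s))
        = (Ioi s).indicator (fun σ => K' σ * v' s) := by
      ext σ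
      by_cases h : s < σ <;> simp [Set.indicator_apply, Set.mem_setOf_eq, h, Set.mem_Ioi]
    rw [hfs, MeasureTheory.integral_indicator measurableSet_Ioi,
      Measure.restrict_restrict measurableSet_Ioi]
    have hset : Ioi s ∩ Ioo 0 t = Ioo s t := by
      ext x
      simp only [mem_inter_iff, mem_Ioi, mem_Ioo]
      constructor
      · rintro ⟨h1, _, h3⟩; exact ⟨h1, h3⟩
      · rintro ⟨h1, h2⟩; exact ⟨h1, hs.1.trans h1, h2⟩
    rw [hset, MeasureTheory.integral_mul_const, HFTC s hs]
    ring
  have hFub : (∫ σ in Ioo 0 t, v σ * K' σ)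
      = ∫ s in Ioo 0 t, v' s * -((t - s) ^ (α - 1) / Real.Gamma α * (φ t - φ s)) := by
    rw [← hL, ← hR]; exact hswap
  have hneg : (∫ s in Ioo 0 t, v' s * -((t - s) ^ (α - 1) / Real.Gamma α * (φ t - φ s)))
      = - ∫ σ in Ioo 0 t, (t - σ) ^ (α - 1) / Real.Gamma α * (φ t - φ σ) * v' σ := by
    rw [← MeasureTheory.integral_neg]
    exact setIntegral_congr_fun measurableSet_Ioo (fun σ hσ => by ring)
  have hsplit : (∫ σ in Ioo 0 t, (t - σ) ^ (α - 1) / Real.Gamma α * (φ t - φ σ) * v' σ)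
      = φ t * (∫ σ in Ioo 0 t, (t - σ) ^ (α - 1) / Real.Gamma α * v' σ)
        - ∫ σ in Ioo 0 t, (t - σ) ^ (α - 1) / Real.Gamma α * (φ σ * v' σ) := by
    rw [← integral_const_mul, ← MeasureTheory.integral_sub
      (Hgv'.const_mul (φ t)) Hgφv']
    exact setIntegral_congr_fun measurableSet_Ioo (fun σ hσ => by ring)
  -- final assembly
  simp only [gker]
  rw [intervalIntegral.integral_of_le ht0.le, intervalIntegral.integral_of_le ht0.le,
    intervalIntegral.integral_of_le ht0.le, MeasureTheory.integral_Ioc_eq_integral_Ioo,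
    MeasureTheory.integral_Ioc_eq_integral_Ioo, MeasureTheory.integral_Ioc_eq_integral_Ioo]
  have hgoalC : (∫ σ in Ioo 0 t, v σ * ((1 - α) / Real.Gamma α * (t - σ) ^ (α - 2) * (φ t - φ σ)
        - (t - σ) ^ (α - 1) / Real.Gamma α * φ' σ))
      = ∫ σ in Ioo 0 t, v σ * K' σ := by
    simp only [hK'def]
  rw [hgoalC, hFub, hneg, hsplit]
  ring

/-- Let `T > 0`, `α ∈ (0,1)`, let `v : [0,T] → ℝ` be absolutely continuous
with `v(0) = 0` and `v' ∈ L¹([0,T])`, and let `φ ∈ C¹([0,T])`. Then for a.e. `t ∈ (0,T)`: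
`(g_α*(φ v'))(t) = φ(t)(g_α*v')(t)
  + ∫₀ᵗ v(σ)[((1-α)/Γ(α))(t-σ)^{α-2}(φ(t)-φ(σ)) - g_α(t-σ) φ'(σ)] dσ`. -/
theorem statement3
    (T : ℝ) (hT : 0 < T) (α : ℝ) (hα : α ∈ Ioo (0 : ℝ) 1)
    (v v' : ℝ → ℝ)
    (hv'int : IntegrableOn v' (Icc 0 T))
    (hv0 : v 0 = 0)
    (hvac : ∀ t ∈ Icc (0 : ℝ) T, v t = ∫ s in (0 : ℝ)..t, v' s)
    (φ φ' : ℝ → ℝ)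
    (hφ : ∀ t ∈ Icc (0 : ℝ) T, HasDerivAt φ (φ' t) t)
    (hφ' : ContinuousOn φ' (Icc 0 T)) :
    ∀ᵐ t ∂(volume.restrict (Ioo 0 T)),
      (∫ s in (0 : ℝ)..t, gker α (t - s) * (φ s * v' s))
        = φ t * (∫ s in (0 : ℝ)..t, gker α (t - s) * v' s)
          + ∫ σ in (0 : ℝ)..t,
              v σ * (((1 - α) / Real.Gamma α) * (t - σ) ^ (α - 2) * (φ t - φ σ)
                      - gker α (t - σ) * φ' σ) := by
  obtain ⟨hα0, hα1⟩ := hα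
  have hGint : Integrable ((Ioo (0:ℝ) T).indicator v') volume :=
    (hv'int.mono_set Ioo_subset_Icc_self).integrable_indicator measurableSet_Ioo
  have hFint : Integrable ((Ioo (0:ℝ) T).indicator fun u : ℝ => u ^ (α - 1)) volume := by
    have h1 : IntervalIntegrable (fun x : ℝ => x ^ (α - 1)) volume 0 T :=
      intervalIntegral.intervalIntegrable_rpow' (by linarith)
    exact (((intervalIntegrable_iff_integrableOn_Ioc_of_le hT.le).mp h1).mono_set
      Ioo_subset_Ioc_self).integrable_indicator measurableSet_Ioo
  have hae := MeasureTheory.Integrable.ae_convolution_exists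
    (L := ContinuousLinearMap.mul ℝ ℝ) hGint hFint
  filter_upwards [ae_restrict_of_ae hae, ae_restrict_mem measurableSet_Ioo] with t hconv ht
  refine statement3_key T hT α hα0 hα1 v v' hv'int hvac φ φ' hφ hφ' t ht ?_
  have h1 : IntegrableOn (fun s => (Ioo (0:ℝ) T).indicator v' s *
      (Ioo (0:ℝ) T).indicator (fun u : ℝ => u ^ (α - 1)) (t - s)) (Ioo 0 t) := by
    have := hconv.integrableOn (s := Ioo 0 t)
    simpa [ConvolutionExistsAt] using this
  refine h1.congr_fun (fun s hs => ?_) measurableSet_Ioo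
  have hs1 : s ∈ Ioo (0:ℝ) T := ⟨hs.1, hs.2.trans ht.2⟩
  have hs2 : t - s ∈ Ioo (0:ℝ) T :=
    ⟨sub_pos.mpr hs.2, by have := hs.1; have := ht.2; linarith⟩
  beta_reduce
  rw [Set.indicator_of_mem hs1, Set.indicator_of_mem hs2, mul_comm]
end

section
/- Let T>0 and α ∈ (0,1). Suppose v : [0,T] → ℝ is absolutely continuous with v(0) = 0, v̇ ∈ L¹([0,T]) and v ≥ 0 on [0,T], and let φ ∈ C¹([0,T]) be nondecreasing. Then for almost every t ∈ (0,T): (g_α*(φ·v̇))(t) ≥ φ(t)·(g_α*v̇)(t) − ∫₀ᵗ g_α(t−σ)·φ̇(σ)·v(σ) dσ. -/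
open MeasureTheory Set

lemma gker_nonneg {α x : ℝ} (hα : 0 < α) (hx : 0 ≤ x) : 0 ≤ gker α x := by
  unfold gker
  have := Real.Gamma_pos_of_pos hα
  positivity

lemma gker_anti {α x y : ℝ} (hα0 : 0 < α) (hα1 : α < 1) (hx : 0 < x) (hxy : x ≤ y) :
    gker α y ≤ gker α x := by
  unfold gker
  have hΓ := Real.Gamma_pos_of_pos hα0
  have h := Real.rpow_le_rpow_of_nonpos hx hxy (by linarith : α - 1 ≤ 0)
  exact (div_le_div_iff_of_pos_right hΓ).mpr h

/-- Fubini on a triangle. -/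
lemma tri_swap {a b : ℝ} {f g : ℝ → ℝ}
    (hf : IntegrableOn f (Ioc a b)) (hg : IntegrableOn g (Ioc a b)) :
    IntegrableOn (fun u => g u * ∫ s in Ioc a u, f s) (Ioc a b) ∧
    ∫ s in Ioc a b, f s * ∫ u in Ioc s b, g u
      = ∫ u in Ioc a b, g u * ∫ s in Ioc a u, f s := by
  set μ := volume.restrict (Ioc a b) with hμ
  set F : ℝ × ℝ → ℝ := fun p => if p.1 < p.2 then f p.1 * g p.2 else 0 with hFdef
  have hmeas : MeasurableSet {p : ℝ × ℝ | p.1 < p.2} :=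
    measurableSet_lt measurable_fst measurable_snd
  have hFint : Integrable F (μ.prod μ) := by
    have h0 : Integrable (fun p : ℝ × ℝ => f p.1 * g p.2) (μ.prod μ) := hf.mul_prod hg
    have hFi : F = {p : ℝ × ℝ | p.1 < p.2}.indicator (fun p => f p.1 * g p.2) := by
      ext p; by_cases h : p.1 < p.2 <;> simp [hFdef, h, indicator]
    rw [hFi]
    exact h0.indicator hmeas
  have eq1 : ∀ s ∈ Ioc a b, (∫ u, F (s, u) ∂μ) = f s * ∫ u in Ioc s b, g u := by
    intro s hs
    have h1 : (fun u => F (s, u)) = fun u => f s * (Ioi s).indicator g u := by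
      ext u; by_cases h : s < u <;> simp [hFdef, h, indicator]
    rw [h1, integral_const_mul]
    congr 1
    rw [integral_indicator measurableSet_Ioi, hμ,
      Measure.restrict_restrict measurableSet_Ioi,
      show Ioi s ∩ Ioc a b = Ioc s b by
        ext u
        simp only [mem_inter_iff, mem_Ioi, mem_Ioc]
        exact ⟨fun ⟨h1, _, h3⟩ => ⟨h1, h3⟩, fun ⟨h1, h2⟩ => ⟨h1, hs.1.trans h1, h2⟩⟩]
  have eq2 : ∀ u ∈ Ioc a b, (∫ s, F (s, u) ∂μ) = g u * ∫ s in Ioc a u, f s := by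
    intro u hu
    have h1 : (fun s => F (s, u)) = fun s => (Iio u).indicator f s * g u := by
      ext s; by_cases h : s < u <;> simp [hFdef, h, indicator]
    rw [h1, integral_mul_const, mul_comm]
    congr 1
    rw [integral_indicator measurableSet_Iio, hμ,
      Measure.restrict_restrict measurableSet_Iio]
    rw [show Iio u ∩ Ioc a b = Ioo a u by
      ext s
      simp only [mem_inter_iff, mem_Iio, mem_Ioc, mem_Ioo]
      exact ⟨fun ⟨h1, h2, _⟩ => ⟨h2, h1⟩, fun ⟨h1, h2⟩ => ⟨h2, h1, (le_of_lt h2).trans hu.2⟩⟩]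
    exact (integral_Ioc_eq_integral_Ioo (f := f) (μ := volume)).symm
  have huncurry : Integrable (Function.uncurry fun s u => F (s, u)) (μ.prod μ) := by
    exact hFint
  constructor
  · exact (hFint.integral_prod_right).congr
      (((ae_restrict_mem measurableSet_Ioc).mono eq2))
  · calc ∫ s in Ioc a b, f s * ∫ u in Ioc s b, g u
        = ∫ s, (∫ u, F (s, u) ∂μ) ∂μ :=
          (integral_congr_ae (((ae_restrict_mem measurableSet_Ioc).mono eq1))).symm
      _ = ∫ u, (∫ s, F (s, u) ∂μ) ∂μ := integral_integral_swap huncurry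
      _ = ∫ u in Ioc a b, g u * ∫ s in Ioc a u, f s :=
          integral_congr_ae (((ae_restrict_mem measurableSet_Ioc).mono eq2))

lemma innerA {T t σ α : ℝ} (hα : α ∈ Ioo (0:ℝ) 1) (ht : t ∈ Ioc (0:ℝ) T)
    (hσ : σ ∈ Ico (0:ℝ) t)
    {v v' : ℝ → ℝ}
    (hv'int : IntegrableOn v' (Icc 0 T))
    (hvac : ∀ x ∈ Icc (0 : ℝ) T, v x = ∫ s in (0 : ℝ)..x, v' s)
    (hvnonneg : ∀ x ∈ Icc (0 : ℝ) T, 0 ≤ v x) :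
    ∫ s in Ioc 0 σ, gker α (t - s) * v' s ≤ gker α (t - σ) * v σ := by
  obtain ⟨hα0, hα1⟩ := hα
  have hΓ := Real.Gamma_pos_of_pos hα0
  have hσ0 : 0 ≤ σ := hσ.1
  have hσt : σ < t := hσ.2
  have hσT : σ ≤ T := le_trans hσt.le ht.2
  have htσ : 0 < t - σ := by linarith
  have hsubIcc : Ioc (0:ℝ) σ ⊆ Icc 0 T := fun x hx => ⟨hx.1.le, hx.2.trans hσT⟩
  have hv'σ : IntegrableOn v' (Ioc 0 σ) := hv'int.mono_set hsubIcc
  set c : ℝ → ℝ := fun u => (1 - α) * (t - u) ^ (α - 2) / Real.Gamma α with hcdef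
  have hderivG : ∀ u ∈ Icc (0:ℝ) σ, HasDerivAt (fun x => gker α (t - x)) (c u) u := by
    intro u hu
    have htu : 0 < t - u := by have := hu.2; linarith
    have h1 : HasDerivAt (fun x : ℝ => t - x) (-1) u := (hasDerivAt_id u).const_sub t
    have h2 : HasDerivAt (fun y : ℝ => y ^ (α - 1)) ((α - 1) * (t - u) ^ (α - 1 - 1)) (t - u) :=
      Real.hasDerivAt_rpow_const (Or.inl htu.ne')
    have h4 := (h2.comp u h1).div_const (Real.Gamma α)
    rw [show α - 1 - 1 = α - 2 by ring] at h4
    have hval : c u = (α - 1) * (t - u) ^ (α - 2) * (-1) / Real.Gamma α := by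
      rw [hcdef]; ring
    rw [hval]
    unfold gker
    exact h4
  have hcont_c : ContinuousOn c (Icc 0 σ) := by
    apply ContinuousOn.div_const
    apply ContinuousOn.mul continuousOn_const
    apply ContinuousOn.rpow_const (continuousOn_const.sub continuousOn_id)
    intro x hx
    exact Or.inl (by have := hx.2; intro h; simp at h; linarith)
  have hcint : IntegrableOn c (Ioc 0 σ) :=
    (hcont_c.integrableOn_Icc).mono_set Ioc_subset_Icc_self
  have hFTC : ∀ s ∈ Ioc (0:ℝ) σ, ∫ u in Ioc s σ, c u = gker α (t - σ) - gker α (t - s) := by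
    intro s hs
    have hsσ : s ≤ σ := hs.2
    rw [← intervalIntegral.integral_of_le hsσ]
    apply intervalIntegral.integral_eq_sub_of_hasDerivAt
    · intro u hu
      rw [uIcc_of_le hsσ] at hu
      exact hderivG u ⟨le_trans hs.1.le hu.1, hu.2⟩
    · apply ContinuousOn.intervalIntegrable
      apply hcont_c.mono
      rw [uIcc_of_le hsσ]
      exact fun x hx => ⟨le_trans hs.1.le hx.1, hx.2⟩
  have hcontg : ContinuousOn (fun s => gker α (t - s)) (Icc 0 σ) := by
    unfold gker
    apply ContinuousOn.div_const
    apply ContinuousOn.rpow_const (continuousOn_const.sub continuousOn_id)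
    intro x hx
    exact Or.inl (by have := hx.2; intro h; simp at h; linarith)
  have hbd : ∀ᵐ s ∂(volume.restrict (Ioc 0 σ)),
      ‖gker α (t - s) - gker α (t - σ)‖ ≤ gker α (t - σ) := by
    filter_upwards [ae_restrict_mem measurableSet_Ioc] with s hs
    have h0 : 0 ≤ gker α (t - s) := gker_nonneg hα0 (by have := hs.2; linarith)
    have h2 : gker α (t - s) ≤ gker α (t - σ) :=
      gker_anti hα0 hα1 htσ (by have := hs.2; linarith)
    rw [Real.norm_eq_abs, abs_le]
    constructor <;> linarith
  have hBint : IntegrableOn (fun s => (gker α (t - s) - gker α (t - σ)) * v' s) (Ioc 0 σ) := by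
    apply Integrable.bdd_mul (c := gker α (t - σ)) hv'σ
    · exact ((hcontg.sub continuousOn_const).mono Ioc_subset_Icc_self).aestronglyMeasurable
        measurableSet_Ioc
    · exact hbd
  have hswap := tri_swap hv'σ hcint
  have hveq : ∀ u ∈ Ioc (0:ℝ) σ, (∫ s in Ioc 0 u, v' s) = v u := by
    intro u hu
    rw [hvac u ⟨hu.1.le, hu.2.trans hσT⟩, intervalIntegral.integral_of_le hu.1.le]
  have key : ∫ s in Ioc 0 σ, (gker α (t - s) - gker α (t - σ)) * v' s ≤ 0 := by
    have e1 : ∫ s in Ioc 0 σ, (gker α (t - s) - gker α (t - σ)) * v' s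
        = ∫ s in Ioc 0 σ, (-(∫ u in Ioc s σ, c u)) * v' s := by
      refine setIntegral_congr_fun measurableSet_Ioc fun s hs => ?_
      rw [hFTC s hs]; ring
    have e2 : ∫ s in Ioc 0 σ, (-(∫ u in Ioc s σ, c u)) * v' s
        = -∫ s in Ioc 0 σ, v' s * (∫ u in Ioc s σ, c u) := by
      rw [← integral_neg]
      exact setIntegral_congr_fun measurableSet_Ioc fun s _ => by ring
    rw [e1, e2, hswap.2]
    have hnn : 0 ≤ ∫ u in Ioc 0 σ, c u * ∫ s in Ioc 0 u, v' s := by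
      apply setIntegral_nonneg measurableSet_Ioc
      intro u hu
      have h5 : (0:ℝ) ≤ (t - u) ^ (α - 2) := Real.rpow_nonneg (by have := hu.2; linarith) _
      have h6 : (0:ℝ) < 1 - α := by linarith
      have hcu : 0 ≤ c u := by rw [hcdef]; positivity
      have hvu : 0 ≤ ∫ s in Ioc 0 u, v' s := by
        rw [hveq u hu]; exact hvnonneg u ⟨hu.1.le, hu.2.trans hσT⟩
      exact mul_nonneg hcu hvu
    linarith
  have split : ∫ s in Ioc 0 σ, gker α (t - s) * v' s
      = (∫ s in Ioc 0 σ, (gker α (t - s) - gker α (t - σ)) * v' s)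
        + gker α (t - σ) * ∫ s in Ioc 0 σ, v' s := by
    rw [← integral_const_mul, ← integral_add hBint (hv'σ.const_mul _)]
    exact setIntegral_congr_fun measurableSet_Ioc fun s _ => by ring
  have hvσ2 : ∫ s in Ioc 0 σ, v' s = v σ := by
    rw [hvac σ ⟨hσ0, hσT⟩, intervalIntegral.integral_of_le hσ0]
  rw [split, hvσ2]
  linarith

lemma phi'_nonneg {T : ℝ} {φ φ' : ℝ → ℝ} (hφ : ∀ x ∈ Icc (0:ℝ) T, HasDerivAt φ (φ' x) x)
    (hφmono : MonotoneOn φ (Icc 0 T)) {u : ℝ} (hu : u ∈ Ioo (0:ℝ) T) : 0 ≤ φ' u := by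
  have hd := hφ u ⟨hu.1.le, hu.2.le⟩
  have htend : Filter.Tendsto (slope φ u) (nhdsWithin u (Ioi u)) (nhds (φ' u)) :=
    (hasDerivAt_iff_tendsto_slope.mp hd).mono_left
      (nhdsWithin_mono u (fun x hx => ne_of_gt hx))
  refine ge_of_tendsto htend ?_
  filter_upwards [Ioo_mem_nhdsGT_of_mem (⟨le_refl u, hu.2⟩ : u ∈ Ico u T)] with y hy
  rw [slope_def_field]
  apply div_nonneg
  · have := hφmono ⟨hu.1.le, hu.2.le⟩ ⟨(hu.1.trans hy.1).le, hy.2.le⟩ hy.1.le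
    linarith
  · linarith [hy.1]

lemma gker_shift_int {α t : ℝ} (hα0 : 0 < α) (ht : 0 < t) :
    IntegrableOn (fun s => gker α (t - s)) (Ioc 0 t) := by
  have h1 : IntervalIntegrable (fun x : ℝ => x ^ (α - 1)) volume 0 t :=
    intervalIntegral.intervalIntegrable_rpow' (by linarith)
  have h2 := ((h1.comp_sub_left t).div_const (Real.Gamma α)).symm
  rw [sub_zero, sub_self] at h2
  rw [intervalIntegrable_iff_integrableOn_Ioc_of_le ht.le] at h2
  exact h2

/-- Let `T > 0`, `α ∈ (0,1)`, let `v : [0,T] → ℝ` be absolutely continuous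
with `v(0) = 0`, `v' ∈ L¹([0,T])` and `v ≥ 0` on `[0,T]`, and let `φ ∈ C¹([0,T])` be
nondecreasing. Then for a.e. `t ∈ (0,T)`:
`(g_α*(φ v'))(t) ≥ φ(t)(g_α*v')(t) - ∫₀ᵗ g_α(t-σ) φ'(σ) v(σ) dσ`. -/
theorem statement4
    (T : ℝ) (hT : 0 < T) (α : ℝ) (hα : α ∈ Ioo (0 : ℝ) 1)
    (v v' : ℝ → ℝ)
    (hv'int : IntegrableOn v' (Icc 0 T))
    (hv0 : v 0 = 0)
    (hvac : ∀ t ∈ Icc (0 : ℝ) T, v t = ∫ s in (0 : ℝ)..t, v' s)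
    (hvnonneg : ∀ t ∈ Icc (0 : ℝ) T, 0 ≤ v t)
    (φ φ' : ℝ → ℝ)
    (hφ : ∀ t ∈ Icc (0 : ℝ) T, HasDerivAt φ (φ' t) t)
    (hφ' : ContinuousOn φ' (Icc 0 T))
    (hφmono : MonotoneOn φ (Icc 0 T)) :
    ∀ᵐ t ∂(volume.restrict (Ioo 0 T)),
      φ t * (∫ s in (0 : ℝ)..t, gker α (t - s) * v' s)
          - (∫ σ in (0 : ℝ)..t, gker α (t - σ) * φ' σ * v σ)
        ≤ ∫ s in (0 : ℝ)..t, gker α (t - s) * (φ s * v' s) := by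
  obtain ⟨hα0, hα1⟩ := hα
  have hΓ := Real.Gamma_pos_of_pos hα0
  -- a.e. integrability of the singular convolution integrand, via L¹ * L¹
  have hv'Ioc : IntegrableOn v' (Ioc 0 T) := hv'int.mono_set Ioc_subset_Icc_self
  have hgint : IntegrableOn (fun x => gker α x) (Ioc 0 T) := by
    have h1 : IntervalIntegrable (fun x : ℝ => x ^ (α - 1)) volume 0 T :=
      intervalIntegral.intervalIntegrable_rpow' (by linarith)
    have h2 := h1.div_const (Real.Gamma α)
    rw [intervalIntegrable_iff_integrableOn_Ioc_of_le hT.le] at h2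
    exact h2
  have hv0int : Integrable ((Ioc 0 T).indicator v') volume := by
    rw [integrable_indicator_iff measurableSet_Ioc]; exact hv'Ioc
  have hg0int : Integrable ((Ioc 0 T).indicator (fun x => gker α x)) volume := by
    rw [integrable_indicator_iff measurableSet_Ioc]; exact hgint
  have key := hv0int.ae_convolution_exists (L := ContinuousLinearMap.mul ℝ ℝ) hg0int
  have key' : ∀ᵐ x ∂(volume : Measure ℝ), Integrable
      (fun s => (Ioc 0 T).indicator v' s *
        (Ioc 0 T).indicator (fun y => gker α y) (x - s)) volume := by
    refine key.mono fun x hx => ?_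
    simpa [ConvolutionExistsAt] using hx
  filter_upwards [ae_restrict_of_ae key', ae_restrict_mem measurableSet_Ioo] with t hconv ht
  have ht0 : (0:ℝ) < t := ht.1
  have htT : t < T := ht.2
  have hsub : Ioc (0:ℝ) t ⊆ Icc 0 T := fun x hx => ⟨hx.1.le, hx.2.trans htT.le⟩
  -- integrability of the singular convolution integrand for this t
  have hint : IntegrableOn (fun s => gker α (t - s) * v' s) (Ioc 0 t) := by
    have h1 : IntegrableOn
        (fun s => (Ioc 0 T).indicator v' s *
          (Ioc 0 T).indicator (fun y => gker α y) (t - s)) (Ioo 0 t) := hconv.integrableOn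
    have h2 : IntegrableOn (fun s => gker α (t - s) * v' s) (Ioo 0 t) := by
      refine h1.congr_fun (fun s hs => ?_) measurableSet_Ioo
      have hs1 : s ∈ Ioc (0:ℝ) T := ⟨hs.1, (hs.2.trans htT).le⟩
      have hs2 : t - s ∈ Ioc (0:ℝ) T := ⟨by linarith [hs.2], by linarith [hs.1]⟩
      beta_reduce
      rw [indicator_of_mem hs1 v', indicator_of_mem hs2 (fun y => gker α y)]
      ring
    exact h2.congr_set_ae Ioo_ae_eq_Ioc.symm
  -- rewrite interval integrals as set integrals
  rw [intervalIntegral.integral_of_le ht0.le, intervalIntegral.integral_of_le ht0.le,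
    intervalIntegral.integral_of_le ht0.le]
  -- boundedness facts
  have hφcont : ContinuousOn φ (Icc 0 T) := fun x hx => (hφ x hx).continuousAt.continuousWithinAt
  obtain ⟨Mφ, hMφ⟩ := isCompact_Icc.exists_bound_of_continuousOn hφcont
  have hvcont : ContinuousOn v (Icc 0 T) := by
    refine ContinuousOn.congr (intervalIntegral.continuousOn_primitive (f := v')
      (a := 0) (b := T) hv'int) fun x hx => ?_
    rw [hvac x hx, intervalIntegral.integral_of_le hx.1]
  -- integrability of the third integrand
  have hI3 : IntegrableOn (fun s => gker α (t - s) * (φ s * v' s)) (Ioc 0 t) := by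
    have h := hint.bdd_mul (f := φ) (c := Mφ)
      ((hφcont.mono hsub).aestronglyMeasurable measurableSet_Ioc)
      (by filter_upwards [ae_restrict_mem measurableSet_Ioc] with s hs
          exact hMφ s (hsub hs))
    exact h.congr (Filter.Eventually.of_forall fun s => by ring)
  have hdiff : IntegrableOn (fun s => (φ t - φ s) * (gker α (t - s) * v' s)) (Ioc 0 t) := by
    apply hint.bdd_mul (f := fun s => φ t - φ s) (c := Mφ + Mφ)
    · exact ((continuousOn_const.sub hφcont).mono hsub).aestronglyMeasurable measurableSet_Ioc
    · filter_upwards [ae_restrict_mem measurableSet_Ioc] with s hs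
      have h1 := hMφ t ⟨ht0.le, htT.le⟩
      have h2 := hMφ s (hsub hs)
      calc ‖φ t - φ s‖ ≤ ‖φ t‖ + ‖φ s‖ := norm_sub_le _ _
        _ ≤ Mφ + Mφ := add_le_add h1 h2
  -- Step 1: rearrange LHS
  have step1 : φ t * (∫ s in Ioc 0 t, gker α (t - s) * v' s)
      - (∫ s in Ioc 0 t, gker α (t - s) * (φ s * v' s))
      = ∫ s in Ioc 0 t, (φ t - φ s) * (gker α (t - s) * v' s) := by
    rw [← integral_const_mul, ← integral_sub (hint.const_mul (φ t)) hI3]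
    exact setIntegral_congr_fun measurableSet_Ioc fun s _ => by ring
  -- Step 2: FTC for φ
  have step2 : ∀ s ∈ Ioc (0:ℝ) t, (∫ u in Ioc s t, φ' u) = φ t - φ s := by
    intro s hs
    rw [← intervalIntegral.integral_of_le hs.2]
    apply intervalIntegral.integral_eq_sub_of_hasDerivAt
    · intro x hx
      rw [uIcc_of_le hs.2] at hx
      exact hφ x ⟨le_trans hs.1.le hx.1, hx.2.trans htT.le⟩
    · apply ContinuousOn.intervalIntegrable
      apply hφ'.mono
      rw [uIcc_of_le hs.2]
      exact fun x hx => ⟨le_trans hs.1.le hx.1, hx.2.trans htT.le⟩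
  have hφ'int : IntegrableOn φ' (Ioc 0 t) :=
    ((hφ'.mono (Icc_subset_Icc le_rfl htT.le)).integrableOn_Icc).mono_set Ioc_subset_Icc_self
  -- Step 3: Fubini
  have hswap := tri_swap (f := fun s => gker α (t - s) * v' s) (g := φ') hint hφ'int
  have step3 : ∫ s in Ioc 0 t, (φ t - φ s) * (gker α (t - s) * v' s)
      = ∫ u in Ioc 0 t, φ' u * ∫ s in Ioc 0 u, gker α (t - s) * v' s := by
    rw [← hswap.2]
    refine setIntegral_congr_fun measurableSet_Ioc fun s hs => ?_
    rw [← step2 s hs]; ring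
  -- integrability of the comparison integrand
  obtain ⟨Mv, hMv⟩ := isCompact_Icc.exists_bound_of_continuousOn (hφ'.mul hvcont)
  have hRint : IntegrableOn (fun u => φ' u * (gker α (t - u) * v u)) (Ioc 0 t) := by
    have h := (gker_shift_int hα0 ht0).bdd_mul (f := fun u => φ' u * v u) (c := Mv)
      (((hφ'.mul hvcont).mono hsub).aestronglyMeasurable measurableSet_Ioc)
      (by filter_upwards [ae_restrict_mem measurableSet_Ioc] with u hu
          exact hMv u (hsub hu))
    exact h.congr (Filter.Eventually.of_forall fun u => by ring)
  -- Step 4: pointwise comparison on (0, t)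
  have step4 : (∫ u in Ioc 0 t, φ' u * ∫ s in Ioc 0 u, gker α (t - s) * v' s)
      ≤ ∫ u in Ioc 0 t, φ' u * (gker α (t - u) * v u) := by
    rw [integral_Ioc_eq_integral_Ioo, integral_Ioc_eq_integral_Ioo]
    refine setIntegral_mono_on (hswap.1.mono_set Ioo_subset_Ioc_self)
      (hRint.mono_set Ioo_subset_Ioc_self) measurableSet_Ioo fun u hu => ?_
    have hφ'u : 0 ≤ φ' u := phi'_nonneg hφ hφmono ⟨hu.1, hu.2.trans htT⟩
    have hA := innerA ⟨hα0, hα1⟩ ⟨ht0, htT.le⟩ ⟨hu.1.le, hu.2⟩ hv'int hvac hvnonneg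
    exact mul_le_mul_of_nonneg_left hA hφ'u
  -- Step 5: identify with the middle integral of the goal
  have step5 : (∫ u in Ioc 0 t, φ' u * (gker α (t - u) * v u))
      = ∫ σ in Ioc 0 t, gker α (t - σ) * φ' σ * v σ :=
    setIntegral_congr_fun measurableSet_Ioc fun u _ => by ring
  linarith [step1, step3, step4, step5]
end

section
/- Let T>0, let k ∈ W^{1,1}([0,T]) (k absolutely continuous with k̇ ∈ L¹([0,T])), let v ∈ L¹([0,T]) and φ ∈ C¹([0,T]). Then for almost every t ∈ (0,T): φ(t)·(d/dt)(k*v)(t) = (d/dt)(k*(φ·v))(t) + ∫₀ᵗ k̇(t−σ)·(φ(t)−φ(σ))·v(σ) dσ. -/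
open MeasureTheory Set Filter
open scoped Topology


lemma primitive_slope_bound {f : ℝ → ℝ} (hf : Integrable f volume) (x a b : ℝ)
    (hab : a < b) :
    ‖(∫ t in Ioc a b, f t) / (b - a) - f x‖ ≤ ⨍ t in Icc a b, ‖f t - f x‖ := by
  have hint : IntegrableOn f (Ioc a b) volume := hf.integrableOn
  have hconst : IntegrableOn (fun _ => f x) (Ioc a b) volume :=
    integrableOn_const measure_Ioc_lt_top.ne
  have hnorm : IntegrableOn (fun t => ‖f t - f x‖) (Icc a b) volume :=
    (hf.integrableOn.sub (integrableOn_const measure_Icc_lt_top.ne)).norm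
  have h1 : (∫ t in Ioc a b, f t) / (b - a) - f x
      = (∫ t in Ioc a b, (f t - f x)) / (b - a) := by
    rw [integral_sub hint hconst, setIntegral_const, Real.volume_real_Ioc_of_le (by linarith),
      smul_eq_mul]
    have hba : b - a ≠ 0 := by linarith
    field_simp
  have key : ‖∫ t in Ioc a b, (f t - f x)‖ ≤ ∫ t in Icc a b, ‖f t - f x‖ :=
    (norm_integral_le_integral_norm _).trans <|
      setIntegral_mono_set hnorm (by filter_upwards with t using norm_nonneg _)
        (HasSubset.Subset.eventuallyLE Ioc_subset_Icc_self)
  rw [h1, setAverage_eq, norm_div, Real.norm_of_nonneg (by linarith : (0:ℝ) ≤ b - a),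
    div_le_iff₀ (by linarith), smul_eq_mul, Real.volume_real_Icc_of_le (by linarith)]
  calc ‖∫ t in Ioc a b, (f t - f x)‖ ≤ ∫ t in Icc a b, ‖f t - f x‖ := key
    _ = ((b - a)⁻¹ * ∫ t in Icc a b, ‖f t - f x‖) * (b - a) := by
        have hba : b - a ≠ 0 := by linarith
        rw [mul_comm ((b-a)⁻¹) _, mul_assoc, inv_mul_cancel₀ hba, mul_one]

lemma ae_hasDerivAt_primitive {f : ℝ → ℝ} (hf : Integrable f volume) :
    ∀ᵐ x, HasDerivAt (fun y => ∫ t in (0:ℝ)..y, f t) (f x) x := by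
  filter_upwards [(IsUnifLocDoublingMeasure.vitaliFamily (volume : Measure ℝ)
      1).ae_tendsto_average_norm_sub hf.locallyIntegrable] with x hx
  set F : ℝ → ℝ := fun y => ∫ t in (0:ℝ)..y, f t with hFdef
  rw [hasDerivAt_iff_tendsto_slope, ← nhdsLT_sup_nhdsGT, tendsto_sup]
  constructor
  · -- left limit
    have R : Tendsto (fun y => ⨍ t in Icc y x, ‖f t - f x‖) (𝓝[<] x) (𝓝 0) :=
      hx.comp (Real.tendsto_Icc_vitaliFamily_left x)
    have key : Tendsto (fun y => slope F x y - f x) (𝓝[<] x) (𝓝 0) := by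
      apply squeeze_zero_norm' _ R
      filter_upwards [self_mem_nhdsWithin] with y (hy : y < x)
      have h2 : slope F x y = (∫ t in Ioc y x, f t) / (x - y) := by
        rw [slope_def_field]
        have h3 : F y - F x = -(∫ t in Ioc y x, f t) := by
          rw [← intervalIntegral.integral_of_le hy.le,
            ← intervalIntegral.integral_interval_sub_left (hf.intervalIntegrable)
              (hf.intervalIntegrable), neg_sub]
        rw [h3, show (y - x) = -(x - y) by ring, neg_div_neg_eq]
      rw [h2]
      exact primitive_slope_bound hf x y x hy
    simpa using key.add (tendsto_const_nhds : Tendsto _ (𝓝[<] x) (𝓝 (f x)))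
  · have R : Tendsto (fun y => ⨍ t in Icc x y, ‖f t - f x‖) (𝓝[>] x) (𝓝 0) :=
      hx.comp (Real.tendsto_Icc_vitaliFamily_right x)
    have key : Tendsto (fun y => slope F x y - f x) (𝓝[>] x) (𝓝 0) := by
      apply squeeze_zero_norm' _ R
      filter_upwards [self_mem_nhdsWithin] with y (hy : x < y)
      have h2 : slope F x y = (∫ t in Ioc x y, f t) / (y - x) := by
        rw [slope_def_field]
        congr 1
        rw [← intervalIntegral.integral_of_le hy.le,
          ← intervalIntegral.integral_interval_sub_left (hf.intervalIntegrable)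
            (hf.intervalIntegrable)]
      rw [h2]
      exact primitive_slope_bound hf x x y hy
    simpa using key.add (tendsto_const_nhds : Tendsto _ (𝓝[>] x) (𝓝 (f x)))

lemma conv_decomp (T : ℝ) (hT : 0 < T) (k k' : ℝ → ℝ)
    (hkac : ∀ t ∈ Icc (0 : ℝ) T, k t = k 0 + ∫ s in (0 : ℝ)..t, k' s)
    (k₁ : ℝ → ℝ) (hk₁i : Integrable k₁ volume)
    (hk₁0 : ∀ u, u ∉ Ioc (0:ℝ) T → k₁ u = 0)
    (hk₁e : ∀ᵐ u, u ∈ Icc (0:ℝ) T → k₁ u = k' u)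
    (v v₁ : ℝ → ℝ) (hv₁i : Integrable v₁ volume)
    (hv₁0 : ∀ s, s ∉ Ioc (0:ℝ) T → v₁ s = 0)
    (hv₁e : ∀ᵐ s, s ∈ Icc (0:ℝ) T → v₁ s = v s)
    (hprod : Integrable (fun p : ℝ × ℝ => v₁ p.2 * k₁ (p.1 - p.2)) (volume.prod volume))
    (τ : ℝ) (hτ : τ ∈ Icc 0 T) :
    (∫ s in (0:ℝ)..τ, k (τ - s) * v s)
      = k 0 * (∫ s in (0:ℝ)..τ, v₁ s)
        + ∫ u in (0:ℝ)..τ, (∫ s : ℝ, v₁ s * k₁ (u - s)) := by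
  obtain ⟨hτ0, hτT⟩ := hτ
  -- the primitive of k₁
  set P : ℝ → ℝ := fun x => ∫ u in (0:ℝ)..x, k₁ u with hP
  have hPc : Continuous P := intervalIntegral.continuous_primitive
    (fun a b => hk₁i.intervalIntegrable) 0
  have hkP : ∀ x ∈ Icc (0:ℝ) T, k x = k 0 + P x := by
    intro x hx
    rw [hkac x hx]
    congr 1
    refine intervalIntegral.integral_congr_ae ?_
    filter_upwards [hk₁e] with u hu h'u
    rw [uIoc_of_le hx.1] at h'u
    exact (hu ⟨h'u.1.le, h'u.2.trans hx.2⟩).symm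
  -- Step A: rewrite using absolute continuity
  have stepA : (∫ s in (0:ℝ)..τ, k (τ - s) * v s)
      = ∫ s in (0:ℝ)..τ, (k 0 + P (τ - s)) * v₁ s := by
    rw [intervalIntegral.integral_congr (g := fun s => (k 0 + P (τ - s)) * v s)
      (fun s hs => ?_)]
    · refine intervalIntegral.integral_congr_ae ?_
      filter_upwards [hv₁e] with s hs h's
      rw [uIoc_of_le hτ0] at h's
      rw [hs ⟨h's.1.le, h's.2.trans hτT⟩]
    · rw [uIcc_of_le hτ0] at hs
      rw [hkP (τ - s) ⟨by simp [hs.2], by linarith [hs.1, hτT]⟩]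
  -- interval integrability
  have hv₁I : ∀ a b : ℝ, IntervalIntegrable v₁ volume a b := fun a b => hv₁i.intervalIntegrable
  have hPmul : IntervalIntegrable (fun s => P (τ - s) * v₁ s) volume 0 τ :=
    (hv₁I 0 τ).continuousOn_mul ((hPc.comp (continuous_const.sub continuous_id)).continuousOn)
  -- Step C: split the integral
  have stepC : (∫ s in (0:ℝ)..τ, (k 0 + P (τ - s)) * v₁ s)
      = k 0 * (∫ s in (0:ℝ)..τ, v₁ s) + ∫ s in (0:ℝ)..τ, P (τ - s) * v₁ s := by
    have : (fun s => (k 0 + P (τ - s)) * v₁ s)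
        = fun s => k 0 * v₁ s + P (τ - s) * v₁ s := by ext s; ring
    rw [this, intervalIntegral.integral_add ((hv₁I 0 τ).const_mul _) hPmul,
      intervalIntegral.integral_const_mul]
  -- Step D: P (τ - s) as a set integral, for s ∈ [0, τ]
  have stepD : ∀ s ∈ Icc (0:ℝ) τ, P (τ - s) = ∫ u in Ioc (0:ℝ) τ, k₁ (u - s) := by
    intro s hs
    have h1 : (∫ u in (0:ℝ)..τ, k₁ (u - s)) = ∫ u in (0-s)..(τ-s), k₁ u :=
      intervalIntegral.integral_comp_sub_right k₁ s
    have h2 : (∫ u in (0-s)..(0:ℝ), k₁ u) = 0 := by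
      rw [intervalIntegral.integral_congr (g := fun _ => (0:ℝ)) (fun u hu => ?_),
        intervalIntegral.integral_zero]
      rw [uIcc_of_le (by linarith [hs.1] : 0 - s ≤ (0:ℝ))] at hu
      exact hk₁0 u (fun h => absurd (h.1.trans_le hu.2) (lt_irrefl 0))
    have h3 : (∫ u in (0-s)..(0:ℝ), k₁ u) + (∫ u in (0:ℝ)..(τ-s), k₁ u)
        = ∫ u in (0-s)..(τ-s), k₁ u :=
      intervalIntegral.integral_add_adjacent_intervals (hk₁i.intervalIntegrable)
        (hk₁i.intervalIntegrable)
    have : P (τ - s) = ∫ u in (0:ℝ)..τ, k₁ (u - s) := by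
      rw [h1, ← h3, h2, zero_add]
    rw [this, intervalIntegral.integral_of_le hτ0]
  -- Step E: extend to an integral over ℝ
  have stepE : (∫ s in (0:ℝ)..τ, P (τ - s) * v₁ s)
      = ∫ s : ℝ, (∫ u in Ioc (0:ℝ) τ, k₁ (u - s)) * v₁ s := by
    rw [intervalIntegral.integral_congr (g := fun s => (∫ u in Ioc (0:ℝ) τ, k₁ (u - s)) * v₁ s)
      (fun s hs => by rw [uIcc_of_le hτ0] at hs; rw [stepD s hs]),
      intervalIntegral.integral_of_le hτ0]
    refine setIntegral_eq_integral_of_forall_compl_eq_zero (fun s hs => ?_)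
    rcases le_or_gt s 0 with h | h
    · rw [hv₁0 s (fun hmem => absurd hmem.1 (not_lt.2 h)), mul_zero]
    · have hsτ : τ < s := by
        by_contra h'
        exact hs ⟨h, not_lt.1 h'⟩
      rw [setIntegral_eq_zero_of_forall_eq_zero (fun u hu => hk₁0 _ (fun hmem =>
        absurd hmem.1 (not_lt.2 (by linarith [hu.2] : u - s ≤ 0)))), zero_mul]
  -- Step F: Fubini
  have hswap : Integrable (fun p : ℝ × ℝ => v₁ p.1 * k₁ (p.2 - p.1)) (volume.prod volume) :=
    hprod.swap
  have hres : Integrable (fun p : ℝ × ℝ => v₁ p.1 * k₁ (p.2 - p.1))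
      (volume.prod (volume.restrict (Ioc 0 τ))) := by
    rw [show volume.prod (volume.restrict (Ioc (0:ℝ) τ))
        = ((volume : Measure ℝ).restrict univ).prod (volume.restrict (Ioc (0:ℝ) τ)) by
          rw [Measure.restrict_univ],
      Measure.prod_restrict]
    exact hswap.restrict
  have stepF : (∫ s : ℝ, (∫ u in Ioc (0:ℝ) τ, k₁ (u - s)) * v₁ s)
      = ∫ u in (0:ℝ)..τ, (∫ s : ℝ, v₁ s * k₁ (u - s)) := by
    rw [intervalIntegral.integral_of_le hτ0]
    have swap := integral_integral_swap (f := fun s u => v₁ s * k₁ (u - s))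
      (μ := volume) (ν := volume.restrict (Ioc 0 τ)) hres
    rw [← swap]
    refine integral_congr_ae (Eventually.of_forall (fun s => ?_))
    show (∫ u in Ioc (0:ℝ) τ, k₁ (u - s)) * v₁ s = ∫ u in Ioc (0:ℝ) τ, v₁ s * k₁ (u - s)
    rw [integral_const_mul, mul_comm]
  rw [stepA, stepC, stepE, stepF]

lemma indicator_rep (T : ℝ) (f : ℝ → ℝ) (hf : IntegrableOn f (Icc 0 T)) :
    ∃ f₁ : ℝ → ℝ, Integrable f₁ volume ∧ (∀ u, u ∉ Ioc (0:ℝ) T → f₁ u = 0) ∧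
      (∀ᵐ u, u ∈ Icc (0:ℝ) T → f₁ u = f u) := by
  refine ⟨(Ioc (0:ℝ) T).indicator (hf.1.mk f), ?_, fun u hu => indicator_of_notMem hu _, ?_⟩
  · have h1 : IntegrableOn (hf.1.mk f) (Icc 0 T) := hf.congr hf.1.ae_eq_mk
    exact (integrable_indicator_iff measurableSet_Ioc).2 (h1.mono_set Ioc_subset_Icc_self)
  · have h0ae : ∀ᵐ u : ℝ, u ∉ ({0} : Set ℝ) :=
      measure_eq_zero_iff_ae_notMem.mp (measure_singleton 0)
    filter_upwards [(ae_restrict_iff' measurableSet_Icc).1 hf.1.ae_eq_mk, h0ae]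
      with u hu hu0 huIcc
    have huIoc : u ∈ Ioc (0:ℝ) T :=
      ⟨lt_of_le_of_ne huIcc.1 (fun h => hu0 h.symm), huIcc.2⟩
    rw [indicator_of_mem huIoc, ← hu huIcc]

set_option maxHeartbeats 1000000 in
/-- Let `T > 0`, `k ∈ W^{1,1}([0,T])` (with derivative `k'`),
`v ∈ L¹([0,T])` and `φ ∈ C¹([0,T])`. Then for a.e. `t ∈ (0,T)`:
`φ(t) (k*v)'(t) = (k*(φ v))'(t) + ∫₀ᵗ k'(t-σ)(φ(t)-φ(σ)) v(σ) dσ`. -/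
theorem statement5
    (T : ℝ) (hT : 0 < T)
    (k k' : ℝ → ℝ)
    (hk'int : IntegrableOn k' (Icc 0 T))
    (hkac : ∀ t ∈ Icc (0 : ℝ) T, k t = k 0 + ∫ s in (0 : ℝ)..t, k' s)
    (v : ℝ → ℝ) (hv : IntegrableOn v (Icc 0 T))
    (φ φ' : ℝ → ℝ)
    (hφ : ∀ t ∈ Icc (0 : ℝ) T, HasDerivAt φ (φ' t) t)
    (hφ' : ContinuousOn φ' (Icc 0 T)) :
    ∀ᵐ t ∂(volume.restrict (Ioo 0 T)),
      φ t * deriv (fun τ => ∫ s in (0 : ℝ)..τ, k (τ - s) * v s) t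
        = deriv (fun τ => ∫ s in (0 : ℝ)..τ, k (τ - s) * (φ s * v s)) t
          + ∫ σ in (0 : ℝ)..t, k' (t - σ) * (φ t - φ σ) * v σ := by
  have hφc : ContinuousOn φ (Icc 0 T) :=
    fun t ht => (hφ t ht).continuousAt.continuousWithinAt
  have hw : IntegrableOn (fun s => φ s * v s) (Icc 0 T) :=
    IntegrableOn.continuousOn_mul hφc hv isCompact_Icc
  obtain ⟨k₁, hk₁i, hk₁0, hk₁e⟩ := indicator_rep T k' hk'int
  obtain ⟨v₁, hv₁i, hv₁0, hv₁e⟩ := indicator_rep T v hv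
  obtain ⟨w₁, hw₁i, hw₁0, hw₁e⟩ := indicator_rep T _ hw
  -- product integrability of the convolution integrands
  have hprodv : Integrable (fun p : ℝ × ℝ => v₁ p.2 * k₁ (p.1 - p.2)) (volume.prod volume) :=
    hv₁i.convolution_integrand (ContinuousLinearMap.mul ℝ ℝ) hk₁i
  have hprodw : Integrable (fun p : ℝ × ℝ => w₁ p.2 * k₁ (p.1 - p.2)) (volume.prod volume) :=
    hw₁i.convolution_integrand (ContinuousLinearMap.mul ℝ ℝ) hk₁i
  -- the (full-space) convolutions
  set gv : ℝ → ℝ := fun u => ∫ s : ℝ, v₁ s * k₁ (u - s) with hgvdef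
  set gw : ℝ → ℝ := fun u => ∫ s : ℝ, w₁ s * k₁ (u - s) with hgwdef
  have hgvi : Integrable gv volume := hprodv.integral_prod_left
  have hgwi : Integrable gw volume := hprodw.integral_prod_left
  -- the decompositions
  have C1v : ∀ τ ∈ Icc (0:ℝ) T, (∫ s in (0:ℝ)..τ, k (τ - s) * v s)
      = k 0 * (∫ s in (0:ℝ)..τ, v₁ s) + ∫ u in (0:ℝ)..τ, gv u :=
    fun τ hτ => conv_decomp T hT k k' hkac k₁ hk₁i hk₁0 hk₁e v v₁ hv₁i hv₁0 hv₁e hprodv τ hτ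
  have C1w : ∀ τ ∈ Icc (0:ℝ) T, (∫ s in (0:ℝ)..τ, k (τ - s) * (φ s * v s))
      = k 0 * (∫ s in (0:ℝ)..τ, w₁ s) + ∫ u in (0:ℝ)..τ, gw u :=
    fun τ hτ => conv_decomp T hT k k' hkac k₁ hk₁i hk₁0 hk₁e _ w₁ hw₁i hw₁0 hw₁e hprodw τ hτ
  -- the main a.e. statement
  rw [ae_restrict_iff' measurableSet_Ioo]
  filter_upwards [ae_hasDerivAt_primitive hv₁i, ae_hasDerivAt_primitive hgvi,
    ae_hasDerivAt_primitive hw₁i, ae_hasDerivAt_primitive hgwi,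
    hprodv.prod_right_ae, hprodw.prod_right_ae, hv₁e, hw₁e]
    with t hdv hdgv hdw hdgw hsv hsw hv₁t hw₁t
  intro htmem
  obtain ⟨ht0, htT⟩ := htmem
  have htIcc : t ∈ Icc (0:ℝ) T := ⟨ht0.le, htT.le⟩
  have hmem : Ioo (0:ℝ) T ∈ 𝓝 t := isOpen_Ioo.mem_nhds ⟨ht0, htT⟩
  -- derivative of the first convolution
  have EA : (fun τ => ∫ s in (0:ℝ)..τ, k (τ - s) * v s) =ᶠ[𝓝 t]
      (fun τ => k 0 * (∫ s in (0:ℝ)..τ, v₁ s) + ∫ u in (0:ℝ)..τ, gv u) :=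
    eventually_of_mem hmem (fun τ hτ => C1v τ (Ioo_subset_Icc_self hτ))
  have dA : deriv (fun τ => ∫ s in (0:ℝ)..τ, k (τ - s) * v s) t = k 0 * v₁ t + gv t := by
    rw [EA.deriv_eq]
    exact ((hdv.const_mul (k 0)).add hdgv).deriv
  have EB : (fun τ => ∫ s in (0:ℝ)..τ, k (τ - s) * (φ s * v s)) =ᶠ[𝓝 t]
      (fun τ => k 0 * (∫ s in (0:ℝ)..τ, w₁ s) + ∫ u in (0:ℝ)..τ, gw u) :=
    eventually_of_mem hmem (fun τ hτ => C1w τ (Ioo_subset_Icc_self hτ))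
  have dB : deriv (fun τ => ∫ s in (0:ℝ)..τ, k (τ - s) * (φ s * v s)) t
      = k 0 * w₁ t + gw t := by
    rw [EB.deriv_eq]
    exact ((hdw.const_mul (k 0)).add hdgw).deriv
  -- transported a.e. equality for `k₁`
  have hk₁e' : ∀ᵐ σ : ℝ, (t - σ) ∈ Icc (0:ℝ) T → k₁ (t - σ) = k' (t - σ) :=
    (quasiMeasurePreserving_sub_left_of_right_invariant volume t).ae hk₁e
  have haemem : ∀ᵐ σ : ℝ, σ ∈ Ioc (0:ℝ) t →
      (v₁ σ * k₁ (t - σ) = k' (t - σ) * v σ ∧ w₁ σ * k₁ (t - σ) = k' (t - σ) * (φ σ * v σ)) := by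
    filter_upwards [hv₁e, hw₁e, hk₁e'] with σ h1 h2 h3 hσ
    have hσIcc : σ ∈ Icc (0:ℝ) T := ⟨hσ.1.le, hσ.2.trans htT.le⟩
    have htσ : t - σ ∈ Icc (0:ℝ) T := ⟨by linarith [hσ.2], by linarith [hσ.1, htT.le]⟩
    exact ⟨by rw [h1 hσIcc, h3 htσ, mul_comm], by rw [h2 hσIcc, h3 htσ, mul_comm]⟩
  -- values of the convolutions
  have e1 : gv t = ∫ σ in Ioc (0:ℝ) t, v₁ σ * k₁ (t - σ) := by
    refine (setIntegral_eq_integral_of_forall_compl_eq_zero (fun σ hσ => ?_)).symm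
    rcases le_or_gt σ 0 with h | h
    · rw [hv₁0 σ (fun hmem' => absurd hmem'.1 (not_lt.2 h)), zero_mul]
    · have hσt : t < σ := by
        by_contra h'
        exact hσ ⟨h, not_lt.1 h'⟩
      rw [hk₁0 _ (fun hmem' => absurd hmem'.1 (not_lt.2 (by linarith : t - σ ≤ 0))), mul_zero]
  have hgvt : gv t = ∫ σ in (0:ℝ)..t, k' (t - σ) * v σ := by
    rw [e1, ← intervalIntegral.integral_of_le ht0.le]
    refine intervalIntegral.integral_congr_ae ?_
    filter_upwards [haemem] with σ h hσ
    rw [uIoc_of_le ht0.le] at hσ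
    exact (h hσ).1
  have e2 : gw t = ∫ σ in Ioc (0:ℝ) t, w₁ σ * k₁ (t - σ) := by
    refine (setIntegral_eq_integral_of_forall_compl_eq_zero (fun σ hσ => ?_)).symm
    rcases le_or_gt σ 0 with h | h
    · rw [hw₁0 σ (fun hmem' => absurd hmem'.1 (not_lt.2 h)), zero_mul]
    · have hσt : t < σ := by
        by_contra h'
        exact hσ ⟨h, not_lt.1 h'⟩
      rw [hk₁0 _ (fun hmem' => absurd hmem'.1 (not_lt.2 (by linarith : t - σ ≤ 0))), mul_zero]
  have hgwt : gw t = ∫ σ in (0:ℝ)..t, k' (t - σ) * (φ σ * v σ) := by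
    rw [e2, ← intervalIntegral.integral_of_le ht0.le]
    refine intervalIntegral.integral_congr_ae ?_
    filter_upwards [haemem] with σ h hσ
    rw [uIoc_of_le ht0.le] at hσ
    exact (h hσ).2
  -- interval integrability of the two integrands
  have Iv : IntervalIntegrable (fun σ => k' (t - σ) * v σ) volume 0 t := by
    rw [intervalIntegrable_iff_integrableOn_Ioc_of_le ht0.le]
    refine (hsv.integrableOn (s := Ioc 0 t)).congr ?_
    rw [EventuallyEq, ae_restrict_iff' measurableSet_Ioc]
    filter_upwards [haemem] with σ h hσ
    exact (h hσ).1
  have Iφv : IntervalIntegrable (fun σ => k' (t - σ) * (φ σ * v σ)) volume 0 t := by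
    rw [intervalIntegrable_iff_integrableOn_Ioc_of_le ht0.le]
    refine (hsw.integrableOn (s := Ioc 0 t)).congr ?_
    rw [EventuallyEq, ae_restrict_iff' measurableSet_Ioc]
    filter_upwards [haemem] with σ h hσ
    exact (h hσ).2
  have hR : (∫ σ in (0:ℝ)..t, k' (t - σ) * (φ t - φ σ) * v σ)
      = φ t * (∫ σ in (0:ℝ)..t, k' (t - σ) * v σ)
        - ∫ σ in (0:ℝ)..t, k' (t - σ) * (φ σ * v σ) := by
    rw [← intervalIntegral.integral_const_mul,
      ← intervalIntegral.integral_sub (Iv.const_mul _) Iφv]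
    exact intervalIntegral.integral_congr (fun σ _ => by ring)
  rw [dA, dB, hgvt, hgwt, hR, hv₁t htIcc, hw₁t htIcc]
  ring
end

section
/- Let q > 1 and set ϑ(q) = max{4, (6q−5)/2}. Then for all real numbers a,b > 0 and τ₁,τ₂ ≥ 0: (b−a)·(τ₁^{q+1}·a^{−q} − τ₂^{q+1}·b^{−q}) ≥ (1/(q−1))·τ₁τ₂·( (τ₂/b)^{(q−1)/2} − (τ₁/a)^{(q−1)/2} )² − ϑ(q)·(τ₁−τ₂)²·( (τ₂/b)^{q−1} + (τ₁/a)^{q−1} ). (Here (b/τ₂)^{(1−q)/2} has been rewritten as (τ₂/b)^{(q−1)/2}, and similarly for the other terms, so that all expressions are well defined also when τ₁ = 0 or τ₂ = 0.) -/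
open Real

private lemma sinh_superhom6 {l : ℝ} (hl : 1 ≤ l) {w : ℝ} (hw : 0 ≤ w) :
    l * Real.sinh w ≤ Real.sinh (l * w) := by
  set f : ℝ → ℝ := fun w => Real.sinh (l * w) - l * Real.sinh w with hf
  have hder : ∀ x : ℝ, HasDerivAt f (Real.cosh (l * x) * l - l * Real.cosh x) x := by
    intro x
    have h1 : HasDerivAt (fun w : ℝ => Real.sinh (l * w)) (Real.cosh (l * x) * l) x := by
      have := (Real.hasDerivAt_sinh (l * x)).comp x ((hasDerivAt_id x).const_mul l)
      simpa [mul_comm, Function.comp_def] using this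
    exact h1.sub ((Real.hasDerivAt_sinh x).const_mul l)
  have hmono : MonotoneOn f (Set.Ici (0:ℝ)) := by
    apply monotoneOn_of_deriv_nonneg (convex_Ici 0)
    · exact (Continuous.sub ((Real.continuous_sinh).comp (continuous_const.mul continuous_id))
        (continuous_const.mul Real.continuous_sinh)).continuousOn
    · intro x hx
      exact (hder x).differentiableAt.differentiableWithinAt
    · intro x hx
      rw [(hder x).deriv]
      have hx0 : 0 ≤ x := le_of_lt (by simpa using hx)
      have : Real.cosh x ≤ Real.cosh (l * x) := by
        rw [Real.cosh_le_cosh]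
        rw [abs_of_nonneg hx0, abs_of_nonneg (by nlinarith)]
        nlinarith
      nlinarith [this]
  have h0 : f 0 ≤ f w := hmono (Set.self_mem_Ici) hw hw
  simp only [hf, mul_zero, Real.sinh_zero, sub_zero] at h0
  linarith [h0]

private lemma exp_core_nonneg6 (q θ : ℝ) (hq : 1 < q) (hθ : 0 ≤ θ) :
    (q+1)^2 * (exp ((q-1)*θ) + exp (-((q-1)*θ)) - 2)
      ≤ (q-1)^2 * (exp ((q+1)*θ) + exp (-((q+1)*θ)) - 2) := by
  have h1 : (0:ℝ) < q - 1 := by linarith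
  set w := (q-1)*θ/2 with hwdef
  have hw : 0 ≤ w := by positivity
  have hl : 1 ≤ (q+1)/(q-1) := by rw [le_div_iff₀ h1]; linarith
  have key := sinh_superhom6 hl hw
  have hlw : (q+1)/(q-1) * w = (q+1)*θ/2 := by field_simp; ring
  rw [hlw] at key
  have hs : 0 ≤ Real.sinh w := Real.sinh_nonneg_iff.2 hw
  have key2 : (q+1) * Real.sinh w ≤ (q-1) * Real.sinh ((q+1)*θ/2) := by
    have := mul_le_mul_of_nonneg_left key (le_of_lt h1)
    calc (q+1) * Real.sinh w = (q-1) * ((q+1)/(q-1) * Real.sinh w) := by field_simp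
    _ ≤ (q-1) * Real.sinh ((q+1)*θ/2) := this
  have hsq : ((q+1) * Real.sinh w)^2 ≤ ((q-1) * Real.sinh ((q+1)*θ/2))^2 := by
    have := mul_self_le_mul_self (by positivity) key2
    nlinarith [this]
  rw [Real.sinh_eq, Real.sinh_eq] at hsq
  have e1 : exp ((q-1)*θ/2) * exp ((q-1)*θ/2) = exp ((q-1)*θ) := by
    rw [← Real.exp_add]; ring_nf
  have e2 : exp ((q-1)*θ/2) * exp (-((q-1)*θ/2)) = 1 := by
    rw [← Real.exp_add]; ring_nf; exact Real.exp_zero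
  have e3 : exp (-((q-1)*θ/2)) * exp (-((q-1)*θ/2)) = exp (-((q-1)*θ)) := by
    rw [← Real.exp_add]; ring_nf
  have f1 : exp ((q+1)*θ/2) * exp ((q+1)*θ/2) = exp ((q+1)*θ) := by
    rw [← Real.exp_add]; ring_nf
  have f2 : exp ((q+1)*θ/2) * exp (-((q+1)*θ/2)) = 1 := by
    rw [← Real.exp_add]; ring_nf; exact Real.exp_zero
  have f3 : exp (-((q+1)*θ/2)) * exp (-((q+1)*θ/2)) = exp (-((q+1)*θ)) := by
    rw [← Real.exp_add]; ring_nf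
  rw [hwdef] at hsq
  nlinarith [hsq, e1, e2, e3, f1, f2, f3]

private lemma exp_core6 (q θ : ℝ) (hq : 1 < q) :
    (q+1)^2 * (exp ((q-1)*θ) + exp (-((q-1)*θ)) - 2)
      ≤ (q-1)^2 * (exp ((q+1)*θ) + exp (-((q+1)*θ)) - 2) := by
  rcases le_total 0 θ with h | h
  · exact exp_core_nonneg6 q θ hq h
  · have := exp_core_nonneg6 q (-θ) hq (by linarith)
    rw [show (q-1)*(-θ) = -((q-1)*θ) by ring, show -(-((q-1)*θ)) = (q-1)*θ by ring,
      show (q+1)*(-θ) = -((q+1)*θ) by ring, show -(-((q+1)*θ)) = (q+1)*θ by ring] at this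
    linarith

private lemma sq_exp_expand6 (a b : ℝ) :
    (exp a - exp b)^2 = exp (2*a) - 2*exp (a+b) + exp (2*b) := by
  rw [show (2:ℝ)*a = a + a by ring, show (2:ℝ)*b = b+b by ring,
    Real.exp_add, Real.exp_add, Real.exp_add]; ring

private lemma core_rpow6 (q x y : ℝ) (hq : 1 < q) (hx : 0 < x) (hy : 0 < y) :
    4*q*(x*y)*(x^((q-1)/2) - y^((q-1)/2))^2
      ≤ (q-1)^2 * ((x-y)*(x^q - y^q)) := by
  set μ := (Real.log x + Real.log y)/2 with hμ
  set θ := (Real.log x - Real.log y)/2 with hθ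
  have hx' : x = exp (μ+θ) := by
    rw [hμ, hθ, show (Real.log x + Real.log y)/2 + (Real.log x - Real.log y)/2 = Real.log x by ring,
      exp_log hx]
  have hy' : y = exp (μ-θ) := by
    rw [hμ, hθ, show (Real.log x + Real.log y)/2 - (Real.log x - Real.log y)/2 = Real.log y by ring,
      exp_log hy]
  have hxr : ∀ r : ℝ, x ^ r = exp (r*(μ+θ)) := by
    intro r
    rw [rpow_def_of_pos hx, hμ, hθ]; ring_nf
  have hyr : ∀ r : ℝ, y ^ r = exp (r*(μ-θ)) := by
    intro r
    rw [rpow_def_of_pos hy, hμ, hθ]; ring_nf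
  have key : 4*q*(exp ((q-1)*θ) + exp (-((q-1)*θ)) - 2)
      ≤ (q-1)^2 * (exp ((q+1)*θ) + exp (-((q+1)*θ)) - exp ((q-1)*θ) - exp (-((q-1)*θ))) := by
    nlinarith [exp_core6 q θ hq]
  have EL : x * y * (x^((q-1)/2) - y^((q-1)/2))^2
      = exp ((q+1)*μ) * (exp ((q-1)*θ) + exp (-((q-1)*θ)) - 2) := by
    rw [hxr, hyr, hx', hy', sq_exp_expand6]
    simp only [← Real.exp_add, mul_add, mul_sub, mul_comm, mul_one]
    ring_nf
    simp only [← Real.exp_add]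
    ring_nf
  have ER : (x-y)*(x^q - y^q)
      = exp ((q+1)*μ) * (exp ((q+1)*θ) + exp (-((q+1)*θ)) - exp ((q-1)*θ) - exp (-((q-1)*θ))) := by
    rw [hxr, hyr, hx', hy']
    simp only [← Real.exp_add, sub_mul, mul_sub, mul_add]
    ring_nf
  calc 4*q*(x*y)*(x^((q-1)/2) - y^((q-1)/2))^2
      = 4*q*(x*y*(x^((q-1)/2) - y^((q-1)/2))^2) := by ring
    _ = 4*q*(exp ((q+1)*μ) * (exp ((q-1)*θ) + exp (-((q-1)*θ)) - 2)) := by rw [EL]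
    _ = exp ((q+1)*μ) * (4*q*(exp ((q-1)*θ) + exp (-((q-1)*θ)) - 2)) := by ring
    _ ≤ exp ((q+1)*μ) * ((q-1)^2 * (exp ((q+1)*θ) + exp (-((q+1)*θ)) - exp ((q-1)*θ) - exp (-((q-1)*θ)))) :=
        mul_le_mul_of_nonneg_left key (le_of_lt (exp_pos _))
    _ = (q-1)^2 * (exp ((q+1)*μ) * (exp ((q+1)*θ) + exp (-((q+1)*θ)) - exp ((q-1)*θ) - exp (-((q-1)*θ)))) := by ring
    _ = (q-1)^2 * ((x-y)*(x^q - y^q)) := by rw [ER]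


set_option maxHeartbeats 1000000 in
private lemma main_ineq6 (q ϑ x y α β τ₁ τ₂ : ℝ) (hq : 1 < q)
    (hϑ4 : (4:ℝ) ≤ ϑ) (hϑ6 : (6*q-5)/2 ≤ ϑ)
    (hx : 0 < x) (hy : 0 < y) (hα : 0 < α) (hβ : 0 < β) (h1 : 0 < τ₁) (h2 : 0 < τ₂)
    (coreM : 4*q*(x*y)*(α - β)^2 ≤ (q-1)^2 * ((x-y)*(x*α^2 - y*β^2))) :
    1 / (q-1) * (τ₁*τ₂) * (β - α)^2 - ϑ * (τ₁-τ₂)^2 * (β^2 + α^2)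
      ≤ (τ₂/y - τ₁/x) * (τ₁ * (x*α^2) - τ₂ * (y*β^2)) := by
  have hq1 : (0:ℝ) < q - 1 := by linarith
  set lam : ℝ := max (1/2) ((q-1)^2/(2*(3*q+1))) with hlamdef
  have hlam1 : (1/2 : ℝ) ≤ lam := le_max_left _ _
  have hlampos : (0:ℝ) < lam := by linarith
  have h3q : (0:ℝ) < 2*(3*q+1) := by linarith
  have hlamc : (q-1)^2 ≤ 2*lam*(3*q+1) := by
    have h := le_max_right (1/2 : ℝ) ((q-1)^2/(2*(3*q+1)))
    rw [div_le_iff₀ h3q] at h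
    linarith [h]
  have hϑlam : lam + 1 ≤ ϑ := by
    have : lam ≤ ϑ - 1 := by
      apply max_le
      · linarith
      · rw [div_le_iff₀ h3q]
        rcases le_total q 20 with hc | hc
        · have hq2 : q*q ≤ 20*q := by nlinarith
          have hprod : 0 ≤ (ϑ - 4)*(6*q+2) := by
            apply mul_nonneg <;> linarith
          nlinarith [hprod, hq2]
        · have hprod : 0 ≤ (ϑ - (6*q-5)/2)*(6*q+2) := by
            apply mul_nonneg <;> linarith
          nlinarith [hprod, hc]
    linarith
  have star' : 2*lam*((q-1)^2*(((τ₁+τ₂)/2)*(τ₁-τ₂)*(α-β)*(α+β)))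
      ≤ 2*lam*((3*q+1)*(τ₁*τ₂)*(α-β)^2 + (q-1)^2*((ϑ-1/2)*(τ₁-τ₂)^2*(α^2+β^2))) := by
    have hsq1 : 0 ≤ ((q-1)*(lam*(τ₁-τ₂)*(α+β) - ((τ₁+τ₂)/2)*(α-β)))^2 := sq_nonneg _
    have hsq2 : 0 ≤ (2*lam*(3*q+1) - (q-1)^2) * ((τ₁*τ₂)*(α-β)^2) := by
      apply mul_nonneg (by linarith)
      positivity
    have hsq3 : 0 ≤ ((q-1)*lam*(τ₁-τ₂)*(α-β))^2 := sq_nonneg _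
    have hsq4 : 0 ≤ ((q-1)*(τ₁-τ₂)*(α+β))^2 := sq_nonneg _
    have hsq5 : 0 ≤ (2*lam*(ϑ - lam - 1) + (lam - 1/2)) * (((q-1)*(τ₁-τ₂))^2 * (α^2+β^2)) := by
      apply mul_nonneg
      · nlinarith [hϑlam, hlampos, hlam1]
      · positivity
    linarith [hsq1, hsq2, hsq3, hsq4, hsq5]
  have star : (q-1)^2*(((τ₁+τ₂)/2)*(τ₁-τ₂)*(α-β)*(α+β))
      ≤ (3*q+1)*(τ₁*τ₂)*(α-β)^2 + (q-1)^2*((ϑ-1/2)*(τ₁-τ₂)^2*(α^2+β^2)) := by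
    have h2l : (0:ℝ) < 2*lam := by linarith
    exact (mul_le_mul_iff_right₀ h2l).mp star'
  have coreS : (τ₁*τ₂)*(4*q*(x*y)*(α - β)^2) ≤ (τ₁*τ₂)*((q-1)^2 * ((x-y)*(x*α^2 - y*β^2))) :=
    mul_le_mul_of_nonneg_left coreM (by positivity)
  have Sfact : 0 ≤ (x*y) * ((3*q+1)*(τ₁*τ₂)*(α-β)^2
      + (q-1)^2*((ϑ-1/2)*(τ₁-τ₂)^2*(α^2+β^2) - ((τ₁+τ₂)/2)*(τ₁-τ₂)*(α-β)*(α+β))) := by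
    apply mul_nonneg (by positivity)
    linarith [star]
  have KEY2 : (q-1) * ((τ₁*τ₂)*(β-α)^2*(x*y))
      ≤ (q-1) * ((((τ₂*x - τ₁*y)*(τ₁*x*α^2 - τ₂*y*β^2))
          + ϑ*(τ₁-τ₂)^2*(β^2+α^2)*(x*y))*(q-1)) := by
    linarith [coreS, Sfact]
  have KEY : (τ₁*τ₂)*(β-α)^2*(x*y)
      ≤ (((τ₂*x - τ₁*y)*(τ₁*x*α^2 - τ₂*y*β^2)) + ϑ*(τ₁-τ₂)^2*(β^2+α^2)*(x*y))*(q-1) :=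
    (mul_le_mul_iff_right₀ hq1).mp KEY2
  rw [show (τ₂/y - τ₁/x)*(τ₁*(x*α^2) - τ₂*(y*β^2))
      = ((τ₂*x - τ₁*y)*(τ₁*x*α^2 - τ₂*y*β^2))/(x*y) by field_simp]
  rw [le_div_iff₀ (mul_pos hx hy)]
  rw [show (1/(q-1)*(τ₁*τ₂)*(β-α)^2 - ϑ*(τ₁-τ₂)^2*(β^2+α^2))*(x*y)
      = (τ₁*τ₂)*(β-α)^2*(x*y)/(q-1) - ϑ*(τ₁-τ₂)^2*(β^2+α^2)*(x*y) by ring,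
    sub_le_iff_le_add, div_le_iff₀ hq1]
  linarith [KEY]

/-- The algebraic inequality of Lemma (fundamental identity 4, part 1):
for `q > 1`, `ϑ(q) = max{4,(6q-5)/2}`, all `a,b > 0` and `τ₁,τ₂ ≥ 0`:
`(b-a)(τ₁^{q+1} a^{-q} - τ₂^{q+1} b^{-q})
  ≥ (1/(q-1)) τ₁ τ₂ ((τ₂/b)^{(q-1)/2} - (τ₁/a)^{(q-1)/2})²
    - ϑ(q) (τ₁-τ₂)² ((τ₂/b)^{q-1} + (τ₁/a)^{q-1})`. -/
theorem statement6 (q : ℝ) (hq : 1 < q) (a b τ₁ τ₂ : ℝ)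
    (ha : 0 < a) (hb : 0 < b) (hτ₁ : 0 ≤ τ₁) (hτ₂ : 0 ≤ τ₂) :
    (1 / (q - 1)) * (τ₁ * τ₂) *
        ((τ₂ / b) ^ ((q - 1) / 2) - (τ₁ / a) ^ ((q - 1) / 2)) ^ 2
      - max 4 ((6 * q - 5) / 2) * (τ₁ - τ₂) ^ 2 *
        ((τ₂ / b) ^ (q - 1) + (τ₁ / a) ^ (q - 1))
      ≤ (b - a) * (τ₁ ^ (q + 1) * a ^ (-q) - τ₂ ^ (q + 1) * b ^ (-q)) := by
  have hq1 : (0:ℝ) < q - 1 := by linarith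
  have hσ : ((q-1)/2 : ℝ) ≠ 0 := by positivity
  have hq1' : (q - 1 : ℝ) ≠ 0 := ne_of_gt hq1
  have hqp1 : (q + 1 : ℝ) ≠ 0 := by positivity
  set ϑ : ℝ := max 4 ((6 * q - 5) / 2) with hϑdef
  have hϑ4 : (4:ℝ) ≤ ϑ := le_max_left _ _
  have hϑ6 : (6*q-5)/2 ≤ ϑ := le_max_right _ _
  rcases hτ₁.eq_or_lt with h1 | h1
  · -- τ₁ = 0
    subst h1
    rw [zero_div, Real.zero_rpow hσ, Real.zero_rpow hq1', Real.zero_rpow hqp1]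
    rcases hτ₂.eq_or_lt with h2 | h2
    · subst h2
      rw [zero_div, Real.zero_rpow hσ, Real.zero_rpow hq1', Real.zero_rpow hqp1]
      norm_num
    · set y := τ₂ / b with hydef
      have hy : 0 < y := by positivity
      have hyb : y * b = τ₂ := by rw [hydef]; field_simp
      have hβ2 : y ^ (q-1) = (y ^ ((q-1)/2))^2 := by
        rw [← Real.rpow_natCast (y ^ ((q-1)/2)) 2, ← Real.rpow_mul hy.le]
        norm_num
      have hτb : τ₂ ^ (q+1) * b ^ (-q) = τ₂ * (y * y ^ (q-1)) := by
        rw [Real.rpow_add h2 q 1, Real.rpow_one, Real.rpow_neg hb.le,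
          show y * y ^ (q-1) = y ^ (1 + (q-1)) by rw [Real.rpow_add hy, Real.rpow_one],
          show (1 + (q-1) : ℝ) = q by ring, hydef, Real.div_rpow hτ₂ hb.le]
        field_simp
      rw [hτb]
      have hA : 0 ≤ y ^ (q-1) := Real.rpow_nonneg hy.le _
      have e2 : y*b*(τ₂*y ^ (q-1)) = τ₂*(τ₂*y ^ (q-1)) := by rw [hyb]
      nlinarith [mul_nonneg (mul_nonneg ha.le hy.le) (mul_nonneg hτ₂ hA),
        mul_nonneg (mul_nonneg hτ₂ hτ₂) hA, hϑ4, e2]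
  rcases hτ₂.eq_or_lt with h2 | h2
  · -- τ₂ = 0, τ₁ > 0
    subst h2
    rw [zero_div, Real.zero_rpow hσ, Real.zero_rpow hq1', Real.zero_rpow hqp1]
    set x := τ₁ / a with hxdef
    have hx : 0 < x := by positivity
    have hxa : x * a = τ₁ := by rw [hxdef]; field_simp
    have hτa : τ₁ ^ (q+1) * a ^ (-q) = τ₁ * (x * x ^ (q-1)) := by
      rw [Real.rpow_add h1 q 1, Real.rpow_one, Real.rpow_neg ha.le,
        show x * x ^ (q-1) = x ^ (1 + (q-1)) by rw [Real.rpow_add hx, Real.rpow_one],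
        show (1 + (q-1) : ℝ) = q by ring, hxdef, Real.div_rpow hτ₁ ha.le]
      field_simp
    rw [hτa]
    have hA : 0 ≤ x ^ (q-1) := Real.rpow_nonneg hx.le _
    have e2 : x*a*(τ₁*x ^ (q-1)) = τ₁*(τ₁*x ^ (q-1)) := by rw [hxa]
    nlinarith [mul_nonneg (mul_nonneg hb.le hx.le) (mul_nonneg hτ₁ hA),
      mul_nonneg (mul_nonneg hτ₁ hτ₁) hA, hϑ4, e2]
  · -- main case: τ₁ > 0, τ₂ > 0
    set x := τ₁ / a with hxdef
    set y := τ₂ / b with hydef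
    have hx : 0 < x := by positivity
    have hy : 0 < y := by positivity
    set α := x ^ ((q-1)/2) with hαdef
    set β := y ^ ((q-1)/2) with hβdef
    have hα : 0 < α := Real.rpow_pos_of_pos hx _
    have hβ : 0 < β := Real.rpow_pos_of_pos hy _
    have hα2 : x ^ (q-1) = α^2 := by
      rw [hαdef, ← Real.rpow_natCast (x ^ ((q-1)/2)) 2, ← Real.rpow_mul hx.le]
      norm_num
    have hβ2 : y ^ (q-1) = β^2 := by
      rw [hβdef, ← Real.rpow_natCast (y ^ ((q-1)/2)) 2, ← Real.rpow_mul hy.le]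
      norm_num
    have hxq : x ^ q = x * α^2 := by
      have h' := Real.rpow_add hx 1 (q-1)
      rw [show (1:ℝ)+(q-1) = q by ring, Real.rpow_one, hα2] at h'
      exact h'
    have hyq : y ^ q = y * β^2 := by
      have h' := Real.rpow_add hy 1 (q-1)
      rw [show (1:ℝ)+(q-1) = q by ring, Real.rpow_one, hβ2] at h'
      exact h'
    have hτa : τ₁ ^ (q+1) * a ^ (-q) = τ₁ * (x * α^2) := by
      rw [← hxq, Real.rpow_add h1 q 1, Real.rpow_one, Real.rpow_neg ha.le, hxdef,
        Real.div_rpow hτ₁ ha.le]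
      field_simp
    have hτb : τ₂ ^ (q+1) * b ^ (-q) = τ₂ * (y * β^2) := by
      rw [← hyq, Real.rpow_add h2 q 1, Real.rpow_one, Real.rpow_neg hb.le, hydef,
        Real.div_rpow hτ₂ hb.le]
      field_simp
    have hba : b - a = τ₂/y - τ₁/x := by
      rw [hxdef, hydef]
      field_simp
    -- the core inequality
    have coreM : 4*q*(x*y)*(α - β)^2 ≤ (q-1)^2 * ((x-y)*(x*α^2 - y*β^2)) := by
      have := core_rpow6 q x y hq hx hy
      rw [← hαdef, ← hβdef, hxq, hyq] at this
      exact this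
    rw [hτa, hτb, hba, hα2, hβ2]
    exact main_ineq6 q ϑ x y α β τ₁ τ₂ hq hϑ4 hϑ6 hx hy hα hβ h1 h2 coreM
end

section
/- Let q ∈ (0,1) and set ζ(q) = 4q/(1−q), ζ₁(q) = ζ(q)/6, and ζ₂(q) = ζ(q) + 9/q. Then for all real numbers a,b > 0 and τ₁,τ₂ ≥ 0: (b−a)·(τ₁²·a^{−q} − τ₂²·b^{−q}) ≥ ζ₁(q)·( τ₂·b^{(1−q)/2} − τ₁·a^{(1−q)/2} )² − ζ₂(q)·(τ₂−τ₁)²·( b^{1−q} + a^{1−q} ). -/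
open Real

set_option maxHeartbeats 2000000

lemma sinh_le_mul_cosh {x : ℝ} (hx : 0 ≤ x) : Real.sinh x ≤ x * Real.cosh x := by
  have key : ∀ y : ℝ, HasDerivAt (fun z : ℝ => z * Real.cosh z - Real.sinh z)
      (y * Real.sinh y) y := by
    intro y
    have h1 : HasDerivAt (fun z : ℝ => z * Real.cosh z)
        (1 * Real.cosh y + y * Real.sinh y) y :=
      (hasDerivAt_id y).mul (Real.hasDerivAt_cosh y)
    have h2 := h1.sub (Real.hasDerivAt_sinh y)
    rw [show y * Real.sinh y = 1 * Real.cosh y + y * Real.sinh y - Real.cosh y by ring]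
    exact h2
  have mono : MonotoneOn (fun z : ℝ => z * Real.cosh z - Real.sinh z) (Set.Ici 0) := by
    apply monotoneOn_of_deriv_nonneg (convex_Ici 0)
    · exact Continuous.continuousOn (by continuity)
    · intro y _
      exact ((key y).differentiableAt).differentiableWithinAt
    · intro y hy
      rw [(key y).deriv]
      rw [interior_Ici] at hy
      exact mul_nonneg (le_of_lt hy) (Real.sinh_nonneg_iff.mpr (le_of_lt hy))
  have h0 : (0:ℝ) ∈ Set.Ici (0:ℝ) := Set.self_mem_Ici
  have hxm : x ∈ Set.Ici (0:ℝ) := hx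
  have := mono h0 hxm hx
  simp at this
  linarith

lemma self_le_sinh' {x : ℝ} (hx : 0 ≤ x) : x ≤ Real.sinh x := by
  rcases eq_or_lt_of_le hx with h | h
  · simp [← h]
  · exact le_of_lt (Real.self_lt_sinh_iff.mpr h)

lemma lemL {u v : ℝ} (hv : 0 ≤ v) (huv : v ≤ u) : u * Real.sinh v ≤ v * Real.sinh u := by
  have hd : 0 ≤ u - v := by linarith
  have h1 : Real.sinh u = Real.sinh v * Real.cosh (u - v) + Real.cosh v * Real.sinh (u - v) := by
    rw [show u = v + (u - v) by ring, Real.sinh_add]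
    ring_nf
  have h2 : Real.sinh v ≤ v * Real.cosh v := sinh_le_mul_cosh hv
  have h3 : u - v ≤ Real.sinh (u - v) := self_le_sinh' hd
  have h4 : (1:ℝ) ≤ Real.cosh (u - v) := Real.one_le_cosh _
  have h5 : 0 ≤ Real.sinh v := Real.sinh_nonneg_iff.mpr hv
  have h6 : 0 ≤ Real.sinh (u - v) := Real.sinh_nonneg_iff.mpr hd
  nlinarith [mul_nonneg (mul_nonneg hv h5) (sub_nonneg.mpr h4),
    mul_le_mul_of_nonneg_right h2 h6,
    mul_le_mul_of_nonneg_left h3 h5]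

lemma lemT {x y : ℝ} (hx : 0 ≤ x) (hxy : x ≤ y) :
    x * Real.cosh x * Real.sinh y ≤ y * Real.sinh x * Real.cosh y := by
  have hL := lemL (u := y + x) (v := y - x) (by linarith) (by linarith)
  have e1 : Real.sinh (y + x) = Real.sinh y * Real.cosh x + Real.cosh y * Real.sinh x :=
    Real.sinh_add y x
  have e2 : Real.sinh (y - x) = Real.sinh y * Real.cosh x - Real.cosh y * Real.sinh x := by
    rw [show y - x = y + (-x) by ring, Real.sinh_add, Real.cosh_neg, Real.sinh_neg]
    ring
  rw [e1, e2] at hL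
  nlinarith [hL]

lemma corealg (q t Z N s1 st c2 cq s2 sh chh : ℝ)
    (hq0 : 0 < q) (hq1 : q < 1) (ht : 0 ≤ t)
    (hZq : Z * (1-q) = 4*q) (hNq : N * q = 9) (hZ0 : 0 ≤ Z) (hN9 : (9:ℝ) ≤ N)
    (f1 : st = s1*c2 + cq*s2) (f2 : s2 = 2*sh*chh)
    (f3 : sh ≤ (1-q)*t/2*chh) (f4 : q*t ≤ s1)
    (f5 : 0 ≤ s1) (f5b : 0 ≤ st) (f5c : 0 ≤ s2) (f5d : 0 ≤ sh)
    (f5e : 1 ≤ c2) (f5f : 1 ≤ cq) (f5g : 1 ≤ chh) (f6 : s2 ≤ st)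
    (hcase : cq*s2 ≤ s1*c2 ∨ q*(cq*s2) ≤ (1-q)*(s1*c2)) :
    0 ≤ 2*(Z+N)*s1*st*c2 - (1+Z/6)*st^2 - 2*(Z+N)*(Z/6)*c2*sh^2 := by
  have hsc : 0 ≤ s1*c2 := mul_nonneg f5 (by linarith)
  have base : (1+Z/6)*(cq*s2) ≤ (Z+N-1-Z/6)*(s1*c2) := by
    rcases hcase with h | h
    · have h2 : (1+Z/6)*(cq*s2) ≤ (1+Z/6)*(s1*c2) :=
        mul_le_mul_of_nonneg_left h (by linarith)
      have h3 : (1+Z/6)*(s1*c2) ≤ (Z+N-1-Z/6)*(s1*c2) :=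
        mul_le_mul_of_nonneg_right (by linarith) hsc
      linarith
    · have e1 : Z*q = Z - 4*q := by linarith [hZq]
      have hscal : (1+Z/6)*(1-q) ≤ q*(Z+N-1-Z/6) := by nlinarith [hNq, e1, hZ0, hq1]
      have a1 : (1+Z/6)*(q*(cq*s2)) ≤ (1+Z/6)*((1-q)*(s1*c2)) :=
        mul_le_mul_of_nonneg_left h (by linarith)
      have a2 : ((1+Z/6)*(1-q))*(s1*c2) ≤ (q*(Z+N-1-Z/6))*(s1*c2) :=
        mul_le_mul_of_nonneg_right hscal hsc
      have h1 : q*((1+Z/6)*(cq*s2)) ≤ q*((Z+N-1-Z/6)*(s1*c2)) := by linarith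
      exact le_of_mul_le_mul_left h1 hq0
  have f1' : (1+Z/6)*st = (1+Z/6)*(s1*c2) + (1+Z/6)*(cq*s2) := by rw [f1]; ring
  have stepi : (1+Z/6)*st ≤ (Z+N)*(s1*c2) := by linarith
  have stepii : (Z/3)*sh^2 ≤ s1*st := by
    have g1 : (q*t)*s2 ≤ s1*st := mul_le_mul f4 f6 f5c f5
    have g2' : Z*(sh*sh) ≤ Z*((1-q)*t/2*chh*sh) :=
      mul_le_mul_of_nonneg_left (mul_le_mul_of_nonneg_right f3 f5d) hZ0
    have e : Z*((1-q)*t/2*chh*sh) = (Z*(1-q))*(t*chh*sh)/2 := by ring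
    rw [e, hZq] at g2'
    have g3 : (q*t)*s2 = 2*(q*t)*sh*chh := by rw [f2]; ring
    rw [g3] at g1
    have h0 : 0 ≤ Z*(sh*sh) := mul_nonneg hZ0 (mul_nonneg f5d f5d)
    nlinarith [g1, g2', h0]
  have m1 : ((1+Z/6)*st)*st ≤ ((Z+N)*(s1*c2))*st :=
    mul_le_mul_of_nonneg_right stepi f5b
  have m2 : ((Z+N)*c2)*((Z/3)*sh^2) ≤ ((Z+N)*c2)*(s1*st) :=
    mul_le_mul_of_nonneg_left stepii (mul_nonneg (by linarith) (by linarith))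
  nlinarith [m1, m2]

lemma coreW_nonneg {q : ℝ} (hq0 : 0 < q) (hq1 : q < 1) {t : ℝ} (ht : 0 ≤ t) :
    0 ≤ 2 * (4*q/(1-q) + 9/q) * Real.sinh (q*t) * Real.sinh t * Real.cosh ((1-q)*t)
      - (1 + 4*q/(1-q)/6) * (Real.sinh t)^2
      - 2 * (4*q/(1-q) + 9/q) * (4*q/(1-q)/6) * Real.cosh ((1-q)*t)
          * (Real.sinh ((1-q)*t/2))^2 := by
  have h1q : (0:ℝ) < 1 - q := by linarith
  have hqt : (0:ℝ) ≤ q*t := mul_nonneg hq0.le ht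
  have hqt2 : (0:ℝ) ≤ (1-q)*t := mul_nonneg h1q.le ht
  have hqt3 : (0:ℝ) ≤ (1-q)*t/2 := by linarith
  have hZq : (4*q/(1-q)) * (1-q) = 4*q := by field_simp
  have hNq : (9/q) * q = 9 := by field_simp
  have hZ0 : (0:ℝ) ≤ 4*q/(1-q) := by positivity
  have hN9 : (9:ℝ) ≤ 9/q := by rw [le_div_iff₀ hq0]; nlinarith
  have f1 : Real.sinh t = Real.sinh (q*t) * Real.cosh ((1-q)*t)
      + Real.cosh (q*t) * Real.sinh ((1-q)*t) := by
    have h := Real.sinh_add (q*t) ((1-q)*t)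
    rw [show q*t + (1-q)*t = t by ring] at h
    exact h
  have f2 : Real.sinh ((1-q)*t) = 2 * Real.sinh ((1-q)*t/2) * Real.cosh ((1-q)*t/2) := by
    have h := Real.sinh_add ((1-q)*t/2) ((1-q)*t/2)
    rw [show (1-q)*t/2 + (1-q)*t/2 = (1-q)*t by ring] at h
    rw [h]; ring
  have f3 : Real.sinh ((1-q)*t/2) ≤ (1-q)*t/2 * Real.cosh ((1-q)*t/2) :=
    sinh_le_mul_cosh hqt3
  have f4 : q*t ≤ Real.sinh (q*t) := self_le_sinh' hqt
  have f5 : 0 ≤ Real.sinh (q*t) := Real.sinh_nonneg_iff.mpr hqt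
  have f5b : 0 ≤ Real.sinh t := Real.sinh_nonneg_iff.mpr ht
  have f5c : 0 ≤ Real.sinh ((1-q)*t) := Real.sinh_nonneg_iff.mpr hqt2
  have f5d : 0 ≤ Real.sinh ((1-q)*t/2) := Real.sinh_nonneg_iff.mpr hqt3
  have f6 : Real.sinh ((1-q)*t) ≤ Real.sinh t :=
    Real.sinh_le_sinh.mpr (by nlinarith)
  have hcase : Real.cosh (q*t) * Real.sinh ((1-q)*t)
        ≤ Real.sinh (q*t) * Real.cosh ((1-q)*t)
      ∨ q * (Real.cosh (q*t) * Real.sinh ((1-q)*t))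
        ≤ (1-q) * (Real.sinh (q*t) * Real.cosh ((1-q)*t)) := by
    rcases le_total q (1/2) with hhalf | hhalf
    · right
      rcases eq_or_lt_of_le ht with ht0 | ht0
      · rw [← ht0]
        norm_num
      · have hT := lemT (x := q*t) (y := (1-q)*t) hqt (by nlinarith)
        have h1 : t * (q * (Real.cosh (q*t) * Real.sinh ((1-q)*t)))
            ≤ t * ((1-q) * (Real.sinh (q*t) * Real.cosh ((1-q)*t))) := by linarith [hT]
        exact le_of_mul_le_mul_left h1 ht0
    · left
      have e := Real.sinh_add (q*t) (-((1-q)*t))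
      rw [Real.sinh_neg, Real.cosh_neg] at e
      have h0 : 0 ≤ Real.sinh (q*t + -((1-q)*t)) :=
        Real.sinh_nonneg_iff.mpr (by nlinarith)
      rw [e] at h0
      linarith
  exact corealg q t (4*q/(1-q)) (9/q) (Real.sinh (q*t)) (Real.sinh t)
    (Real.cosh ((1-q)*t)) (Real.cosh (q*t)) (Real.sinh ((1-q)*t))
    (Real.sinh ((1-q)*t/2)) (Real.cosh ((1-q)*t/2))
    hq0 hq1 ht hZq hNq hZ0 hN9 f1 f2 f3 f4 f5 f5b f5c f5d
    (Real.one_le_cosh _) (Real.one_le_cosh _) (Real.one_le_cosh _) f6 hcase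

lemma coreW {q : ℝ} (hq0 : 0 < q) (hq1 : q < 1) (t : ℝ) :
    0 ≤ 2 * (4*q/(1-q) + 9/q) * Real.sinh (q*t) * Real.sinh t * Real.cosh ((1-q)*t)
      - (1 + 4*q/(1-q)/6) * (Real.sinh t)^2
      - 2 * (4*q/(1-q) + 9/q) * (4*q/(1-q)/6) * Real.cosh ((1-q)*t)
          * (Real.sinh ((1-q)*t/2))^2 := by
  rcases le_total 0 t with h | h
  · exact coreW_nonneg hq0 hq1 h
  · have h2 := coreW_nonneg hq0 hq1 (t := -t) (by linarith)
    have e1 : Real.sinh (q*(-t)) = -Real.sinh (q*t) := by rw [mul_neg, Real.sinh_neg]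
    have e2 : Real.sinh (-t) = -Real.sinh t := Real.sinh_neg t
    have e3 : Real.cosh ((1-q)*(-t)) = Real.cosh ((1-q)*t) := by rw [mul_neg, Real.cosh_neg]
    have e4 : Real.sinh ((1-q)*(-t)/2) = -Real.sinh ((1-q)*t/2) := by
      rw [show (1-q)*(-t)/2 = -((1-q)*t/2) by ring, Real.sinh_neg]
    rw [e1, e2, e3, e4] at h2
    nlinarith [h2]

lemma keyalg (Z1 Z2 g1 k1 g2 k2 X Y : ℝ)
    (hg1 : 0 < g1) (hg2 : 0 < g2)
    (hk1 : k1 = g1⁻¹) (hk2 : k2 = g2⁻¹)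
    (hZ10 : 0 ≤ Z1) (hZ2 : 1 + Z1 ≤ Z2)
    (hW : 0 ≤ 2*Z2*((g2^2 - k2^2)/2)*((g1^2*g2^2 - k1^2*k2^2)/2)*((g1^2+k1^2)/2)
        - (1+Z1)*((g1^2*g2^2 - k1^2*k2^2)/2)^2
        - 2*Z2*Z1*((g1^2+k1^2)/2)*((g1-k1)/2)^2) :
    Z1*(Y-X)^2 - Z2*(Y*k1 - X*g1)^2*(g1^2+k1^2)
      ≤ (g1^4*g2^4 - 1)*X^2 + (k1^4*k2^4 - 1)*Y^2 := by
  subst hk1 hk2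
  have hg1' : g1 ≠ 0 := ne_of_gt hg1
  have hg2' : g2 ≠ 0 := ne_of_gt hg2
  obtain ⟨A, hA⟩ : ∃ x : ℝ, x = g1^4*g2^4 - 1 - Z1 + Z2*(g1^4+1) := ⟨_, rfl⟩
  obtain ⟨C, hC⟩ : ∃ x : ℝ, x = (g1⁻¹)^4*(g2⁻¹)^4 - 1 - Z1 + Z2*(1+(g1⁻¹)^4) := ⟨_, rfl⟩
  obtain ⟨B, hB⟩ : ∃ x : ℝ, x = Z1 - Z2*(g1^2+(g1⁻¹)^2) := ⟨_, rfl⟩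
  have hApos : 0 < A := by
    rw [hA]
    nlinarith [mul_pos (pow_pos hg1 4) (pow_pos hg2 4),
      mul_nonneg (by linarith : (0:ℝ) ≤ Z2) (le_of_lt (pow_pos hg1 4))]
  have hident : A*C - B^2
      = 4*(2*Z2*((g2^2 - (g2⁻¹)^2)/2)*((g1^2*g2^2 - (g1⁻¹)^2*(g2⁻¹)^2)/2)*((g1^2+(g1⁻¹)^2)/2)
        - (1+Z1)*((g1^2*g2^2 - (g1⁻¹)^2*(g2⁻¹)^2)/2)^2
        - 2*Z2*Z1*((g1^2+(g1⁻¹)^2)/2)*((g1-g1⁻¹)/2)^2) := by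
    rw [hA, hC, hB]
    field_simp
    ring
  have hD : 0 ≤ A*C - B^2 := by rw [hident]; linarith
  have hQ : 0 ≤ A*X^2 + 2*B*X*Y + C*Y^2 := by
    nlinarith [sq_nonneg (A*X + B*Y), mul_nonneg hD (sq_nonneg Y), hApos]
  have hEq : (g1^4*g2^4 - 1)*X^2 + ((g1⁻¹)^4*(g2⁻¹)^4 - 1)*Y^2
      - (Z1*(Y-X)^2 - Z2*(Y*g1⁻¹ - X*g1)^2*(g1^2+(g1⁻¹)^2))
      = A*X^2 + 2*B*X*Y + C*Y^2 := by
    rw [hA, hC, hB]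
    field_simp
    ring
  linarith [hQ, hEq]

lemma key (q : ℝ) (hq0 : 0 < q) (hq1 : q < 1) (t X Y : ℝ) :
    4*q/(1-q)/6 * (Y - X)^2
      - (4*q/(1-q) + 9/q) * (Y * Real.exp (-((1-q)/2*t)) - X * Real.exp ((1-q)/2*t))^2
          * (Real.exp ((1-q)*t) + Real.exp (-((1-q)*t)))
      ≤ (Real.exp (2*t) - 1) * X^2 + (Real.exp (-(2*t)) - 1) * Y^2 := by
  have h1q : (0:ℝ) < 1 - q := by linarith
  have hZ0 : (0:ℝ) ≤ 4*q/(1-q) := div_nonneg (by linarith) (by linarith)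
  have hN9 : (9:ℝ) ≤ 9/q := by rw [le_div_iff₀ hq0]; nlinarith
  have E1 : Real.exp ((1-q)*t) = (Real.exp ((1-q)/2*t))^2 := by
    simp only [← Real.exp_nat_mul]; congr 1; push_cast; ring
  have E2 : Real.exp (-((1-q)*t)) = (Real.exp (-((1-q)/2*t)))^2 := by
    simp only [← Real.exp_nat_mul]; congr 1; push_cast; ring
  have E3 : Real.exp (2*t) = (Real.exp ((1-q)/2*t))^4 * (Real.exp (q/2*t))^4 := by
    simp only [← Real.exp_nat_mul, ← Real.exp_add]; congr 1; push_cast; ring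
  have E4 : Real.exp (-(2*t)) = (Real.exp (-((1-q)/2*t)))^4 * (Real.exp (-(q/2*t)))^4 := by
    simp only [← Real.exp_nat_mul, ← Real.exp_add]; congr 1; push_cast; ring
  have eqt : Real.exp (q*t) = (Real.exp (q/2*t))^2 := by
    simp only [← Real.exp_nat_mul]; congr 1; push_cast; ring
  have eqt' : Real.exp (-(q*t)) = (Real.exp (-(q/2*t)))^2 := by
    simp only [← Real.exp_nat_mul]; congr 1; push_cast; ring
  have et : Real.exp t = (Real.exp ((1-q)/2*t))^2 * (Real.exp (q/2*t))^2 := by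
    simp only [← Real.exp_nat_mul, ← Real.exp_add]; congr 1; push_cast; ring
  have et' : Real.exp (-t) = (Real.exp (-((1-q)/2*t)))^2 * (Real.exp (-(q/2*t)))^2 := by
    simp only [← Real.exp_nat_mul, ← Real.exp_add]; congr 1; push_cast; ring
  have eh : Real.exp ((1-q)*t/2) = Real.exp ((1-q)/2*t) := by congr 1; ring
  have eh' : Real.exp (-((1-q)*t/2)) = Real.exp (-((1-q)/2*t)) := by congr 1; ring
  have hW0 := coreW hq0 hq1 t
  simp only [Real.sinh_eq, Real.cosh_eq] at hW0
  rw [eqt, eqt', et, et', E1, E2, eh, eh'] at hW0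
  have hmain := keyalg (4*q/(1-q)/6) (4*q/(1-q) + 9/q)
    (Real.exp ((1-q)/2*t)) (Real.exp (-((1-q)/2*t)))
    (Real.exp (q/2*t)) (Real.exp (-(q/2*t))) X Y
    (Real.exp_pos _) (Real.exp_pos _) (Real.exp_neg _) (Real.exp_neg _)
    (by linarith) (by linarith)
    (by linarith [hW0])
  rw [E1, E2, E3, E4]
  linarith [hmain]

/-- The algebraic inequality of Lemma (fundamental identity 4, part 2):
for `q ∈ (0,1)`, `ζ(q) = 4q/(1-q)`, `ζ₁(q) = ζ(q)/6`, `ζ₂(q) = ζ(q) + 9/q`,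
all `a,b > 0` and `τ₁,τ₂ ≥ 0`:
`(b-a)(τ₁² a^{-q} - τ₂² b^{-q})
  ≥ ζ₁(q)(τ₂ b^{(1-q)/2} - τ₁ a^{(1-q)/2})² - ζ₂(q)(τ₂-τ₁)²(b^{1-q} + a^{1-q})`. -/
theorem statement7 (q : ℝ) (hq : q ∈ Set.Ioo (0 : ℝ) 1) (a b τ₁ τ₂ : ℝ)
    (ha : 0 < a) (hb : 0 < b) (hτ₁ : 0 ≤ τ₁) (hτ₂ : 0 ≤ τ₂) :
    ((4 * q / (1 - q)) / 6) * (τ₂ * b ^ ((1 - q) / 2) - τ₁ * a ^ ((1 - q) / 2)) ^ 2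
      - (4 * q / (1 - q) + 9 / q) * (τ₂ - τ₁) ^ 2 * (b ^ (1 - q) + a ^ (1 - q))
      ≤ (b - a) * (τ₁ ^ 2 * a ^ (-q) - τ₂ ^ 2 * b ^ (-q)) := by
  obtain ⟨hq0, hq1⟩ := hq
  have h1q : (0:ℝ) < 1 - q := by linarith
  have hkey := key q hq0 hq1 ((Real.log b - Real.log a)/2)
    (τ₁ * a ^ ((1 - q) / 2)) (τ₂ * b ^ ((1 - q) / 2))
  have ea : Real.exp (2*((Real.log b - Real.log a)/2)) = b/a := by
    rw [show 2*((Real.log b - Real.log a)/2) = Real.log b - Real.log a by ring,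
      Real.exp_sub, Real.exp_log hb, Real.exp_log ha]
  have eb : Real.exp (-(2*((Real.log b - Real.log a)/2))) = a/b := by
    rw [show -(2*((Real.log b - Real.log a)/2)) = Real.log a - Real.log b by ring,
      Real.exp_sub, Real.exp_log hb, Real.exp_log ha]
  have hsq : ∀ x : ℝ, 0 < x → (x ^ ((1 - q) / 2))^2 = x ^ (1-q) := by
    intro x hx
    rw [← Real.rpow_natCast (x ^ ((1 - q) / 2)) 2, ← Real.rpow_mul hx.le]
    congr 1
    push_cast
    ring
  have haq : a ^ (1-q) = a ^ (-q) * a := by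
    rw [show (1:ℝ)-q = -q + 1 by ring, Real.rpow_add_one (ne_of_gt ha)]
  have hbq : b ^ (1-q) = b ^ (-q) * b := by
    rw [show (1:ℝ)-q = -q + 1 by ring, Real.rpow_add_one (ne_of_gt hb)]
  have h_first : (Real.exp (2*((Real.log b - Real.log a)/2)) - 1) * (τ₁ * a ^ ((1 - q) / 2))^2
      + (Real.exp (-(2*((Real.log b - Real.log a)/2))) - 1) * (τ₂ * b ^ ((1 - q) / 2))^2
      = (b - a) * (τ₁ ^ 2 * a ^ (-q) - τ₂ ^ 2 * b ^ (-q)) := by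
    rw [ea, eb, mul_pow, mul_pow, hsq a ha, hsq b hb, haq, hbq]
    field_simp
    ring
  -- G identities
  have g1 : b ^ ((1 - q) / 2) * Real.exp (-((1-q)/2*((Real.log b - Real.log a)/2)))
      = Real.exp ((1-q)*(Real.log a + Real.log b)/4) := by
    rw [Real.rpow_def_of_pos hb, ← Real.exp_add]
    congr 1
    ring
  have g2 : a ^ ((1 - q) / 2) * Real.exp ((1-q)/2*((Real.log b - Real.log a)/2))
      = Real.exp ((1-q)*(Real.log a + Real.log b)/4) := by
    rw [Real.rpow_def_of_pos ha, ← Real.exp_add]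
    congr 1
    ring
  have g3 : (Real.exp ((1-q)*(Real.log a + Real.log b)/4))^2
        * Real.exp ((1-q)*((Real.log b - Real.log a)/2)) = b ^ (1-q) := by
    rw [Real.rpow_def_of_pos hb]
    simp only [← Real.exp_nat_mul, ← Real.exp_add]
    congr 1
    push_cast
    ring
  have g4 : (Real.exp ((1-q)*(Real.log a + Real.log b)/4))^2
        * Real.exp (-((1-q)*((Real.log b - Real.log a)/2))) = a ^ (1-q) := by
    rw [Real.rpow_def_of_pos ha]
    simp only [← Real.exp_nat_mul, ← Real.exp_add]
    congr 1
    push_cast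
    ring
  have h_second : (τ₂ * b ^ ((1 - q) / 2) * Real.exp (-((1-q)/2*((Real.log b - Real.log a)/2)))
        - τ₁ * a ^ ((1 - q) / 2) * Real.exp ((1-q)/2*((Real.log b - Real.log a)/2)))^2
        * (Real.exp ((1-q)*((Real.log b - Real.log a)/2))
          + Real.exp (-((1-q)*((Real.log b - Real.log a)/2))))
      = (τ₂ - τ₁)^2 * (b ^ (1-q) + a ^ (1-q)) := by
    rw [mul_assoc τ₂ _ _, mul_assoc τ₁ _ _, g1, g2]
    linear_combination ((τ₂-τ₁)^2) * g3 + ((τ₂-τ₁)^2) * g4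
  have h_second' := congrArg (fun z => (4*q/(1-q) + 9/q) * z) h_second
  linarith [hkey, h_first, h_second']
end
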